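/- arXiv:2007.09719 — 5 statements merged into one kernel-verified Lean document; each statement's English description precedes it below -/
import Mathlib

section
/- If n is even, then no family of n−1 odd cycles can form a pruned cactus, because the cardinality of any pruned cactus consisting solely of odd cycles is even. -/
/-- The set of vertices incident to an edge set. -/
def edgeVerts {V : Type*} (S : Set (Sym2 V)) : Set V := {v | ∃ e ∈ S, v ∈ e}

/-- The union of a multiset family of edge sets. -/
def famUnion {α : Type*} (F : Multiset (Finset α)) : Set α := {e | ∃ S ∈ F, e ∈ S}

/-- `C` is the edge set of a cycle (of length ≥ 3) in the complete graph on `V`. -/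
def IsCycleEdgeSet {V : Type*} [DecidableEq V] (C : Finset (Sym2 V)) : Prop :=
  ∃ (v : V) (w : (⊤ : SimpleGraph V).Walk v v), w.IsCycle ∧ w.edges.toFinset = C

/-- `C` is the edge set of an odd cycle. -/
def IsOddCycleEdgeSet {V : Type*} [DecidableEq V] (C : Finset (Sym2 V)) : Prop :=
  IsCycleEdgeSet C ∧ Odd C.card

/-- `R` is a rainbow set for the indexed family `F`. -/
def IsRainbow {α ι : Type*} (F : ι → Finset α) (R : Finset α) : Prop :=
  ∃ σ : α → ι, Set.InjOn σ ↑R ∧ ∀ e ∈ R, e ∈ F (σ e)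

/-- `R` is a rainbow set for the multiset family `F`:
each element of `R` is assigned a member of `F` containing it, members being
used with multiplicity at most their multiplicity in `F`. -/
def IsRainbowM {α : Type*} (F : Multiset (Finset α)) (R : Finset α) : Prop :=
  ∃ f : α → Finset α, Multiset.map f R.val ≤ F ∧ ∀ e ∈ R, e ∈ f e

/-- A family of cycles is a pruned cactus. -/
inductive IsPrunedCactus {V : Type*} [DecidableEq V] : Multiset (Finset (Sym2 V)) → Prop
  | base (O : Multiset (Finset (Sym2 V))) (C : Finset (Sym2 V)) :
      IsCycleEdgeSet C → C.card = Multiset.card O + 1 →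
      (∀ D ∈ O, D = C) → IsPrunedCactus O
  | glue (O₁ O₂ : Multiset (Finset (Sym2 V))) :
      IsPrunedCactus O₁ → IsPrunedCactus O₂ →
      (∃ v, edgeVerts (famUnion O₁) ∩ edgeVerts (famUnion O₂) = {v}) →
      IsPrunedCactus (O₁ + O₂)


lemma prunedCactus_aux {V : Type*} [DecidableEq V] (O : Multiset (Finset (Sym2 V)))
    (h : IsPrunedCactus O) :
    Nonempty V ∧ ((∀ C ∈ O, Odd C.card) → Even (Multiset.card O)) := by
  induction h with
  | base O C hC hcard hall =>
    obtain ⟨v, -⟩ := hC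
    refine ⟨⟨v⟩, fun hodd => ?_⟩
    rcases Multiset.empty_or_exists_mem O with h0 | ⟨D, hD⟩
    · simp [h0]
    · obtain ⟨k, hk⟩ := hodd D hD
      rw [hall D hD] at hk
      exact ⟨k, by omega⟩
  | glue O₁ O₂ h₁ h₂ hv ih₁ ih₂ =>
    refine ⟨ih₁.1, fun hodd => ?_⟩
    rw [Multiset.card_add]
    exact (ih₁.2 fun C hC => hodd C (Multiset.mem_add.mpr (Or.inl hC))).add
      (ih₂.2 fun C hC => hodd C (Multiset.mem_add.mpr (Or.inr hC)))

/-- If `n` is even, no family of `n - 1` odd cycles is a pruned cactus. -/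
theorem not_prunedCactus_of_even (n : ℕ) (hn : Even n)
    (O : Multiset (Finset (Sym2 (Fin n))))
    (hcard : Multiset.card O = n - 1)
    (hodd : ∀ C ∈ O, IsOddCycleEdgeSet C) :
    ¬ IsPrunedCactus O := by
  intro h
  obtain ⟨⟨v⟩, heven⟩ := prunedCactus_aux O h
  have hpos : 0 < n := v.pos
  obtain ⟨k, hk⟩ := heven fun C hC => (hodd C hC).2
  obtain ⟨m, hm⟩ := hn
  omega
end

section
/- For every pruned cactus 𝒪 of cycles, the underlying graph ⋃𝒪 has exactly |𝒪|+1 vertices, and 𝒪 has no rainbow cycle. -/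
open SimpleGraph

section Infra

variable {V : Type*} {G : SimpleGraph V}

lemma support_getElem {u v : V} (p : G.Walk u v) (i : ℕ) (h : i < p.support.length) :
    p.support[i] = p.getVert i := by
  induction p generalizing i with
  | nil =>
    simp only [Walk.support_nil, List.length_singleton] at h
    interval_cases i
    simp [Walk.getVert]
  | cons h p ih =>
    cases i with
    | zero => simp [Walk.getVert]
    | succ n =>
      simp only [Walk.support_cons, Walk.getVert_cons_succ]
      rw [List.getElem_cons_succ]
      exact ih n (by simpa [Walk.length_support] using h)

lemma tail_length {v : V} (c : G.Walk v v) : c.support.tail.length = c.length := by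
  have := c.length_support
  cases h : c.support with
  | nil => simp [h] at this
  | cons a l => simp [h] at this ⊢; omega

lemma cycle_getVert_inj {v : V} {c : G.Walk v v} (hc : c.IsCycle) {i j : ℕ}
    (hi : i ≤ c.length) (hj : j ≤ c.length) (h : c.getVert i = c.getVert j) :
    i = j ∨ (i = 0 ∧ j = c.length) ∨ (i = c.length ∧ j = 0) := by
  have hnd := hc.support_nodup
  have key : ∀ a b : ℕ, 1 ≤ a → a ≤ c.length → 1 ≤ b → b ≤ c.length →
      c.getVert a = c.getVert b → a = b := by
    intro a b ha1 ha2 hb1 hb2 hab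
    have hla : a - 1 < c.support.tail.length := by rw [tail_length]; omega
    have hlb : b - 1 < c.support.tail.length := by rw [tail_length]; omega
    have ga : c.support.tail[a-1] = c.getVert a := by
      rw [List.getElem_tail]
      rw [support_getElem]
      congr 1; omega
    have gb : c.support.tail[b-1] = c.getVert b := by
      rw [List.getElem_tail]
      rw [support_getElem]
      congr 1; omega
    have := (hnd.getElem_inj_iff (hi := hla) (hj := hlb)).mp (by rw [ga, gb]; exact hab)
    omega
  rcases Nat.eq_zero_or_pos i with hi0 | hi1
  · rcases Nat.eq_zero_or_pos j with hj0 | hj1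
    · left; omega
    · have h0 : c.getVert c.length = c.getVert j := by
        rw [c.getVert_length]; rw [hi0, c.getVert_zero] at h; exact h
      have hl : 1 ≤ c.length := by
        have := hc.three_le_length; omega
      have := key c.length j hl le_rfl hj1 hj h0
      right; left; exact ⟨hi0, this.symm⟩
  · rcases Nat.eq_zero_or_pos j with hj0 | hj1
    · have h0 : c.getVert i = c.getVert c.length := by
        rw [c.getVert_length]; rw [hj0, c.getVert_zero] at h; exact h
      have hl : 1 ≤ c.length := by have := hc.three_le_length; omega
      have := key i c.length hi1 hi hl le_rfl h0
      right; right; exact ⟨this, hj0⟩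
    · left; exact key i j hi1 hi hj1 hj h

lemma mem_edges_iff_getVert {u v : V} {c : G.Walk u v} {e : Sym2 V} :
    e ∈ c.edges ↔ ∃ i < c.length, e = s(c.getVert i, c.getVert (i+1)) := by
  constructor
  · intro he
    have : e ∈ c.toSubgraph.edgeSet := (c.mem_edges_toSubgraph).mpr he
    induction e with
    | h a b =>
      rw [Subgraph.mem_edgeSet] at this
      obtain ⟨i, h1, h2⟩ := (c.toSubgraph_adj_iff).mp this
      exact ⟨i, h2, h1.symm⟩
  · rintro ⟨i, hi, rfl⟩
    have := c.toSubgraph_adj_getVert hi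
    rw [← Subgraph.mem_edgeSet] at this
    exact (c.mem_edges_toSubgraph).mp this

section CycleCore
variable {v : V} {c : G.Walk v v}

/-- Edge index injectivity. -/
lemma cycle_edge_inj (hc : c.IsCycle) {a b : ℕ} (ha : a < c.length) (hb : b < c.length)
    (h : s(c.getVert a, c.getVert (a+1)) = s(c.getVert b, c.getVert (b+1))) : a = b := by
  have h3 := hc.three_le_length
  rw [Sym2.eq_iff] at h
  rcases h with ⟨h1, h2⟩ | ⟨h1, h2⟩
  · rcases cycle_getVert_inj hc (by omega) (by omega) h1 with h | ⟨rfl, h⟩ | ⟨h, rfl⟩ <;> omega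
  · rcases cycle_getVert_inj hc (by omega) (by omega) h1 with h' | ⟨h', h''⟩ | ⟨h', h''⟩ <;>
      rcases cycle_getVert_inj hc (by omega) (by omega) h2 with q' | ⟨q', q''⟩ | ⟨q', q''⟩ <;>
      omega

/-- Every support vertex has an index `< length`. -/
lemma cycle_mem_support_getVert (hc : c.IsCycle) {x : V} (hx : x ∈ c.support) :
    ∃ i < c.length, c.getVert i = x := by
  obtain ⟨n, hn, hn'⟩ := Walk.mem_support_iff_exists_getVert.mp hx
  rcases Nat.lt_or_ge n c.length with h | h
  · exact ⟨n, h, hn⟩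
  · have h3 := hc.three_le_length
    have : n = c.length := by omega
    refine ⟨0, by omega, ?_⟩
    rw [c.getVert_zero, ← c.getVert_length, ← this, hn]

def cycPrev (c : G.Walk v v) (i : ℕ) : ℕ := if i = 0 then c.length - 1 else i - 1

lemma cycPrev_lt (hc : c.IsCycle) {i : ℕ} (_ : i < c.length) : cycPrev c i < c.length := by
  have := hc.three_le_length; unfold cycPrev; split <;> omega

lemma mem_edge_cycPrev (hc : c.IsCycle) {i : ℕ} (hi : i < c.length) :
    c.getVert i ∈ s(c.getVert (cycPrev c i), c.getVert (cycPrev c i + 1)) := by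
  have h3 := hc.three_le_length
  unfold cycPrev
  split
  · rename_i h0
    subst h0
    have : c.length - 1 + 1 = c.length := by omega
    rw [this, c.getVert_length, c.getVert_zero]
    simp
  · rename_i h0
    have : i - 1 + 1 = i := by omega
    rw [this]; simp

/-- the two distinct edges at `getVert i`. -/
lemma cycle_two_edges (hc : c.IsCycle) {i : ℕ} (hi : i < c.length) :
    s(c.getVert i, c.getVert (i+1)) ≠
      s(c.getVert (cycPrev c i), c.getVert (cycPrev c i + 1)) := by
  intro h
  have h3 := hc.three_le_length
  have := cycle_edge_inj hc hi (cycPrev_lt hc hi) h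
  unfold cycPrev at this; split at this <;> omega

/-- Any edge of the cycle containing `getVert i` is the succ or pred edge. -/
lemma cycle_edge_at (hc : c.IsCycle) {i : ℕ} (hi : i < c.length) {e : Sym2 V}
    (he : e ∈ c.edges) (hm : c.getVert i ∈ e) :
    e = s(c.getVert i, c.getVert (i+1)) ∨
      e = s(c.getVert (cycPrev c i), c.getVert (cycPrev c i + 1)) := by
  have h3 := hc.three_le_length
  obtain ⟨a, ha, rfl⟩ := mem_edges_iff_getVert.mp he
  rw [Sym2.mem_iff] at hm
  rcases hm with hm | hm
  · rcases cycle_getVert_inj hc (by omega) (by omega) hm with h | ⟨h, h'⟩ | ⟨h, h'⟩ <;>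
      [skip; omega; omega]
    subst h; left; rfl
  · rcases cycle_getVert_inj hc (by omega) (by omega) hm with h | ⟨h, h'⟩ | ⟨h, h'⟩
    · right
      have : a = cycPrev c i := by unfold cycPrev; split <;> omega
      rw [this]
    · right
      have : a = cycPrev c i := by unfold cycPrev; split <;> omega
      rw [this]
    · omega

end CycleCore

lemma mem_support_of_mem_edge {u w x : V} {p : G.Walk u w} {e : Sym2 V}
    (he : e ∈ p.edges) (hx : x ∈ e) : x ∈ p.support := by
  induction e with
  | h a b =>
    rcases Sym2.mem_iff.mp hx with rfl | rfl
    · exact p.fst_mem_support_of_mem_edges he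
    · exact p.snd_mem_support_of_mem_edges he

lemma cycle_edges_subset_cycle_edges {v u : V} {c : G.Walk v v} {c' : G.Walk u u}
    (hc : c.IsCycle) (hc' : c'.IsCycle) (h : ∀ e ∈ c'.edges, e ∈ c.edges) :
    ∀ e ∈ c.edges, e ∈ c'.edges := by
  have claim1 : ∀ x ∈ c'.support, ∀ e ∈ c.edges, x ∈ e → e ∈ c'.edges := by
    intro x hx e he hxe
    obtain ⟨i, hi, rfl⟩ := cycle_mem_support_getVert hc' hx
    have he₁ : s(c'.getVert i, c'.getVert (i+1)) ∈ c'.edges :=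
      mem_edges_iff_getVert.mpr ⟨i, hi, rfl⟩
    have he₂ : s(c'.getVert (cycPrev c' i), c'.getVert (cycPrev c' i + 1)) ∈ c'.edges :=
      mem_edges_iff_getVert.mpr ⟨cycPrev c' i, cycPrev_lt hc' hi, rfl⟩
    have hne := cycle_two_edges hc' hi
    have hx1 : c'.getVert i ∈ s(c'.getVert i, c'.getVert (i+1)) := by simp
    have hx2 := mem_edge_cycPrev hc' hi
    have hxc : c'.getVert i ∈ c.support := mem_support_of_mem_edge (h _ he₁) hx1
    obtain ⟨k, hk, hkx⟩ := cycle_mem_support_getVert hc hxc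
    have hx1' : c.getVert k ∈ s(c'.getVert i, c'.getVert (i+1)) := by rw [hkx]; exact hx1
    have hx2' : c.getVert k ∈
        s(c'.getVert (cycPrev c' i), c'.getVert (cycPrev c' i + 1)) := by rw [hkx]; exact hx2
    have hxe' : c.getVert k ∈ e := by rw [hkx]; exact hxe
    have E1 := cycle_edge_at hc hk (h _ he₁) hx1'
    have E2 := cycle_edge_at hc hk (h _ he₂) hx2'
    have E3 := cycle_edge_at hc hk he hxe'
    rcases E3 with h3 | h3 <;> rcases E1 with h1 | h1 <;> rcases E2 with h2 | h2 <;>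
      first
      | (exact absurd (h1.trans h2.symm) hne)
      | (rw [h3, ← h1]; exact he₁)
      | (rw [h3, ← h2]; exact he₂)
  have h3 := hc.three_le_length
  have h3' := hc'.three_le_length
  have up : ∀ j, j < c.length → c.getVert j ∈ c'.support → c.getVert (j+1) ∈ c'.support := by
    intro j hj hjS
    have heE : s(c.getVert j, c.getVert (j+1)) ∈ c.edges := mem_edges_iff_getVert.mpr ⟨j, hj, rfl⟩
    exact c'.snd_mem_support_of_mem_edges (claim1 _ hjS _ heE (by simp))
  have down : ∀ j, j < c.length → c.getVert (j+1) ∈ c'.support → c.getVert j ∈ c'.support := by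
    intro j hj hjS
    have heE : s(c.getVert j, c.getVert (j+1)) ∈ c.edges := mem_edges_iff_getVert.mpr ⟨j, hj, rfl⟩
    exact c'.fst_mem_support_of_mem_edges (claim1 _ hjS _ heE (by simp))
  -- starting point
  have hustart : ∃ k ≤ c.length, c.getVert k = u := by
    have he₀ : s(c'.getVert 0, c'.getVert 1) ∈ c'.edges :=
      mem_edges_iff_getVert.mpr ⟨0, by omega, rfl⟩
    have hu : u ∈ c.support := by
      refine mem_support_of_mem_edge (h _ he₀) ?_
      rw [c'.getVert_zero]; simp
    obtain ⟨k, hk, hkx⟩ := cycle_mem_support_getVert hc hu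
    exact ⟨k, le_of_lt hk, hkx⟩
  have down0 : ∀ j, j ≤ c.length → c.getVert j ∈ c'.support → c.getVert 0 ∈ c'.support := by
    intro j
    induction j with
    | zero => intro _ hh; exact hh
    | succ n ih => intro hn hh; exact ih (by omega) (down n (by omega) hh)
  obtain ⟨k₀, hk₀, hk₀'⟩ := hustart
  have all0 : c.getVert 0 ∈ c'.support :=
    down0 k₀ hk₀ (by rw [hk₀']; exact c'.start_mem_support)
  have allj : ∀ j, j ≤ c.length → c.getVert j ∈ c'.support := by
    intro j
    induction j with
    | zero => intro _; exact all0
    | succ n ih => intro hn; exact up n (by omega) (ih (by omega))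
  intro e he
  obtain ⟨a, ha, rfl⟩ := mem_edges_iff_getVert.mp he
  exact claim1 _ (allj a (le_of_lt ha)) _ he (by simp)


lemma ivt_prop (d : ℕ → Prop) : ∀ x y, x ≤ y →
    ((d x ↔ d y) ∨ ∃ k, x ≤ k ∧ k < y ∧ ¬(d k ↔ d (k+1))) := by
  intro x y hxy
  induction y, hxy using Nat.le_induction with
  | base => exact Or.inl Iff.rfl
  | succ n hn ih =>
    rcases ih with hh | ⟨k, h1, h2, h3⟩
    · by_cases hdn : d n ↔ d (n+1)
      · exact Or.inl (hh.trans hdn)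
      · exact Or.inr ⟨n, hn, by omega, hdn⟩
    · exact Or.inr ⟨k, h1, by omega, h3⟩

lemma cycle_split {v v₀ : V} {c : G.Walk v v} (hc : c.IsCycle) {A B : Set (Sym2 V)}
    (hAB : ∀ e ∈ c.edges, e ∈ A ∨ e ∈ B)
    (hcut : ∀ x, x ∈ edgeVerts A → x ∈ edgeVerts B → x = v₀) :
    (∀ e ∈ c.edges, e ∈ A) ∨ (∀ e ∈ c.edges, e ∈ B) := by
  by_contra hcon
  push_neg at hcon
  obtain ⟨⟨e₁, he₁, he₁A⟩, e₂, he₂, he₂B⟩ := hcon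
  have h3 := hc.three_le_length
  set m := c.length with hm
  obtain ⟨i₀, hi₀, rfl⟩ := mem_edges_iff_getVert.mp he₁
  obtain ⟨j₀, hj₀, rfl⟩ := mem_edges_iff_getVert.mp he₂
  set E : ℕ → Sym2 V := fun i => s(c.getVert (i % m), c.getVert (i % m + 1)) with hE
  have hEmem : ∀ i, E i ∈ c.edges := fun i =>
    mem_edges_iff_getVert.mpr ⟨i % m, Nat.mod_lt _ (by omega), rfl⟩
  have hEper : ∀ i, E (i + m) = E i := by intro i; simp [hE, Nat.add_mod_right]
  set d : ℕ → Prop := fun i => E i ∈ A with hd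
  have hd1 : ¬ d i₀ := by
    simp only [hd, hE, Nat.mod_eq_of_lt (show i₀ < m from hi₀)]
    exact he₁A
  have hd2 : d j₀ := by
    simp only [hd, hE, Nat.mod_eq_of_lt (show j₀ < m from hj₀)]
    exact (hAB _ he₂).resolve_right he₂B
  have trans_v : ∀ k, ¬(d k ↔ d (k+1)) → c.getVert ((k+1) % m) = v₀ := by
    intro k hk
    have hkm : k % m < m := Nat.mod_lt _ (by omega)
    have hmod : (k+1) % m = (k % m + 1) % m := by
      conv_lhs => rw [Nat.add_mod]
      rw [Nat.mod_eq_of_lt (show 1 < m by omega)]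
    have hshared1 : c.getVert ((k+1) % m) ∈ E k := by
      rcases Nat.lt_or_ge (k % m) (m-1) with hlt | hge
      · have h1 : (k+1) % m = k % m + 1 := by
          rw [hmod, Nat.mod_eq_of_lt (by omega)]
        rw [h1, hE]; simp
      · have hk1 : k % m = m - 1 := by omega
        have h0 : (k+1) % m = 0 := by
          rw [hmod, hk1]
          have : m - 1 + 1 = m := by omega
          rw [this, Nat.mod_self]
        rw [h0]
        show c.getVert 0 ∈ s(c.getVert (k % m), c.getVert (k % m + 1))
        rw [hk1]
        have h5 : m - 1 + 1 = m := by omega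
        rw [h5]
        have : c.getVert 0 = c.getVert m := by rw [c.getVert_zero, hm, c.getVert_length]
        rw [this]; simp
    have hshared2 : c.getVert ((k+1) % m) ∈ E (k+1) := by rw [hE]; simp
    by_cases dk : d k
    · have dk1 : ¬ d (k+1) := by tauto
      have hB : E (k+1) ∈ B := (hAB _ (hEmem _)).resolve_left dk1
      exact hcut _ ⟨E k, dk, hshared1⟩ ⟨E (k+1), hB, hshared2⟩
    · have dk1 : d (k+1) := by tauto
      have hB : E k ∈ B := (hAB _ (hEmem _)).resolve_left dk
      exact hcut _ ⟨E (k+1), dk1, hshared2⟩ ⟨E k, hB, hshared1⟩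
  have main : ∀ x y, x < y → y < m → ¬(d x ↔ d y) → False := by
    intro x y hxy hym hneq
    obtain ⟨k₁, hk₁a, hk₁b, hk₁⟩ := (ivt_prop d x y (by omega)).resolve_left hneq
    have hper : d (x + m) ↔ d x := by rw [hd]; simp only [hEper]
    obtain ⟨k₂, hk₂a, hk₂b, hk₂⟩ :=
      (ivt_prop d y (x + m) (by omega)).resolve_left (by tauto)
    have heq : c.getVert ((k₁+1) % m) = c.getVert ((k₂+1) % m) := by
      rw [trans_v _ hk₁, trans_v _ hk₂]
    have h1 : (k₁+1) % m < m := Nat.mod_lt _ (by omega)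
    have h2 : (k₂+1) % m < m := Nat.mod_lt _ (by omega)
    rcases cycle_getVert_inj hc (le_of_lt h1) (le_of_lt h2) heq with hh | ⟨hh, hh'⟩ | ⟨hh, hh'⟩
    · have hmodeq : (k₁+1) ≡ (k₂+1) [MOD m] := hh
      have hdvd := (Nat.modEq_iff_dvd' (by omega)).mp hmodeq
      obtain ⟨t, ht⟩ := hdvd
      rcases Nat.eq_zero_or_pos t with rfl | ht0
      · omega
      · have : m ≤ m * t := Nat.le_mul_of_pos_right m ht0
        omega
    · omega
    · omega
  rcases lt_trichotomy i₀ j₀ with hh | hh | hh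
  · exact main i₀ j₀ hh hj₀ (by tauto)
  · rw [hh] at hd1; exact hd1 hd2
  · exact main j₀ i₀ hh hi₀ (by tauto)

end Infra

section Support
variable {V : Type*} {G : SimpleGraph V}

lemma edgeVerts_mono {A B : Set (Sym2 V)} (h : A ⊆ B) : edgeVerts A ⊆ edgeVerts B :=
  fun _ ⟨e, he, hx⟩ => ⟨e, h he, hx⟩

lemma edgeVerts_union {A B : Set (Sym2 V)} :
    edgeVerts (A ∪ B) = edgeVerts A ∪ edgeVerts B := by
  ext x
  constructor
  · rintro ⟨e, he | he, hx⟩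
    · exact Or.inl ⟨e, he, hx⟩
    · exact Or.inr ⟨e, he, hx⟩
  · rintro (⟨e, he, hx⟩ | ⟨e, he, hx⟩)
    · exact ⟨e, Or.inl he, hx⟩
    · exact ⟨e, Or.inr he, hx⟩

lemma edgeVerts_finite {A : Set (Sym2 V)} (h : A.Finite) : (edgeVerts A).Finite := by
  have : edgeVerts A = ⋃ e ∈ A, {x | x ∈ e} := by
    ext x
    simp [edgeVerts]
  rw [this]
  refine Set.Finite.biUnion h (fun e _ => ?_)
  induction e with
  | h a b =>
    have : {x | x ∈ s(a, b)} = {a, b} := by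
      ext x; simp [Sym2.mem_iff]
    rw [this]
    exact (Set.finite_singleton a).insert b |>.subset (by intro x; simp; tauto)

lemma famUnion_add {α : Type*} (O₁ O₂ : Multiset (Finset α)) :
    famUnion (O₁ + O₂) = famUnion O₁ ∪ famUnion O₂ := by
  ext x
  constructor
  · rintro ⟨S, hS, hx⟩
    rcases Multiset.mem_add.mp hS with h | h
    · exact Or.inl ⟨S, h, hx⟩
    · exact Or.inr ⟨S, h, hx⟩
  · rintro (⟨S, hS, hx⟩ | ⟨S, hS, hx⟩)
    · exact ⟨S, Multiset.mem_add.mpr (Or.inl hS), hx⟩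
    · exact ⟨S, Multiset.mem_add.mpr (Or.inr hS), hx⟩

lemma famUnion_finite {α : Type*} [DecidableEq α] (F : Multiset (Finset α)) : (famUnion F).Finite := by
  have : famUnion F = ⋃ S ∈ F.toFinset, (S : Set α) := by
    ext x
    simp [famUnion, Multiset.mem_toFinset]
  rw [this]
  exact Set.Finite.biUnion F.toFinset.finite_toSet (fun S _ => S.finite_toSet)

lemma famUnion_const {α : Type*} {O : Multiset (Finset α)} {C : Finset α}
    (h : ∀ D ∈ O, D = C) (h0 : O ≠ 0) : famUnion O = ↑C := by
  obtain ⟨D, hD⟩ := Multiset.exists_mem_of_ne_zero h0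
  ext x
  constructor
  · rintro ⟨S, hS, hx⟩
    rw [h S hS] at hx
    exact hx
  · intro hx
    exact ⟨D, hD, by rw [h D hD]; exact hx⟩

lemma subset_famUnion {α : Type*} {O : Multiset (Finset α)} {D : Finset α} (h : D ∈ O) :
    (D : Set α) ⊆ famUnion O := fun x hx => ⟨D, h, hx⟩

lemma multiset_le_left {α : Type*} [DecidableEq α] {s t₁ t₂ : Multiset α}
    (h : s ≤ t₁ + t₂) (h1 : ∀ a ∈ s, a ∈ t₁) (h2 : ∀ a ∈ t₁, a ∉ t₂) : s ≤ t₁ := by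
  rw [Multiset.le_iff_count] at h ⊢
  intro a
  by_cases ha : a ∈ s
  · have := h a
    rw [Multiset.count_add] at this
    have h2' : Multiset.count a t₂ = 0 := Multiset.count_eq_zero.mpr (h2 a (h1 a ha))
    omega
  · simp [Multiset.count_eq_zero.mpr ha]

lemma cycle_edgeVerts {v : V} {c : G.Walk v v} (hc : c.IsCycle) :
    edgeVerts {e | e ∈ c.edges} = {x | x ∈ c.support} := by
  ext x
  constructor
  · rintro ⟨e, he, hx⟩
    exact mem_support_of_mem_edge he hx
  · intro hx
    obtain ⟨i, hi, rfl⟩ := cycle_mem_support_getVert hc hx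
    exact ⟨s(c.getVert i, c.getVert (i+1)), mem_edges_iff_getVert.mpr ⟨i, hi, rfl⟩, by simp⟩

lemma cycle_support_ncard [DecidableEq V] {v : V} {c : G.Walk v v} (hc : c.IsCycle) :
    ({x | x ∈ c.support} : Set V).ncard = c.length := by
  have hset : ({x | x ∈ c.support} : Set V) = ↑c.support.toFinset := by
    ext x; simp
  have h3 := hc.three_le_length
  have hvtl : v ∈ c.support.tail := by
    have hl : c.length - 1 < c.support.tail.length := by rw [tail_length]; omega
    have : c.support.tail[c.length - 1] = v := by
      rw [List.getElem_tail, support_getElem]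
      have : c.length - 1 + 1 = c.length := by omega
      rw [this, c.getVert_length]
    have h6 := List.getElem_mem hl
    rwa [this] at h6
  have hfe : c.support.toFinset = c.support.tail.toFinset := by
    conv_lhs => rw [c.support_eq_cons]
    rw [List.toFinset_cons]
    exact Finset.insert_eq_self.mpr (List.mem_toFinset.mpr hvtl)
  rw [hset, Set.ncard_coe_finset, hfe, List.toFinset_card_of_nodup hc.support_nodup,
    tail_length]

lemma edges_toFinset_card [DecidableEq V] {v : V} {c : G.Walk v v} (hc : c.IsCycle) :
    c.edges.toFinset.card = c.length := by
  rw [List.toFinset_card_of_nodup hc.edges_nodup, c.length_edges]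

end Support

section CycleSet
variable {V : Type*} [DecidableEq V]

lemma isCycleEdgeSet_facts {C : Finset (Sym2 V)} (h : IsCycleEdgeSet C) :
    (edgeVerts (C : Set (Sym2 V))).ncard = C.card ∧ 3 ≤ C.card := by
  obtain ⟨v, c, hc, rfl⟩ := h
  have hset : (↑c.edges.toFinset : Set (Sym2 V)) = {e | e ∈ c.edges} := by
    ext e; simp
  rw [hset, cycle_edgeVerts hc, cycle_support_ncard hc, edges_toFinset_card hc]
  exact ⟨rfl, hc.three_le_length⟩

lemma prunedCactus_mem_isCycleEdgeSet {O : Multiset (Finset (Sym2 V))}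
    (h : IsPrunedCactus O) : ∀ D ∈ O, IsCycleEdgeSet D := by
  induction h with
  | base O C hcyc hcard hall =>
    intro D hD
    rw [hall D hD]
    exact hcyc
  | glue O₁ O₂ h₁ h₂ hv ih₁ ih₂ =>
    intro D hD
    rcases Multiset.mem_add.mp hD with h | h
    · exact ih₁ D h
    · exact ih₂ D h

end CycleSet


/-- A pruned cactus `O` has exactly `|O| + 1` vertices in its underlying graph,
and has no rainbow cycle. -/
theorem prunedCactus_card_and_no_rainbow_cycle {V : Type*} [DecidableEq V]
    (O : Multiset (Finset (Sym2 V))) (h : IsPrunedCactus O) :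
    (edgeVerts (famUnion O)).ncard = Multiset.card O + 1 ∧
      ¬ ∃ R : Finset (Sym2 V), IsRainbowM O R ∧ IsCycleEdgeSet R := by
  induction h with
  | base O C hcyc hcard hall =>
    obtain ⟨hncard, h3⟩ := isCycleEdgeSet_facts hcyc
    have hO0 : O ≠ 0 := by
      intro h0
      rw [h0] at hcard
      simp at hcard
      omega
    have hfu : famUnion O = ↑C := famUnion_const hall hO0
    constructor
    · rw [hfu, hncard]; omega
    · rintro ⟨R, ⟨f, hle, hf⟩, hRcyc⟩
      have hRC : ∀ e ∈ R, e ∈ C := by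
        intro e he
        have h1 : f e ∈ Multiset.map f R.val := Multiset.mem_map_of_mem _ (Finset.mem_def.mp he)
        have h2 : f e ∈ O := Multiset.mem_of_le hle h1
        exact (hall _ h2) ▸ hf e he
      obtain ⟨u', c', hc', hR⟩ := hRcyc
      obtain ⟨u, c, hc, hC⟩ := hcyc
      have hsub : ∀ e ∈ c'.edges, e ∈ c.edges := by
        intro e he
        have h1 : e ∈ R := by rw [← hR]; exact List.mem_toFinset.mpr he
        have h2 := hRC e h1
        rw [← hC] at h2
        exact List.mem_toFinset.mp h2
      have hsup := cycle_edges_subset_cycle_edges hc hc' hsub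
      have hCR : C ⊆ R := by
        intro e he
        rw [← hC] at he
        rw [← hR]
        exact List.mem_toFinset.mpr (hsup e (List.mem_toFinset.mp he))
      have hcardle : R.card ≤ Multiset.card O := by
        have h1 := Multiset.card_le_card hle
        rwa [Multiset.card_map] at h1
      have := Finset.card_le_card hCR
      omega
  | glue O₁ O₂ h₁ h₂ hvex ih₁ ih₂ =>
    obtain ⟨v, hv⟩ := hvex
    have hf1 : (edgeVerts (famUnion O₁)).Finite := edgeVerts_finite (famUnion_finite O₁)
    have hf2 : (edgeVerts (famUnion O₂)).Finite := edgeVerts_finite (famUnion_finite O₂)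
    constructor
    · rw [famUnion_add, edgeVerts_union]
      have hu := Set.ncard_union_add_ncard_inter (edgeVerts (famUnion O₁))
        (edgeVerts (famUnion O₂)) hf1 hf2
      rw [hv, Set.ncard_singleton] at hu
      have e1 := ih₁.1
      have e2 := ih₂.1
      rw [Multiset.card_add]
      omega
    · rintro ⟨R, ⟨f, hle, hf⟩, u', c', hc', hR⟩
      have hmemR : ∀ e ∈ c'.edges, e ∈ R := fun e he => by
        rw [← hR]; exact List.mem_toFinset.mpr he
      have hmemR' : ∀ e ∈ R, e ∈ c'.edges := fun e he => by
        rw [← hR] at he; exact List.mem_toFinset.mp he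
      have hAB : ∀ e ∈ c'.edges, e ∈ {e : Sym2 V | e ∈ R ∧ f e ∈ O₁} ∨
          e ∈ {e : Sym2 V | e ∈ R ∧ f e ∈ O₂} := by
        intro e he
        have heR := hmemR e he
        have h1 : f e ∈ O₁ + O₂ :=
          Multiset.mem_of_le hle (Multiset.mem_map_of_mem _ (Finset.mem_def.mp heR))
        rcases Multiset.mem_add.mp h1 with hh | hh
        · exact Or.inl ⟨heR, hh⟩
        · exact Or.inr ⟨heR, hh⟩
      have hsubA : {e : Sym2 V | e ∈ R ∧ f e ∈ O₁} ⊆ famUnion O₁ := by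
        rintro e ⟨heR, hfe⟩; exact ⟨f e, hfe, hf e heR⟩
      have hsubB : {e : Sym2 V | e ∈ R ∧ f e ∈ O₂} ⊆ famUnion O₂ := by
        rintro e ⟨heR, hfe⟩; exact ⟨f e, hfe, hf e heR⟩
      have hcut : ∀ x, x ∈ edgeVerts {e : Sym2 V | e ∈ R ∧ f e ∈ O₁} →
          x ∈ edgeVerts {e : Sym2 V | e ∈ R ∧ f e ∈ O₂} → x = v := by
        intro x hxA hxB
        have hx : x ∈ edgeVerts (famUnion O₁) ∩ edgeVerts (famUnion O₂) :=
          ⟨edgeVerts_mono hsubA hxA, edgeVerts_mono hsubB hxB⟩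
        rw [hv] at hx
        exact hx
      have hdisj : ∀ D ∈ O₁, D ∉ O₂ := by
        intro D hD1 hD2
        obtain ⟨hDn, hD3⟩ := isCycleEdgeSet_facts (prunedCactus_mem_isCycleEdgeSet h₁ D hD1)
        have hsubD : edgeVerts (D : Set (Sym2 V)) ⊆ {v} := by
          rw [← hv]
          exact fun x hx => ⟨edgeVerts_mono (subset_famUnion hD1) hx,
            edgeVerts_mono (subset_famUnion hD2) hx⟩
        have hcle := Set.ncard_le_ncard hsubD (Set.finite_singleton v)
        rw [Set.ncard_singleton, hDn] at hcle
        omega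
      rcases cycle_split hc' hAB hcut with hall | hall
      · refine ih₁.2 ⟨R, ⟨f, ?_, hf⟩, u', c', hc', hR⟩
        refine multiset_le_left hle ?_ hdisj
        intro a ha
        obtain ⟨e, he, rfl⟩ := Multiset.mem_map.mp ha
        exact (hall e (hmemR' e (Finset.mem_def.mpr he))).2
      · refine ih₂.2 ⟨R, ⟨f, ?_, hf⟩, u', c', hc', hR⟩
        have hle' : Multiset.map f R.val ≤ O₂ + O₁ := by
          rwa [add_comm O₂ O₁]
        refine multiset_le_left hle' ?_ (fun D hD2 hD1 => hdisj D hD1 hD2)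
        intro a ha
        obtain ⟨e, he, rfl⟩ := Multiset.mem_map.mp ha
        exact (hall e (hmemR' e (Finset.mem_def.mpr he))).2
end

section
/- Let E be a ground set and 𝒫 ⊆ 2^E a property not containing the empty set and closed under taking supersets. Let m be the maximum size of a subset of E not in 𝒫. Then every family E₁, …, E_{m+1} of subsets of E with each Eᵢ ∈ 𝒫 has a rainbow set in 𝒫. -/
/-- If `P` is an upward-closed property of subsets of a ground set, not containing `∅`,
and `m` is the maximum size of a set not in `P`, then any `m + 1` sets in `P` have a
rainbow set in `P`. -/
theorem rainbow_of_upward_closed {α : Type*} (P : Finset α → Prop)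
    (h0 : ¬ P ∅) (hup : ∀ F F' : Finset α, P F → F ⊆ F' → P F')
    (m : ℕ) (hm : IsGreatest {k | ∃ F : Finset α, ¬ P F ∧ F.card = k} m)
    (E : Fin (m + 1) → Finset α) (hE : ∀ i, P (E i)) :
    ∃ R : Finset α, IsRainbow E R ∧ P R := by
  classical
  set S : Set ℕ := {k | ∃ R : Finset α, IsRainbow E R ∧ ¬ P R ∧ R.card = k} with hS
  have hne : S.Nonempty := by
    refine ⟨0, ∅, ⟨fun _ => (0 : Fin (m + 1)), ?_, ?_⟩, h0, by simp⟩
    · simp [Set.InjOn]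
    · simp
  have hbdd : ∀ k ∈ S, k ≤ m := by
    rintro k ⟨R, _, hRP, hcard⟩
    exact hm.2 ⟨R, hRP, hcard⟩
  have hmem : sSup S ∈ S := Nat.sSup_mem hne ⟨m, hbdd⟩
  obtain ⟨R, ⟨σ, hinj, hσ⟩, hRP, hcard⟩ := hmem
  -- R has card ≤ m, so some color i is unused
  have hRm : R.card ≤ m := hcard ▸ hbdd _ (hcard ▸ ⟨R, ⟨σ, hinj, hσ⟩, hRP, rfl⟩)
  obtain ⟨i, hi⟩ : ∃ i : Fin (m + 1), i ∉ R.image σ := by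
    by_contra h
    push_neg at h
    have : (Finset.univ : Finset (Fin (m + 1))) ⊆ R.image σ := fun i _ => h i
    have := Finset.card_le_card this
    simp only [Finset.card_univ, Fintype.card_fin] at this
    have := le_trans this (le_trans Finset.card_image_le hRm)
    omega
  -- E i ⊄ R, else R ∈ P
  have hEi : ¬ (E i ⊆ R) := fun h => hRP (hup _ _ (hE i) h)
  obtain ⟨e, he, heR⟩ : ∃ e ∈ E i, e ∉ R := by
    by_contra h; push_neg at h; exact hEi h
  set σ' := Function.update σ e i with hσ'
  have hσ'R : ∀ x ∈ R, σ' x = σ x := fun x hx =>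
    Function.update_of_ne (by rintro rfl; exact heR hx) _ _
  have hrb : IsRainbow E (insert e R) := by
    refine ⟨σ', ?_, ?_⟩
    · intro x hx y hy hxy
      simp only [Finset.coe_insert, Set.mem_insert_iff, Finset.mem_coe] at hx hy
      rcases hx with rfl | hx <;> rcases hy with rfl | hy
      · rfl
      · exfalso; apply hi
        rw [hσ'R y hy, hσ', Function.update_self] at hxy
        exact Finset.mem_image.2 ⟨y, hy, hxy.symm⟩
      · exfalso; apply hi
        rw [hσ'R x hx, hσ', Function.update_self] at hxy
        exact Finset.mem_image.2 ⟨x, hx, hxy⟩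
      · exact hinj hx hy (by rwa [hσ'R x hx, hσ'R y hy] at hxy)
    · intro x hx
      rcases Finset.mem_insert.1 hx with rfl | hx
      · rw [hσ', Function.update_self]; exact he
      · rw [hσ'R x hx]; exact hσ x hx
  refine ⟨insert e R, hrb, ?_⟩
  by_contra hP
  have : (insert e R).card ∈ S := ⟨insert e R, hrb, hP, rfl⟩
  have hle : (insert e R).card ≤ sSup S := le_csSup ⟨m, fun k hk => hbdd k hk⟩ this
  rw [Finset.card_insert_of_notMem heR] at hle
  omega
end

section
/- Let v be a vertex of K_{m+1} and ℰ = {E₁, …, E_m} a family of subgraphs of K_{m+1} where each Eᵢ is either a star centered at v or a cycle. Suppose ℰ has no rainbow cycle and every star in ℰ is edge-disjoint from all other members of ℰ. If E₁ is a star, then there exist ℓ cycles in ℰ avoiding v, for some 0 < ℓ < m, whose union with E₁ contains at most ℓ+2 vertices. -/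
/-- `S` is a star of size at least 2 centered at `v`. -/
def IsStar {V : Type*} (v : V) (S : Finset (Sym2 V)) : Prop :=
  2 ≤ S.card ∧ ∀ e ∈ S, ¬ e.IsDiag ∧ v ∈ e

namespace StarAux
set_option linter.unusedSectionVars false
set_option linter.unusedVariables false
set_option maxHeartbeats 2000000
open SimpleGraph Function Finset

variable {V : Type*} [Fintype V] [DecidableEq V]

lemma cycle_edges_not_diag {C : Finset (Sym2 V)} (hC : IsCycleEdgeSet C) :
    ∀ g ∈ C, ¬ g.IsDiag := by
  obtain ⟨x, w, hw, rfl⟩ := hC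
  intro g hg
  rw [List.mem_toFinset] at hg
  induction g with
  | _ u v =>
    have : (⊤ : SimpleGraph V).Adj u v := Walk.adj_of_mem_edges w hg
    simpa using this.ne

lemma no_cycle_sub_acyclic {G : SimpleGraph V} (hG : G.IsAcyclic) {C : Finset (Sym2 V)}
    (hC : IsCycleEdgeSet C) (hsub : ∀ g ∈ C, g ∈ G.edgeSet) : False := by
  obtain ⟨x, w, hw, rfl⟩ := hC
  have hsub' : ∀ g ∈ w.edges, g ∈ G.edgeSet := fun g hg => hsub g (List.mem_toFinset.2 hg)
  exact hG (w.transfer G hsub') (hw.transfer hsub')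

lemma acyclic_mono {G H : SimpleGraph V} (h : H ≤ G) (hG : G.IsAcyclic) : H.IsAcyclic := by
  intro u w hw
  have hsub : ∀ g ∈ w.edges, g ∈ G.edgeSet := fun g hg =>
    (SimpleGraph.edgeSet_mono h) (w.edges_subset_edgeSet hg)
  exact hG (w.transfer G hsub) (hw.transfer hsub)

lemma acyclic_sup_edge {G : SimpleGraph V} (hG : G.IsAcyclic) {x y : V} (hxy : x ≠ y)
    (hr : ¬ G.Reachable x y) : (G ⊔ fromEdgeSet {s(x,y)}).IsAcyclic := by
  intro u w hw
  by_cases he : s(x,y) ∈ w.edges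
  · have hrc := (adj_and_reachable_delete_edges_iff_exists_cycle.mpr ⟨u, w, hw, he⟩).2
    have hle : (G ⊔ fromEdgeSet {s(x,y)}) \ fromEdgeSet {s(x,y)} ≤ G := by
      rw [sup_sdiff_right_self]
      exact sdiff_le
    exact hr (hrc.mono hle)
  · have hsub : ∀ g ∈ w.edges, g ∈ G.edgeSet := by
      intro g hg
      have := w.edges_subset_edgeSet hg
      rw [edgeSet_sup, edgeSet_fromEdgeSet] at this
      rcases this with h1 | h2
      · exact h1
      · exact absurd h2.1 (by simpa using fun h : g = s(x,y) => he (h ▸ hg))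
    exact hG (w.transfer G hsub) (hw.transfer hsub)


lemma comp_bound : ∀ (N : ℕ) (G : SimpleGraph V), G.IsAcyclic → G.edgeSet.ncard = N →
    N + Nat.card G.ConnectedComponent ≤ Fintype.card V := by
  intro N
  induction N using Nat.strong_induction_on with
  | _ N ih =>
    intro G hG hN
    haveI : Fintype G.ConnectedComponent := Fintype.ofFinite _
    rcases Nat.eq_zero_or_pos N with rfl | hNpos
    · rw [Nat.card_eq_fintype_card, zero_add]
      exact Fintype.card_le_of_surjective G.connectedComponentMk
        (ConnectedComponent.ind fun u => ⟨u, rfl⟩)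
    · have hne : G.edgeSet.Nonempty := by
        rw [← Set.ncard_pos (Set.toFinite _), hN]; exact hNpos
      obtain ⟨f, hf⟩ := hne
      obtain ⟨x, y⟩ := f
      have hadj : G.Adj x y := hf
      set G' : SimpleGraph V := G \ fromEdgeSet {s(x,y)} with hG'
      have hG'le : G' ≤ G := sdiff_le
      have hG'acyc : G'.IsAcyclic := fun u w hw => by
        have hsub : ∀ g ∈ w.edges, g ∈ G.edgeSet := fun g hg =>
          (SimpleGraph.edgeSet_mono hG'le) (w.edges_subset_edgeSet hg)
        exact hG (w.transfer G hsub) (hw.transfer hsub)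
      have hES : G'.edgeSet = G.edgeSet \ {s(x,y)} := by
        rw [hG', edgeSet_sdiff, edgeSet_fromEdgeSet]
        ext g
        simp only [Set.mem_diff, Set.mem_singleton_iff, Set.mem_setOf_eq]
        constructor
        · rintro ⟨hg, h2⟩
          refine ⟨hg, fun hh => h2 ⟨hh, ?_⟩⟩
          subst hh; exact G.not_isDiag_of_mem_edgeSet hg
        · rintro ⟨hg, h2⟩; exact ⟨hg, fun hh => h2 hh.1⟩
      have hN' : G'.edgeSet.ncard = N - 1 := by
        rw [hES, Set.ncard_diff_singleton_of_mem hf, hN]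
      have hIH := ih (N-1) (by omega) G' hG'acyc hN'
      haveI : Fintype G'.ConnectedComponent := Fintype.ofFinite _
      -- the natural surjection
      set φ : G'.ConnectedComponent → G.ConnectedComponent :=
        ConnectedComponent.map (Hom.ofLE hG'le) with hφ
      have hsurj : Function.Surjective φ :=
        ConnectedComponent.ind fun u => ⟨G'.connectedComponentMk u, rfl⟩
      have hninj : ¬ Function.Injective φ := by
        intro hinj
        have hxyne : ¬ G'.Reachable x y := by
          intro hreach
          obtain ⟨u, w, hw, -⟩ := adj_and_reachable_delete_edges_iff_exists_cycle.mp ⟨hadj, hreach⟩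
          exact hG w hw
        apply hxyne
        rw [← ConnectedComponent.eq]
        apply hinj
        show φ _ = φ _
        simp only [hφ, ConnectedComponent.map_mk]
        exact ConnectedComponent.eq.mpr hadj.reachable
      have hlt : Fintype.card G.ConnectedComponent < Fintype.card G'.ConnectedComponent :=
        Fintype.card_lt_of_surjective_not_injective φ hsurj hninj
      rw [Nat.card_eq_fintype_card]
      rw [Nat.card_eq_fintype_card] at hIH
      omega


lemma connected_of_acyclic_card {G : SimpleGraph V} [Nonempty V] (hG : G.IsAcyclic)
    (h : Fintype.card V ≤ G.edgeSet.ncard + 1) : G.Connected := by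
  have hb := comp_bound G.edgeSet.ncard G hG rfl
  haveI : Fintype G.ConnectedComponent := Fintype.ofFinite _
  rw [Nat.card_eq_fintype_card] at hb
  have h1 : Fintype.card G.ConnectedComponent ≤ 1 := by omega
  haveI : Subsingleton G.ConnectedComponent := Fintype.card_le_one_iff_subsingleton.mp h1
  constructor
  intro u w
  exact ConnectedComponent.eq.mp (Subsingleton.elim _ _)

lemma build_rainbow {ι : Type*} {E : ι → Finset (Sym2 V)} {x y : V}
    (p : (⊤ : SimpleGraph V).Walk y x) (hp : p.IsPath) (hxy : x ≠ y)
    (hf : s(x,y) ∉ p.edges) (σ : Sym2 V → ι)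
    (hinj : Set.InjOn σ ↑(insert s(x,y) p.edges.toFinset))
    (hmem : ∀ g ∈ insert s(x,y) p.edges.toFinset, g ∈ E (σ g)) :
    ∃ R : Finset (Sym2 V), IsRainbow E R ∧ IsCycleEdgeSet R := by
  have hadj : (⊤ : SimpleGraph V).Adj x y := by simpa using hxy
  have hc : (Walk.cons hadj p).IsCycle := Path.cons_isCycle ⟨p, hp⟩ hadj hf
  have hE : (Walk.cons hadj p).edges.toFinset = insert s(x,y) p.edges.toFinset := by
    simp [Walk.edges_cons]
  refine ⟨(Walk.cons hadj p).edges.toFinset, ⟨σ, ?_, ?_⟩, ⟨x, _, hc, rfl⟩⟩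
  · rw [hE]; exact hinj
  · rw [hE]; exact hmem

lemma fund_contra {ι : Type*} [Nonempty ι] {E : ι → Finset (Sym2 V)}
    (hno : ¬ ∃ R : Finset (Sym2 V), IsRainbow E R ∧ IsCycleEdgeSet R)
    (e : ι → Sym2 V) (s : Set ι) (hinj : Set.InjOn e s) (hmem : ∀ i ∈ s, e i ∈ E i)
    {x y : V} (p : (SimpleGraph.fromEdgeSet (e '' s)).Walk y x) (hp : p.IsPath)
    (i : ι) (hfE : s(x,y) ∈ E i) (hxy : x ≠ y) (hnot : s(x,y) ∉ e '' s)
    (hi : i ∉ s ∨ e i ∉ p.edges) : False := by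
  classical
  apply hno
  have hpe : ∀ g ∈ p.edges, g ∈ e '' s := by
    intro g hg
    have := p.edges_subset_edgeSet hg
    rw [edgeSet_fromEdgeSet] at this
    exact this.1
  set q : (⊤ : SimpleGraph V).Walk y x := p.mapLe le_top with hqdef
  have hq : q.IsPath := hp.mapLe _
  have hqe : q.edges = p.edges := by
    simp only [hqdef, Walk.mapLe, Walk.edges_map]
    have : (Sym2.map ⇑(Hom.ofLE (le_top : fromEdgeSet (e '' s) ≤ ⊤))) = id := by
      funext g; exact congrFun Sym2.map_id g
    rw [show ⇑(Hom.ofLE (le_top : fromEdgeSet (e '' s) ≤ ⊤)) = id from rfl]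
    simp
  set σ : Sym2 V → ι := fun g => if g = s(x,y) then i else Function.invFunOn e s g with hσ
  have htree : ∀ g ∈ p.edges, σ g ∈ s ∧ e (σ g) = g := by
    intro g hg
    have hgs : g ∈ e '' s := hpe g hg
    have hgne : g ≠ s(x,y) := fun h => hnot (h ▸ hgs)
    obtain ⟨j, hj, hje⟩ := hgs
    have hex : ∃ a ∈ s, e a = g := ⟨j, hj, hje⟩
    rw [hσ]
    simp only [if_neg hgne]
    exact ⟨Function.invFunOn_mem hex, Function.invFunOn_eq hex⟩
  have hmem' : ∀ g ∈ insert s(x,y) q.edges.toFinset, g ∈ E (σ g) := by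
    intro g hg
    rcases Finset.mem_insert.mp hg with rfl | hg
    · simpa [hσ] using hfE
    · rw [List.mem_toFinset, hqe] at hg
      obtain ⟨hjs, hje⟩ := htree g hg
      simpa [hje] using hmem _ hjs
  apply build_rainbow q hq hxy (by rw [hqe]; exact fun h => hnot (hpe _ h)) σ ?_ hmem'
  intro g1 hg1 g2 hg2 heq
  simp only [Finset.coe_insert, Set.mem_insert_iff, Finset.mem_coe, List.mem_toFinset, hqe] at hg1 hg2
  have hfval : σ s(x,y) = i := by simp [hσ]
  rcases hg1 with rfl | hg1 <;> rcases hg2 with rfl | hg2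
  · rfl
  · obtain ⟨hjs, hje⟩ := htree g2 hg2
    rw [hfval] at heq
    exfalso
    rcases hi with hi | hi
    · exact hi (heq ▸ hjs)
    · rw [← heq] at hje; exact hi (hje ▸ hg2)
  · obtain ⟨hjs, hje⟩ := htree g1 hg1
    rw [hfval] at heq
    exfalso
    rcases hi with hi | hi
    · exact hi (heq ▸ hjs)
    · rw [heq] at hje; exact hi (hje ▸ hg1)
  · obtain ⟨h1s, h1e⟩ := htree g1 hg1
    obtain ⟨h2s, h2e⟩ := htree g2 hg2
    rw [← h1e, ← h2e, heq]


lemma edge_repr {g : Sym2 V} (hg : ¬ g.IsDiag) : ∃ x y : V, g = s(x,y) ∧ x ≠ y := by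
  induction g with
  | _ u w => exact ⟨u, w, rfl, by simpa using hg⟩

lemma exists_good [Nonempty V] {ι : Type*} [Fintype ι] [DecidableEq ι] [Nonempty ι]
    {E : ι → Finset (Sym2 V)} (v : V)
    (hE : ∀ i, IsStar v (E i) ∨ IsCycleEdgeSet (E i))
    (hno : ¬ ∃ R : Finset (Sym2 V), IsRainbow E R ∧ IsCycleEdgeSet R)
    (hdisj : ∀ i, IsStar v (E i) → ∀ j, j ≠ i → Disjoint (E i) (E j)) :
    ∃ e : ι → Sym2 V, (∀ i, e i ∈ E i) ∧ Function.Injective e ∧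
      (fromEdgeSet (Set.range e)).IsAcyclic := by
  classical
  have key : ∀ s : Finset ι, ∃ e : ι → Sym2 V, (∀ i ∈ s, e i ∈ E i) ∧
      Set.InjOn e ↑s ∧ (fromEdgeSet (e '' ↑s)).IsAcyclic := by
    intro s
    induction s using Finset.induction_on with
    | empty =>
      refine ⟨fun _ => s(Classical.arbitrary V, Classical.arbitrary V), by simp, by simp, ?_⟩
      rw [Finset.coe_empty, Set.image_empty, fromEdgeSet_empty]
      intro _ w hw
      cases w with
      | nil => exact hw.ne_nil rfl
      | cons h p => exact h.elim
    | @insert i s hins ih =>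
      obtain ⟨e, hmem, hinj, hacyc⟩ := ih
      have hEnd : ∀ g ∈ E i, ¬ g.IsDiag := by
        rcases hE i with hs | hc
        · exact fun g hg => (hs.2 g hg).1
        · exact cycle_edges_not_diag hc
      have hEne : (E i).Nonempty := by
        rcases hE i with hs | hc
        · exact Finset.card_pos.mp (by have := hs.1; omega)
        · obtain ⟨x, w, hw, heq⟩ := hc
          have h3 : w.edges ≠ [] := by
            have h4 := hw.three_le_length
            have h5 := w.length_edges
            intro hemp
            rw [hemp] at h5
            simp at h5
            omega
          obtain ⟨g, hg⟩ := List.exists_mem_of_ne_nil _ h3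
          exact ⟨g, heq ▸ List.mem_toFinset.mpr hg⟩
      by_cases hcase : ∃ f ∈ E i, ∀ x y : V, f = s(x,y) →
          ¬ (fromEdgeSet (e '' ↑s)).Reachable x y
      · obtain ⟨f, hfE, hfr⟩ := hcase
        obtain ⟨x, y, rfl, hxy⟩ := edge_repr (hEnd f hfE)
        refine ⟨Function.update e i s(x,y), ?_, ?_, ?_⟩
        · intro j hj
          rcases Finset.mem_insert.mp hj with rfl | hjmem
          · simp [hfE]
          · rw [Function.update_of_ne (by rintro rfl; exact hins hjmem)]
            exact hmem j hjmem
        · have hfnot : s(x,y) ∉ e '' ↑s := by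
            intro hmemf
            have hadj : (fromEdgeSet (e '' ↑s)).Adj x y := by
              rw [fromEdgeSet_adj]
              exact ⟨hmemf, hxy⟩
            exact hfr x y rfl hadj.reachable
          intro j1 hj1 j2 hj2 heq
          simp only [Finset.coe_insert, Set.mem_insert_iff, Finset.mem_coe] at hj1 hj2
          rcases hj1 with rfl | hj1 <;> rcases hj2 with rfl | hj2
          · rfl
          · rw [Function.update_self, Function.update_of_ne (by rintro rfl; exact hins hj2)] at heq
            exact absurd ⟨j2, hj2, heq.symm⟩ hfnot
          · rw [Function.update_self, Function.update_of_ne (by rintro rfl; exact hins hj1)] at heq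
            exact absurd ⟨j1, hj1, heq⟩ hfnot
          · rw [Function.update_of_ne (by rintro rfl; exact hins hj1),
              Function.update_of_ne (by rintro rfl; exact hins hj2)] at heq
            exact hinj hj1 hj2 heq
        · have himg : Function.update e i s(x,y) '' ↑(insert i s) =
              insert s(x,y) (e '' ↑s) := by
            rw [Finset.coe_insert, Set.image_insert_eq, Function.update_self]
            congr 1
            apply Set.image_congr
            intro j hj
            exact Function.update_of_ne (by rintro rfl; exact hins hj) _ _
          rw [himg, Set.insert_eq, Set.union_comm, fromEdgeSet_union]
          exact acyclic_sup_edge hacyc hxy (hfr x y rfl)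
      · push_neg at hcase
        exfalso
        by_cases h2 : ∃ f ∈ E i, f ∉ e '' ↑s
        · obtain ⟨f, hfE, hfnot⟩ := h2
          obtain ⟨x, y, rfl, hxy⟩ := edge_repr (hEnd f hfE)
          obtain ⟨x', y', hfeq, hreach⟩ := hcase s(x,y) hfE
          have hreach' : (fromEdgeSet (e '' ↑s)).Reachable x y := by
            rw [Sym2.eq_iff] at hfeq
            rcases hfeq with ⟨rfl, rfl⟩ | ⟨rfl, rfl⟩
            · exact hreach
            · exact hreach.symm
          obtain ⟨w⟩ := hreach'.symm
          exact fund_contra hno e ↑s hinj hmem (w.toPath : _) (w.toPath.2) i hfE hxy hfnot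
            (Or.inl (by simpa using hins))
        · push_neg at h2
          rcases hE i with hs | hc
          · obtain ⟨f, hfE⟩ := hEne
            obtain ⟨j, hj, hje⟩ := h2 f hfE
            have hd := hdisj i hs j (fun h => hins (h ▸ hj))
            exact Finset.disjoint_left.mp hd hfE (hje ▸ hmem j hj)
          · apply no_cycle_sub_acyclic hacyc hc
            intro g hg
            rw [edgeSet_fromEdgeSet]
            exact ⟨h2 g hg, hEnd g hg⟩
  obtain ⟨e, hmem, hinj, hacyc⟩ := key Finset.univ
  refine ⟨e, fun i => hmem i (Finset.mem_univ i), fun a b hab => hinj (by simp) (by simp) hab, ?_⟩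
  rwa [Finset.coe_univ, Set.image_univ] at hacyc


section Tree

variable {G : SimpleGraph V}

noncomputable def tp (hc : G.Connected) (u w : V) : G.Walk u w :=
  ((hc.preconnected u w).some.toPath : G.Path u w).1

lemma tp_isPath (hc : G.Connected) (u w : V) : (tp hc u w).IsPath :=
  ((hc.preconnected u w).some.toPath).2

lemma tp_unique (hc : G.Connected) (hac : G.IsAcyclic) {u w : V} (q : G.Walk u w)
    (hq : q.IsPath) : q = tp hc u w :=
  congrArg Subtype.val (hac.path_unique ⟨q, hq⟩ ((hc.preconnected u w).some.toPath))

lemma tp_nil (hc : G.Connected) (hac : G.IsAcyclic) (root : V) : tp hc root root = Walk.nil :=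
  (tp_unique hc hac (Walk.nil) (Walk.IsPath.nil)).symm

lemma exists_par (hc : G.Connected) (hac : G.IsAcyclic) (root : V) {u : V} (hu : u ≠ root) :
    ∃ (x : V) (h : G.Adj u x), tp hc u root = Walk.cons h (tp hc x root) := by
  obtain ⟨x, h, q, hq⟩ := Walk.exists_eq_cons_of_ne hu (tp hc u root)
  have hpath : (tp hc u root).IsPath := tp_isPath hc u root
  rw [hq, Walk.cons_isPath_iff] at hpath
  exact ⟨x, h, by rw [hq, tp_unique hc hac q hpath.1]⟩

noncomputable def par (hc : G.Connected) (hac : G.IsAcyclic) (root : V) (u : V) : V :=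
  if hu : u = root then root else (exists_par hc hac root hu).choose

lemma par_root (hc : G.Connected) (hac : G.IsAcyclic) (root : V) :
    par hc hac root root = root := dif_pos rfl

lemma par_choose (hc : G.Connected) (hac : G.IsAcyclic) (root : V) {u : V} (hu : u ≠ root) :
    par hc hac root u = (exists_par hc hac root hu).choose := dif_neg hu

lemma par_adj (hc : G.Connected) (hac : G.IsAcyclic) (root : V) {u : V} (hu : u ≠ root) :
    G.Adj u (par hc hac root u) := by
  rw [par_choose hc hac root hu]
  exact (exists_par hc hac root hu).choose_spec.choose

lemma tp_edges (hc : G.Connected) (hac : G.IsAcyclic) (root : V) {u : V} (hu : u ≠ root) :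
    (tp hc u root).edges =
      s(u, par hc hac root u) :: (tp hc (par hc hac root u) root).edges := by
  rw [par_choose hc hac root hu]
  have h := (exists_par hc hac root hu).choose_spec.choose_spec
  rw [congrArg Walk.edges h, Walk.edges_cons]

lemma tp_support (hc : G.Connected) (hac : G.IsAcyclic) (root : V) {u : V} (hu : u ≠ root) :
    (tp hc u root).support = u :: (tp hc (par hc hac root u) root).support := by
  rw [par_choose hc hac root hu]
  have h := (exists_par hc hac root hu).choose_spec.choose_spec
  rw [congrArg Walk.support h, Walk.support_cons]

lemma tp_length (hc : G.Connected) (hac : G.IsAcyclic) (root : V) {u : V} (hu : u ≠ root) :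
    (tp hc u root).length = (tp hc (par hc hac root u) root).length + 1 := by
  rw [par_choose hc hac root hu]
  have h := (exists_par hc hac root hu).choose_spec.choose_spec
  rw [congrArg Walk.length h, Walk.length_cons]

noncomputable def dep (hc : G.Connected) (root : V) (u : V) : ℕ := (tp hc u root).length

lemma dep_par (hc : G.Connected) (hac : G.IsAcyclic) (root : V) {u : V} (hu : u ≠ root) :
    dep hc root (par hc hac root u) + 1 = dep hc root u := by
  rw [dep, dep, tp_length hc hac root hu]

def Dset (hc : G.Connected) (root : V) (g : Sym2 V) : Set V :=
  {u | g ∈ (tp hc u root).edges}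

lemma root_not_Dset (hc : G.Connected) (hac : G.IsAcyclic) (root : V) {g : Sym2 V} :
    root ∉ Dset hc root g := by
  intro h
  rw [Dset, Set.mem_setOf_eq, tp_nil hc hac root] at h
  simp at h

lemma mem_Dset_iff (hc : G.Connected) (hac : G.IsAcyclic) (root : V) {u : V} (hu : u ≠ root)
    {g : Sym2 V} : u ∈ Dset hc root g ↔
      g = s(u, par hc hac root u) ∨ par hc hac root u ∈ Dset hc root g := by
  rw [Dset, Set.mem_setOf_eq, tp_edges hc hac root hu, List.mem_cons]
  rfl

lemma not_in_tail (hc : G.Connected) (hac : G.IsAcyclic) (root : V) {u : V} (hu : u ≠ root) :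
    u ∉ (tp hc (par hc hac root u) root).support := by
  have hpath := tp_isPath hc u root
  have hsup := tp_support hc hac root hu
  have hnodup := hpath.support_nodup
  rw [hsup] at hnodup
  exact (List.nodup_cons.mp hnodup).1

lemma par_edge_not_tail (hc : G.Connected) (hac : G.IsAcyclic) (root : V) {u : V}
    (hu : u ≠ root) :
    s(u, par hc hac root u) ∉ (tp hc (par hc hac root u) root).edges := fun h =>
  not_in_tail hc hac root hu (Walk.fst_mem_support_of_mem_edges _ h)

lemma par_or (hc : G.Connected) (hac : G.IsAcyclic) (root : V) {c c' : V} (hadj : G.Adj c c') :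
    par hc hac root c = c' ∨ par hc hac root c' = c := by
  by_cases hsup : c' ∈ (tp hc c root).support
  · left
    have hcne : c ≠ root := by
      rintro rfl
      rw [tp_nil hc hac c] at hsup
      simp only [Walk.support_nil, List.mem_singleton] at hsup
      exact hadj.ne hsup.symm
    have htake : ((tp hc c root).takeUntil c' hsup).IsPath :=
      (tp_isPath hc c root).takeUntil hsup
    have hsingleP : (Walk.cons hadj Walk.nil : G.Walk c c').IsPath := by simp [hadj.ne]
    have hsingle : (Walk.cons hadj Walk.nil : G.Walk c c') = (tp hc c root).takeUntil c' hsup :=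
      congrArg Subtype.val (hac.path_unique ⟨_, hsingleP⟩ ⟨_, htake⟩)
    have hspec := (tp hc c root).take_spec hsup
    rw [← hsingle] at hspec
    simp only [Walk.cons_append, Walk.nil_append] at hspec
    -- hspec : Walk.cons hadj (dropUntil ...) = tp hc c root
    have h1 := congrArg Walk.support hspec
    rw [Walk.support_cons, tp_support hc hac root hcne] at h1
    have h2 : ((tp hc c root).dropUntil c' hsup).support =
        (tp hc (par hc hac root c) root).support := List.tail_eq_of_cons_eq h1
    rw [Walk.support_eq_cons, Walk.support_eq_cons (tp hc (par hc hac root c) root)] at h2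
    exact (List.head_eq_of_cons_eq h2).symm
  · right
    have hc'ne : c' ≠ root := by
      rintro rfl
      exact hsup (Walk.end_mem_support _)
    have hpath : (Walk.cons hadj.symm (tp hc c root)).IsPath :=
      (Walk.cons_isPath_iff _ _).mpr ⟨tp_isPath hc c root, hsup⟩
    have heq := tp_unique hc hac _ hpath
    have h1 := congrArg Walk.support heq
    rw [Walk.support_cons, tp_support hc hac root hc'ne] at h1
    have h2 : (tp hc c root).support = (tp hc (par hc hac root c') root).support :=
      List.tail_eq_of_cons_eq h1
    rw [Walk.support_eq_cons, Walk.support_eq_cons (tp hc (par hc hac root c') root)] at h2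
    exact (List.head_eq_of_cons_eq h2).symm

lemma adj_Dset_aux (hc : G.Connected) (hac : G.IsAcyclic) (root : V) {g : Sym2 V} {x y : V}
    (hadj : G.Adj x y) (hp : par hc hac root x = y) :
    ((x ∈ Dset hc root g) ↔ (y ∈ Dset hc root g)) ↔ g ≠ s(x,y) := by
  have hxne : x ≠ root := by
    rintro rfl
    rw [par_root] at hp
    exact hadj.ne hp
  subst hp
  by_cases hg : g = s(x, par hc hac root x)
  · have hx : x ∈ Dset hc root s(x, par hc hac root x) :=
      (mem_Dset_iff hc hac root hxne).mpr (Or.inl rfl)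
    have hpx : par hc hac root x ∉ Dset hc root s(x, par hc hac root x) :=
      fun h => par_edge_not_tail hc hac root hxne h
    rw [hg]
    simp [hx, hpx]
  · rw [mem_Dset_iff hc hac root hxne]
    simp only [hg, false_or, ne_eq, not_false_eq_true, iff_true]

lemma adj_Dset (hc : G.Connected) (hac : G.IsAcyclic) (root : V) {g : Sym2 V} {x y : V}
    (hadj : G.Adj x y) :
    ((x ∈ Dset hc root g) ↔ (y ∈ Dset hc root g)) ↔ g ≠ s(x,y) := by
  rcases par_or hc hac root hadj with hp | hp
  · exact adj_Dset_aux hc hac root hadj hp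
  · have h2 := adj_Dset_aux hc hac root (g := g) hadj.symm hp
    rw [show s(y,x) = s(x,y) from Sym2.eq_swap] at h2
    exact ⟨fun hh => h2.mp hh.symm, fun hh => (h2.mpr hh).symm⟩

lemma trail_Dset (hc : G.Connected) (hac : G.IsAcyclic) (root : V) {g : Sym2 V} :
    ∀ {x y : V} (w : G.Walk x y), w.IsTrail →
    (((x ∈ Dset hc root g) ↔ (y ∈ Dset hc root g)) ↔ g ∉ w.edges) := by
  intro x y w
  induction w with
  | nil => simp
  | @cons x x1 y h q ih =>
    intro hw
    have h1 := adj_Dset hc hac root (g := g) h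
    have h2 := ih ((Walk.isTrail_cons _ _).mp hw).1
    have h3 : s(x, x1) ∉ q.edges := ((Walk.isTrail_cons _ _).mp hw).2
    rw [Walk.edges_cons, List.mem_cons]
    have h4 : g = s(x, x1) → g ∉ q.edges := fun hh => hh ▸ h3
    tauto

lemma Dset_sub (hc : G.Connected) (hac : G.IsAcyclic) (root : V) {g : Sym2 V} {c : V}
    (hcne : c ≠ root) (hcD : c ∈ Dset hc root g) :
    Dset hc root s(c, par hc hac root c) ⊆ Dset hc root g := by
  suffices H : ∀ (n : ℕ) (u : V), dep hc root u ≤ n →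
      u ∈ Dset hc root s(c, par hc hac root c) → u ∈ Dset hc root g by
    exact fun u hu => H (dep hc root u) u le_rfl hu
  intro n
  induction n with
  | zero =>
    intro u hdep hu
    have hune : u ≠ root := by rintro rfl; exact root_not_Dset hc hac u hu
    have := dep_par hc hac root hune
    omega
  | succ n ih =>
    intro u hdep hu
    have hune : u ≠ root := by rintro rfl; exact root_not_Dset hc hac u hu
    rcases (mem_Dset_iff hc hac root hune).mp hu with heq | hmem
    · rcases Sym2.eq_iff.mp heq.symm with ⟨h1, h2⟩ | ⟨h1, h2⟩
      · rwa [h1]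
      · exfalso
        have hd1 := dep_par hc hac root hune
        have hd2 := dep_par hc hac root hcne
        rw [← h1] at hd2
        rw [h2] at hd1
        omega
    · exact (mem_Dset_iff hc hac root hune).mpr
        (Or.inr (ih (par hc hac root u) (by have := dep_par hc hac root hune; omega) hmem))

end Tree

section Main

lemma mapLe_edges {G H : SimpleGraph V} (h : G ≤ H) {u w : V} (p : G.Walk u w) :
    (p.mapLe h).edges = p.edges := by
  rw [Walk.mapLe, Walk.edges_map]
  rw [show ⇑(Hom.ofLE h) = id from rfl]
  simp

lemma fund_contra_range {ι : Type*} [Nonempty ι] {E : ι → Finset (Sym2 V)}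
    (hno : ¬ ∃ R : Finset (Sym2 V), IsRainbow E R ∧ IsCycleEdgeSet R)
    (e : ι → Sym2 V) (hinj : Function.Injective e) (hmem : ∀ i, e i ∈ E i)
    {x y : V} (p : (SimpleGraph.fromEdgeSet (Set.range e)).Walk y x) (hp : p.IsPath)
    (i : ι) (hfE : s(x,y) ∈ E i) (hxy : x ≠ y) (hnot : s(x,y) ∉ Set.range e)
    (hi : e i ∉ p.edges) : False := by
  have hsub : ∀ g ∈ p.edges, g ∈ (SimpleGraph.fromEdgeSet (e '' Set.univ)).edgeSet := by
    intro g hg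
    have := p.edges_subset_edgeSet hg
    rwa [Set.image_univ]
  refine fund_contra hno e Set.univ (Set.injOn_of_injective hinj) (fun i _ => hmem i)
    (p.transfer _ hsub) (hp.transfer hsub) i hfE hxy
    (by rwa [Set.image_univ]) (Or.inr ?_)
  rw [Walk.edges_transfer]
  exact hi

/-- Goodness of a rainbow forest. -/
def goodFam {ι : Type*} (E : ι → Finset (Sym2 V)) (e : ι → Sym2 V) : Prop :=
  (∀ i, e i ∈ E i) ∧ Function.Injective e ∧ (fromEdgeSet (Set.range e)).IsAcyclic

/-- The quantity minimized: number of vertices below the first star edge. -/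
noncomputable def kfun {ι : Type*} (v : V) (i₀ : ι) (e : ι → Sym2 V) : ℕ :=
  Set.ncard {u | ∃ w : (fromEdgeSet (Set.range e)).Walk u v, w.IsPath ∧ e i₀ ∈ w.edges}

lemma kfun_eq_Dset {ι : Type*} (v : V) (i₀ : ι) (e : ι → Sym2 V)
    (hconn : (fromEdgeSet (Set.range e)).Connected)
    (hacy : (fromEdgeSet (Set.range e)).IsAcyclic) :
    kfun v i₀ e = (Dset hconn v (e i₀)).ncard := by
  rw [kfun]
  congr 1
  ext u
  constructor
  · rintro ⟨w, hw, hmem⟩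
    rw [tp_unique hconn hacy w hw] at hmem
    exact hmem
  · intro hu
    exact ⟨tp hconn u v, tp_isPath hconn u v, hu⟩

lemma no_reach_del {G : SimpleGraph V} (hconn : G.Connected) (hacy : G.IsAcyclic)
    {x y : V} {g : Sym2 V} (hg : g ∈ (tp hconn y x).edges) {H : SimpleGraph V}
    (hH : H ≤ G) (hgH : g ∉ H.edgeSet) : ¬ H.Reachable x y := by
  intro hreach
  obtain ⟨w⟩ := hreach.symm
  have hq : (w.toPath : H.Walk y x).IsPath := w.toPath.2
  set q : G.Walk y x := (w.toPath : H.Walk y x).mapLe hH with hqdef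
  have hqpath : q.IsPath := hq.mapLe hH
  have heq := tp_unique hconn hacy q hqpath
  rw [← heq, hqdef, mapLe_edges] at hg
  exact hgH ((w.toPath : H.Walk y x).edges_subset_edgeSet hg)

lemma conn_of_good {ι : Type*} [Fintype ι] [Nonempty V] (e : ι → Sym2 V)
    (hinj : Function.Injective e) (hnd : ∀ i, ¬ (e i).IsDiag)
    (hacy : (fromEdgeSet (Set.range e)).IsAcyclic)
    (hcard : Fintype.card V ≤ Fintype.card ι + 1) :
    (fromEdgeSet (Set.range e)).Connected := by
  apply connected_of_acyclic_card hacy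
  have h1 : (fromEdgeSet (Set.range e)).edgeSet = Set.range e := by
    rw [edgeSet_fromEdgeSet]
    ext g
    simp only [Set.mem_diff, Set.mem_setOf_eq]
    exact ⟨fun h => h.1, fun h => ⟨h, by obtain ⟨i, rfl⟩ := h; exact hnd i⟩⟩
  rw [h1, ← Set.image_univ, Set.ncard_image_of_injective _ hinj, Set.ncard_univ,
    Nat.card_eq_fintype_card]
  exact hcard

lemma exchange_step {m : ℕ} (hm : 0 < m) (v : Fin (m+1))
    (E : Fin m → Finset (Sym2 (Fin (m+1))))
    (hno : ¬ ∃ R : Finset (Sym2 (Fin (m+1))), IsRainbow E R ∧ IsCycleEdgeSet R)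
    (e : Fin m → Sym2 (Fin (m+1)))
    (hmem : ∀ i, e i ∈ E i) (hinj : Function.Injective e)
    (hnd : ∀ i, ¬ (e i).IsDiag)
    (hacy : (fromEdgeSet (Set.range e)).IsAcyclic)
    (hconn : (fromEdgeSet (Set.range e)).Connected)
    (hmin : ∀ e', goodFam E e' → kfun v ⟨0,hm⟩ e ≤ kfun v ⟨0,hm⟩ e')
    {j : Fin m} {x y c : Fin (m+1)}
    (hji : j ≠ ⟨0,hm⟩)
    (hcD : c ∈ Dset hconn v (e ⟨0,hm⟩))
    (hejc : e j = s(c, par hconn hacy v c))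
    (hgEj : s(x,y) ∈ E j) (hnr : s(x,y) ∉ Set.range e) (hxy : x ≠ y)
    (hyDj : y ∈ Dset hconn v (e j)) (hxDj : x ∉ Dset hconn v (e j))
    (hxD : x ∉ Dset hconn v (e ⟨0,hm⟩)) : False := by
  classical
  haveI : Nonempty (Fin m) := ⟨⟨0, hm⟩⟩
  have hcne : c ≠ v := by
    intro hcv
    rw [hcv] at hcD
    exact root_not_Dset hconn hacy v hcD
  have hDjD : Dset hconn v (e j) ⊆ Dset hconn v (e ⟨0,hm⟩) := by
    rw [hejc]
    exact Dset_sub hconn hacy v hcne hcD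
  have hcDj : c ∈ Dset hconn v (e j) := by
    rw [hejc]
    exact (mem_Dset_iff hconn hacy v hcne).mpr (Or.inl rfl)
  have hejp : e j ∈ (tp hconn y x).edges := by
    by_contra h4
    exact fund_contra_range hno e hinj hmem (tp hconn y x) (tp_isPath hconn y x) j hgEj
      hxy hnr h4
  set e' := Function.update e j s(x,y) with he'
  have he'j : e' j = s(x,y) := Function.update_self _ _ _
  have he'k : ∀ k, k ≠ j → e' k = e k := fun k hk => Function.update_of_ne hk _ _
  have he'i₀ : e' ⟨0,hm⟩ = e ⟨0,hm⟩ := he'k _ (fun h => hji h.symm)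
  have hejnr : e j ∉ Set.range e' := by
    rintro ⟨k, hk⟩
    by_cases hkj : k = j
    · rw [hkj, he'j] at hk
      exact hnr (hk ▸ ⟨j, rfl⟩)
    · rw [he'k k hkj] at hk
      exact hkj (hinj hk)
  have hrsub : ∀ g, g ∈ Set.range e → g ≠ e j → g ∈ Set.range e' := by
    rintro g ⟨k, hk⟩ hgne
    have hkj : k ≠ j := by
      rintro rfl
      exact hgne hk.symm
    exact ⟨k, by rw [he'k k hkj, hk]⟩
  have he'nd : ∀ k, ¬ (e' k).IsDiag := by
    intro k
    by_cases hkj : k = j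
    · rw [hkj, he'j]
      simpa using hxy
    · rw [he'k k hkj]
      exact hnd k
  -- acyclicity of the exchanged forest
  have hT'ac : (fromEdgeSet (Set.range e')).IsAcyclic := by
    intro u w hw
    by_cases hfw : s(x,y) ∈ w.edges
    · have hrd := (adj_and_reachable_delete_edges_iff_exists_cycle.mpr ⟨u, w, hw, hfw⟩).2
      have hle : (fromEdgeSet (Set.range e') \ fromEdgeSet {s(x,y)}) ≤
          fromEdgeSet (Set.range e) := by
        intro a b hab
        rw [sdiff_adj] at hab
        obtain ⟨hab1, hab2⟩ := hab
        rw [fromEdgeSet_adj] at hab1 ⊢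
        obtain ⟨⟨k, hk⟩, hne⟩ := hab1
        refine ⟨?_, hne⟩
        by_cases hkj : k = j
        · exfalso
          apply hab2
          rw [fromEdgeSet_adj]
          refine ⟨?_, hne⟩
          rw [hkj, he'j] at hk
          rw [← hk]
          rfl
        · rw [he'k k hkj] at hk
          exact ⟨k, hk⟩
      have hgH : e j ∉ (fromEdgeSet (Set.range e') \ fromEdgeSet {s(x,y)}).edgeSet := by
        intro hmem'
        rw [edgeSet_sdiff] at hmem'
        have := hmem'.1
        rw [edgeSet_fromEdgeSet] at this
        exact hejnr this.1
      exact no_reach_del hconn hacy hejp hle hgH hrd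
    · have hsub : ∀ g ∈ w.edges, g ∈ (fromEdgeSet (Set.range e)).edgeSet := by
        intro g hg
        have h2 := w.edges_subset_edgeSet hg
        rw [edgeSet_fromEdgeSet] at h2 ⊢
        obtain ⟨⟨k, hk⟩, hnd'⟩ := h2
        refine ⟨?_, hnd'⟩
        by_cases hkj : k = j
        · exfalso
          rw [hkj, he'j] at hk
          exact hfw (hk ▸ hg)
        · rw [he'k k hkj] at hk
          exact ⟨k, hk⟩
      exact hacy (w.transfer _ hsub) (hw.transfer hsub)
  have hgood' : goodFam E e' := by
    refine ⟨?_, ?_, hT'ac⟩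
    · intro k
      by_cases hkj : k = j
      · rw [hkj, he'j]; exact hgEj
      · rw [he'k k hkj]; exact hmem k
    · intro a b hab
      by_cases haj : a = j <;> by_cases hbj : b = j
      · rw [haj, hbj]
      · rw [haj, he'j, he'k b hbj] at hab
        exact absurd ⟨b, hab.symm⟩ hnr
      · rw [hbj, he'j, he'k a haj] at hab
        exact absurd ⟨a, hab⟩ hnr
      · rw [he'k a haj, he'k b hbj] at hab
        exact hinj hab
  have hconn' : (fromEdgeSet (Set.range e')).Connected := by
    apply conn_of_good e' hgood'.2.1 he'nd hT'ac
    simp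
  -- transfer lemma for walks avoiding e j
  have htrans : ∀ {u w : Fin (m+1)} (p : (fromEdgeSet (Set.range e)).Walk u w),
      e j ∉ p.edges → ∀ g ∈ p.edges, g ∈ (fromEdgeSet (Set.range e')).edgeSet := by
    intro u w p hpej g hg
    have h2 := p.edges_subset_edgeSet hg
    rw [edgeSet_fromEdgeSet] at h2 ⊢
    refine ⟨hrsub g h2.1 (fun hgej => hpej (hgej ▸ hg)), h2.2⟩
  -- claim A
  have hA : ∀ u, u ∉ Dset hconn v (e j) →
      (u ∈ Dset hconn' v (e' ⟨0,hm⟩) ↔ u ∈ Dset hconn v (e ⟨0,hm⟩)) := by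
    intro u hu
    have hpej : e j ∉ (tp hconn u v).edges := hu
    have hsubw := htrans (tp hconn u v) hpej
    have hqpath : ((tp hconn u v).transfer _ hsubw).IsPath :=
      (tp_isPath hconn u v).transfer hsubw
    have hquniq := tp_unique hconn' hT'ac _ hqpath
    have hedges : (tp hconn' u v).edges = (tp hconn u v).edges := by
      rw [← hquniq, Walk.edges_transfer]
    show e' ⟨0,hm⟩ ∈ (tp hconn' u v).edges ↔ e ⟨0,hm⟩ ∈ (tp hconn u v).edges
    rw [he'i₀, hedges]
  -- claim B
  have hB : ∀ u, u ∈ Dset hconn v (e j) → u ∉ Dset hconn' v (e' ⟨0,hm⟩) := by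
    intro u hu
    have huD : u ∈ Dset hconn v (e ⟨0,hm⟩) := hDjD hu
    have hw1t : (tp hconn u y).IsTrail := (tp_isPath hconn u y).isTrail
    have hw3t : (tp hconn x v).IsTrail := (tp_isPath hconn x v).isTrail
    have hw1ej : e j ∉ (tp hconn u y).edges :=
      (trail_Dset hconn hacy v (tp hconn u y) hw1t).mp (iff_of_true hu hyDj)
    have hw1e0 : e ⟨0,hm⟩ ∉ (tp hconn u y).edges :=
      (trail_Dset hconn hacy v (tp hconn u y) hw1t).mp (iff_of_true huD (hDjD hyDj))
    have hw3ej : e j ∉ (tp hconn x v).edges :=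
      (trail_Dset hconn hacy v (tp hconn x v) hw3t).mp
        (iff_of_false hxDj (root_not_Dset hconn hacy v))
    have hw3e0 : e ⟨0,hm⟩ ∉ (tp hconn x v).edges :=
      (trail_Dset hconn hacy v (tp hconn x v) hw3t).mp
        (iff_of_false hxD (root_not_Dset hconn hacy v))
    have hsub1 := htrans (tp hconn u y) hw1ej
    have hsub3 := htrans (tp hconn x v) hw3ej
    have hadj' : (fromEdgeSet (Set.range e')).Adj y x := by
      rw [fromEdgeSet_adj]
      exact ⟨⟨j, he'j.trans Sym2.eq_swap⟩, hxy.symm⟩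
    set W := ((tp hconn u y).transfer _ hsub1).append
      (Walk.cons hadj' ((tp hconn x v).transfer _ hsub3)) with hW
    have hWe0 : e ⟨0,hm⟩ ∉ W.edges := by
      rw [hW, Walk.edges_append, Walk.edges_cons]
      intro hmem'
      rcases List.mem_append.mp hmem' with h' | h'
      · rw [Walk.edges_transfer] at h'
        exact hw1e0 h'
      · rcases List.mem_cons.mp h' with h'' | h''
        · apply hnr
          rw [show (s(x,y) : Sym2 (Fin (m+1))) = s(y,x) from Sym2.eq_swap, ← h'']
          exact ⟨_, rfl⟩
        · rw [Walk.edges_transfer] at h''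
          exact hw3e0 h''
    intro huD'
    have hqq := tp_unique hconn' hT'ac (W.toPath : (fromEdgeSet (Set.range e')).Walk u v) (W.toPath).2
    have huD'' : e' ⟨0,hm⟩ ∈ (tp hconn' u v).edges := huD'
    rw [← hqq, he'i₀] at huD''
    exact hWe0 (Walk.edges_toPath_subset W huD'')
  have hsubD : Dset hconn' v (e' ⟨0,hm⟩) ⊆ Dset hconn v (e ⟨0,hm⟩) \ {c} := by
    intro u hu
    by_cases huj : u ∈ Dset hconn v (e j)
    · exact absurd hu (hB u huj)
    · refine ⟨(hA u huj).mp hu, ?_⟩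
      intro hc'
      rw [Set.mem_singleton_iff] at hc'
      exact huj (hc' ▸ hcDj)
  have hlt : (Dset hconn' v (e' ⟨0,hm⟩)).ncard < (Dset hconn v (e ⟨0,hm⟩)).ncard := by
    have h1 : (Dset hconn' v (e' ⟨0,hm⟩)).ncard ≤ (Dset hconn v (e ⟨0,hm⟩) \ {c}).ncard :=
      Set.ncard_le_ncard hsubD (Set.toFinite _)
    have h2 := Set.ncard_diff_singleton_of_mem hcD
    have h3 : 0 < (Dset hconn v (e ⟨0,hm⟩)).ncard :=
      (Set.ncard_pos (Set.toFinite _)).mpr ⟨c, hcD⟩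
    omega
  have hfin := hmin e' hgood'
  rw [kfun_eq_Dset v _ e hconn hacy, kfun_eq_Dset v _ e' hconn' hT'ac] at hfin
  omega

lemma walk_prop (D : Set V) : ∀ {x y : V} (w : (⊤ : SimpleGraph V).Walk x y),
    (∀ g ∈ w.edges, ∀ a b : V, g = s(a,b) → (a ∈ D ↔ b ∈ D)) → x ∈ D →
    ∀ u ∈ w.support, u ∈ D := by
  intro x y w
  induction w with
  | nil =>
    intro _ hx u hu
    rw [Walk.support_nil, List.mem_singleton] at hu
    rwa [hu]
  | @cons x x1 y h q ih =>
    intro hmix hx u hu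
    have hx1 : x1 ∈ D :=
      (hmix s(x,x1) (by rw [Walk.edges_cons]; exact List.mem_cons_self) x x1 rfl).mp hx
    rw [Walk.support_cons, List.mem_cons] at hu
    rcases hu with rfl | hu
    · exact hx
    · exact ih (fun g hg => hmix g (by rw [Walk.edges_cons]; exact List.mem_cons_of_mem _ hg))
        hx1 u hu

lemma mem_support_rotate {G : SimpleGraph V} {x0 u c : V} (w : G.Walk x0 x0)
    (hnil : w ≠ Walk.nil) (hc : c ∈ w.support) (hu : u ∈ w.support) :
    u ∈ (w.rotate c hc).support := by
  have htail : u ∈ w.support.tail := by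
    cases w with
    | nil => exact absurd rfl hnil
    | cons h q =>
      rw [Walk.support_cons, List.tail_cons]
      rw [Walk.support_cons, List.mem_cons] at hu
      rcases hu with rfl | hu
      · exact q.end_mem_support
      · exact hu
  have h2 := (Walk.support_rotate w c hc).mem_iff.mpr htail
  rw [(w.rotate c hc).support_eq_cons]
  exact List.mem_cons_of_mem _ h2

end Main

end StarAux

open SimpleGraph Function Finset StarAux in
/-- If each member of a family of `m` subgraphs of `K_{m+1}` is a star centered at `v`
or a cycle, the family has no rainbow cycle, every star is edge-disjoint from the other
members, and the first member is a star, then some `0 < ℓ < m` cycles of the family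
avoid `v` and their union with the first member has at most `ℓ + 2` vertices. -/
theorem star_and_cycles_small_union (m : ℕ) (hm : 0 < m) (v : Fin (m + 1))
    (E : Fin m → Finset (Sym2 (Fin (m + 1))))
    (hE : ∀ i, IsStar v (E i) ∨ IsCycleEdgeSet (E i))
    (hno : ¬ ∃ R : Finset (Sym2 (Fin (m + 1))), IsRainbow E R ∧ IsCycleEdgeSet R)
    (hdisj : ∀ i, IsStar v (E i) → ∀ j, j ≠ i → Disjoint (E i) (E j))
    (h1 : IsStar v (E ⟨0, hm⟩)) :
    ∃ ℓ : ℕ, 0 < ℓ ∧ ℓ < m ∧ ∃ J : Finset (Fin m), J.card = ℓ ∧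
      (∀ j ∈ J, IsCycleEdgeSet (E j) ∧ v ∉ edgeVerts (↑(E j) : Set (Sym2 (Fin (m + 1))))) ∧
      (edgeVerts ((↑(E ⟨0, hm⟩) : Set (Sym2 (Fin (m + 1)))) ∪
        ⋃ j ∈ J, (↑(E j) : Set (Sym2 (Fin (m + 1)))))).ncard ≤ ℓ + 2 := by
  classical
  haveI : Nonempty (Fin m) := ⟨⟨0, hm⟩⟩
  have hnd_all : ∀ i, ∀ g ∈ E i, ¬ g.IsDiag := by
    intro i g hg
    rcases hE i with hs | hc
    · exact (hs.2 g hg).1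
    · exact cycle_edges_not_diag hc g hg
  obtain ⟨e0, he0mem, he0inj, he0ac⟩ := exists_good v hE hno hdisj
  obtain ⟨e, heP, hmin'⟩ := Finset.exists_min_image
    (Finset.univ.filter (goodFam E)) (kfun v ⟨0,hm⟩)
    ⟨e0, Finset.mem_filter.mpr ⟨Finset.mem_univ _, ⟨he0mem, he0inj, he0ac⟩⟩⟩
  obtain ⟨hmem, hinj, hacy⟩ := (Finset.mem_filter.mp heP).2
  have hmin : ∀ e', goodFam E e' → kfun v ⟨0,hm⟩ e ≤ kfun v ⟨0,hm⟩ e' := fun e' h =>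
    hmin' e' (Finset.mem_filter.mpr ⟨Finset.mem_univ _, h⟩)
  have hnd : ∀ i, ¬ (e i).IsDiag := fun i => hnd_all i (e i) (hmem i)
  have hconn : (SimpleGraph.fromEdgeSet (Set.range e)).Connected := by
    apply conn_of_good e hinj hnd hacy
    simp
  have hvD : v ∉ Dset hconn v (e ⟨0,hm⟩) := root_not_Dset hconn hacy v
  have hstar_edge : ∀ g ∈ E ⟨0,hm⟩, ∃ b, g = s(v, b) ∧ b ≠ v := by
    intro g hg
    obtain ⟨hnd', hv⟩ := h1.2 g hg
    obtain ⟨b, hb⟩ := Sym2.mem_iff_exists.mp hv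
    refine ⟨b, hb, ?_⟩
    rintro rfl
    apply hnd'
    rw [hb]
    simp [Sym2.isDiag_iff_proj_eq]
  obtain ⟨a, hea, hav⟩ := hstar_edge (e ⟨0,hm⟩) (hmem _)
  have hstar_nr : ∀ g ∈ E ⟨0,hm⟩, g ≠ e ⟨0,hm⟩ → g ∉ Set.range e := by
    rintro g hg hgne ⟨l, hl⟩
    have hlne : l ≠ ⟨0,hm⟩ := by rintro rfl; exact hgne hl.symm
    exact Finset.disjoint_left.mp (hdisj _ h1 l hlne) hg (hl ▸ hmem l)
  have hadjav : (SimpleGraph.fromEdgeSet (Set.range e)).Adj a v := by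
    rw [fromEdgeSet_adj]
    exact ⟨⟨⟨0,hm⟩, by rw [hea, Sym2.eq_swap]⟩, hav⟩
  have havpath : (Walk.cons hadjav Walk.nil :
      (SimpleGraph.fromEdgeSet (Set.range e)).Walk a v).IsPath := by simp [hav]
  have havuniq := tp_unique hconn hacy _ havpath
  have haD : a ∈ Dset hconn v (e ⟨0,hm⟩) := by
    show e ⟨0,hm⟩ ∈ (tp hconn a v).edges
    rw [← havuniq, Walk.edges_cons, hea]
    exact List.mem_singleton.mpr Sym2.eq_swap
  have hpara : par hconn hacy v a = v := by
    have hsupeq := congrArg Walk.support havuniq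
    rw [Walk.support_cons, Walk.support_nil, tp_support hconn hacy v hav] at hsupeq
    have h2 : [v] = (tp hconn (par hconn hacy v a) v).support :=
      List.tail_eq_of_cons_eq hsupeq
    have h3 := (tp hconn (par hconn hacy v a) v).support_eq_cons
    rw [← h2] at h3
    exact (List.head_eq_of_cons_eq h3).symm
  have hleafD : ∀ g ∈ E ⟨0,hm⟩, ∀ b, g = s(v,b) → b ∈ Dset hconn v (e ⟨0,hm⟩) := by
    intro g hg b hgb
    by_cases hge : g = e ⟨0,hm⟩
    · have heq : s(v,b) = s(v,a) := by rw [← hgb, hge, hea]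
      rcases Sym2.eq_iff.mp heq with ⟨-, rfl⟩ | ⟨hv1, hv2⟩
      · exact haD
      · exact absurd hv1.symm hav
    · have hbv : b ≠ v := by
        rintro rfl
        apply hnd_all _ g hg
        rw [hgb]
        simp [Sym2.isDiag_iff_proj_eq]
      by_contra hbD
      refine fund_contra_range hno e hinj hmem (tp hconn b v) (tp_isPath hconn b v)
        ⟨0,hm⟩ ?_ ?_ ?_ hbD
      · rw [← hgb]; exact hg
      · exact fun h => hbv h.symm
      · rw [← hgb]; exact hstar_nr g hg hge
  obtain ⟨g2, hg2mem, hg2ne⟩ : ∃ g ∈ E ⟨0,hm⟩, g ≠ e ⟨0,hm⟩ := by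
    obtain ⟨g2, hg2, hne⟩ := Finset.exists_mem_ne (s := E ⟨0,hm⟩)
      (by have := h1.1; omega) (e ⟨0,hm⟩)
    exact ⟨g2, hg2, hne⟩
  obtain ⟨b2, heb2, hb2v⟩ := hstar_edge g2 hg2mem
  have hb2D : b2 ∈ Dset hconn v (e ⟨0,hm⟩) := hleafD g2 hg2mem b2 heb2
  have hb2a : b2 ≠ a := by
    rintro rfl
    exact hg2ne (by rw [heb2, ← hea])
  set Dfin : Finset (Fin (m+1)) :=
    Finset.univ.filter (· ∈ Dset hconn v (e ⟨0,hm⟩)) with hDfin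
  have hmemDfin : ∀ u, u ∈ Dfin ↔ u ∈ Dset hconn v (e ⟨0,hm⟩) := by
    intro u; simp [hDfin]
  set J : Finset (Fin m) :=
    Finset.univ.filter (fun j => ∀ u ∈ e j, u ∈ Dset hconn v (e ⟨0,hm⟩)) with hJdef
  have hJmem : ∀ j, j ∈ J ↔ ∀ u ∈ e j, u ∈ Dset hconn v (e ⟨0,hm⟩) := by
    intro j; simp [hJdef]
  have hi0J : (⟨0,hm⟩ : Fin m) ∉ J := by
    intro hj
    apply hvD
    exact (hJmem _).mp hj v (by rw [hea]; exact Sym2.mem_mk_left _ _)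
  have hJc : ∀ j ∈ J, ∃ c, c ∈ Dset hconn v (e ⟨0,hm⟩) ∧ c ≠ v ∧ c ≠ a ∧
      e j = s(c, par hconn hacy v c) := by
    intro j hj
    have hcnea : ∀ cc, e j = s(cc, par hconn hacy v cc) → cc ≠ a := by
      intro cc hejcc hcca
      subst hcca
      rw [hpara] at hejcc
      apply hvD
      exact (hJmem j).mp hj v (by rw [hejcc]; exact Sym2.mem_mk_right _ _)
    obtain ⟨xx, yy, hexy, hxyne⟩ := edge_repr (hnd j)
    have hxxD : xx ∈ Dset hconn v (e ⟨0,hm⟩) :=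
      (hJmem j).mp hj xx (by rw [hexy]; exact Sym2.mem_mk_left _ _)
    have hyyD : yy ∈ Dset hconn v (e ⟨0,hm⟩) :=
      (hJmem j).mp hj yy (by rw [hexy]; exact Sym2.mem_mk_right _ _)
    have hxxv : xx ≠ v := by rintro rfl; exact hvD hxxD
    have hyyv : yy ≠ v := by rintro rfl; exact hvD hyyD
    have hadjxy : (SimpleGraph.fromEdgeSet (Set.range e)).Adj xx yy := by
      rw [fromEdgeSet_adj]
      exact ⟨⟨j, hexy⟩, hxyne⟩
    rcases par_or hconn hacy v hadjxy with hp | hp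
    · have h4 : e j = s(xx, par hconn hacy v xx) := by rw [hp, ← hexy]
      exact ⟨xx, hxxD, hxxv, hcnea xx h4, h4⟩
    · have h4 : e j = s(yy, par hconn hacy v yy) := by
        rw [hp, ← Sym2.eq_swap, ← hexy]
      exact ⟨yy, hyyD, hyyv, hcnea yy h4, h4⟩
  have hF1 : ∀ (jj : Fin m) (xx yy : Fin (m+1)), s(xx,yy) ∈ E jj →
      s(xx,yy) ∉ Set.range e → xx ≠ yy →
      ¬((xx ∈ Dset hconn v (e jj)) ↔ (yy ∈ Dset hconn v (e jj))) := by
    intro jj xx yy hEg hnr hne hiff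
    have hejp : e jj ∈ (tp hconn yy xx).edges := by
      by_contra h4
      exact fund_contra_range hno e hinj hmem (tp hconn yy xx) (tp_isPath hconn yy xx)
        jj hEg hne hnr h4
    exact ((trail_Dset hconn hacy v (tp hconn yy xx)
      (tp_isPath hconn yy xx).isTrail).mp hiff.symm) hejp
  have hnontree : ∀ j ∈ J, ∀ xx yy : Fin (m+1), s(xx,yy) ∈ E j →
      s(xx,yy) ∉ Set.range e → xx ≠ yy →
      (xx ∈ Dset hconn v (e ⟨0,hm⟩) ∧ yy ∈ Dset hconn v (e ⟨0,hm⟩)) := by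
    intro j hj xx yy hg hnr hne
    obtain ⟨c, hcD', hcv, hca, hejc⟩ := hJc j hj
    have hji : j ≠ ⟨0,hm⟩ := by rintro rfl; exact hi0J hj
    have hDjD : Dset hconn v (e j) ⊆ Dset hconn v (e ⟨0,hm⟩) := by
      rw [hejc]
      exact Dset_sub hconn hacy v hcv hcD'
    have hxor := hF1 j xx yy hg hnr hne
    by_cases hxx : xx ∈ Dset hconn v (e j)
    · have hyy : yy ∉ Dset hconn v (e j) := fun h => hxor (iff_of_true hxx h)
      refine ⟨hDjD hxx, ?_⟩
      by_contra hyyD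
      exact exchange_step hm v E hno e hmem hinj hnd hacy hconn hmin hji hcD' hejc
        (by rw [Sym2.eq_swap]; exact hg) (by rw [Sym2.eq_swap]; exact hnr) hne.symm
        hxx hyy hyyD
    · have hyy : yy ∈ Dset hconn v (e j) := by
        by_contra h
        exact hxor (iff_of_false hxx h)
      refine ⟨?_, hDjD hyy⟩
      by_contra hxxD
      exact exchange_step hm v E hno e hmem hinj hnd hacy hconn hmin hji hcD' hejc
        hg hnr hne hyy hxx hxxD
  have hEjD : ∀ j ∈ J, ∀ g ∈ E j, ∀ aa bb : Fin (m+1), g = s(aa,bb) →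
      (aa ∈ Dset hconn v (e ⟨0,hm⟩) ↔ bb ∈ Dset hconn v (e ⟨0,hm⟩)) := by
    intro j hj g hg aa bb hgab
    have hji : j ≠ ⟨0,hm⟩ := by rintro rfl; exact hi0J hj
    have hnd' : ¬ g.IsDiag := hnd_all j g hg
    have hne : aa ≠ bb := by
      rw [hgab] at hnd'
      simpa [Sym2.isDiag_iff_proj_eq] using hnd'
    by_cases hr : g ∈ Set.range e
    · by_contra hmix
      have hadj : (SimpleGraph.fromEdgeSet (Set.range e)).Adj aa bb := by
        rw [fromEdgeSet_adj]
        exact ⟨hgab ▸ hr, hne⟩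
      have hQ := adj_Dset hconn hacy v (g := e ⟨0,hm⟩) hadj
      have he0g : e ⟨0,hm⟩ = s(aa,bb) := by
        by_contra hne2
        exact hmix (hQ.mpr hne2)
      apply Finset.disjoint_left.mp (hdisj _ h1 j hji) (hmem ⟨0,hm⟩)
      rw [he0g, ← hgab]
      exact hg
    · have hres := hnontree j hj aa bb (hgab ▸ hg) (hgab ▸ hr) hne
      exact iff_of_true hres.1 hres.2
  have hJcyc : ∀ j ∈ J, IsCycleEdgeSet (E j) := by
    intro j hj
    rcases hE j with hs | hc
    · exfalso
      exact hvD ((hJmem j).mp hj v ((hs.2 (e j) (hmem j)).2))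
    · exact hc
  have hEjverts : ∀ j ∈ J, ∀ u, u ∈ edgeVerts (↑(E j) : Set (Sym2 (Fin (m+1)))) →
      u ∈ Dset hconn v (e ⟨0,hm⟩) := by
    intro j hj u hu
    obtain ⟨g, hg, hug⟩ := hu
    rw [Finset.mem_coe] at hg
    obtain ⟨x0, w, hw, hedges⟩ := hJcyc j hj
    obtain ⟨c, hcD', hcv, hca, hejc⟩ := hJc j hj
    have hejE : e j ∈ w.edges := by
      apply List.mem_toFinset.mp
      rw [hedges]
      exact hmem j
    have hcsup : c ∈ w.support := by
      rw [hejc] at hejE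
      exact w.fst_mem_support_of_mem_edges hejE
    have hgw : g ∈ w.edges := by
      apply List.mem_toFinset.mp
      rw [hedges]
      exact hg
    have husup : u ∈ w.support := by
      obtain ⟨ga, gb, hgab, -⟩ := edge_repr (hnd_all j g hg)
      rw [hgab] at hgw hug
      rcases Sym2.mem_iff.mp hug with rfl | rfl
      · exact w.fst_mem_support_of_mem_edges hgw
      · exact w.snd_mem_support_of_mem_edges hgw
    have hedges' : ∀ g', g' ∈ (w.rotate c hcsup).edges ↔ g' ∈ w.edges :=
      fun g' => (w.rotate_edges c hcsup).mem_iff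
    exact walk_prop (Dset hconn v (e ⟨0,hm⟩)) (w.rotate c hcsup)
      (fun g' hg' aa bb hab => hEjD j hj g'
        (by rw [← hedges]; exact List.mem_toFinset.mpr ((hedges' g').mp hg')) aa bb hab)
      hcD' u (mem_support_rotate w hw.ne_nil hcsup husup)
  have haDfin : a ∈ Dfin := (hmemDfin a).mpr haD
  have hb2Dfin : b2 ∈ Dfin := (hmemDfin b2).mpr hb2D
  have hcardJ : J.card = (Dfin.erase a).card := by
    apply Finset.card_bij (fun j hj => (hJc j hj).choose)
    · intro j hj
      obtain ⟨h1', h2', h3', h4'⟩ := (hJc j hj).choose_spec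
      rw [Finset.mem_erase]
      exact ⟨h3', (hmemDfin _).mpr h1'⟩
    · intro j1 hj1 j2 hj2 heq
      obtain ⟨-, -, -, h41⟩ := (hJc j1 hj1).choose_spec
      obtain ⟨-, -, -, h42⟩ := (hJc j2 hj2).choose_spec
      apply hinj
      rw [h41, h42, heq]
    · intro u hu
      rw [Finset.mem_erase] at hu
      obtain ⟨hua, huDf⟩ := hu
      rw [hmemDfin] at huDf
      have huv : u ≠ v := by rintro rfl; exact hvD huDf
      have hadj := par_adj hconn hacy v huv
      rw [fromEdgeSet_adj] at hadj
      obtain ⟨k, hk⟩ := hadj.1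
      have hparD : par hconn hacy v u ∈ Dset hconn v (e ⟨0,hm⟩) := by
        rcases (mem_Dset_iff hconn hacy v huv).mp huDf with heq0 | hp
        · exfalso
          rw [hea] at heq0
          rcases Sym2.eq_iff.mp heq0 with ⟨h1', h2'⟩ | ⟨h1', h2'⟩
          · exact huv h1'.symm
          · exact hua h2'.symm
        · exact hp
      have hkJ : k ∈ J := by
        rw [hJmem]
        intro w' hw'
        rw [hk] at hw'
        rcases Sym2.mem_iff.mp hw' with rfl | rfl
        · exact huDf
        · exact hparD
      refine ⟨k, hkJ, ?_⟩
      obtain ⟨hc1, hc2, hc3, hc4⟩ := (hJc k hkJ).choose_spec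
      have hc5 := hc4.symm.trans hk
      rcases Sym2.eq_iff.mp hc5 with ⟨h1', h2'⟩ | ⟨h1', h2'⟩
      · exact h1'
      · exfalso
        have hd1 := dep_par hconn hacy v huv
        have hd2 := dep_par hconn hacy v hc2
        rw [h2'] at hd2
        rw [← h1'] at hd1
        omega
  have hDcard2 : Dfin.card = (Dfin.erase a).card + 1 :=
    (Finset.card_erase_add_one haDfin).symm
  have hD2 : 1 < Dfin.card :=
    Finset.one_lt_card.mpr ⟨a, haDfin, b2, hb2Dfin, fun h => hb2a h.symm⟩
  have hDle : Dfin.card ≤ m := by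
    have hsubv : Dfin ⊆ Finset.univ.erase v := by
      intro u hu
      rw [Finset.mem_erase]
      refine ⟨?_, Finset.mem_univ _⟩
      rintro rfl
      exact hvD ((hmemDfin _).mp hu)
    calc Dfin.card ≤ (Finset.univ.erase v).card := Finset.card_le_card hsubv
    _ = m := by
      rw [Finset.card_erase_of_mem (Finset.mem_univ v), Finset.card_univ, Fintype.card_fin]
      omega
  refine ⟨J.card, by omega, by omega, J, rfl, ?_, ?_⟩
  · intro j hj
    exact ⟨hJcyc j hj, fun hv' => hvD (hEjverts j hj v hv')⟩
  · have hsub : edgeVerts ((↑(E ⟨0,hm⟩) : Set (Sym2 (Fin (m+1)))) ∪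
        ⋃ j ∈ J, (↑(E j) : Set (Sym2 (Fin (m+1))))) ⊆
        ((insert v Dfin : Finset (Fin (m+1))) : Set (Fin (m+1))) := by
      intro u hu
      obtain ⟨g, hg, hug⟩ := hu
      rw [Finset.coe_insert, Set.mem_insert_iff]
      simp only [Set.mem_union, Set.mem_iUnion, Finset.mem_coe] at hg
      rcases hg with hg | ⟨j, hj, hg⟩
      · obtain ⟨b, hgb, hbv⟩ := hstar_edge g hg
        have hbD := hleafD g hg b hgb
        rw [hgb] at hug
        rcases Sym2.mem_iff.mp hug with rfl | rfl
        · exact Or.inl rfl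
        · exact Or.inr ((hmemDfin u).mpr hbD)
      · exact Or.inr ((hmemDfin u).mpr (hEjverts j hj u ⟨g, hg, hug⟩))
    calc (edgeVerts ((↑(E ⟨0,hm⟩) : Set (Sym2 (Fin (m+1)))) ∪
        ⋃ j ∈ J, (↑(E j) : Set (Sym2 (Fin (m+1)))))).ncard
        ≤ (((insert v Dfin : Finset (Fin (m+1))) : Set (Fin (m+1)))).ncard :=
          Set.ncard_le_ncard hsub (Set.toFinite _)
    _ = (insert v Dfin).card := Set.ncard_coe_finset _
    _ = Dfin.card + 1 := Finset.card_insert_of_notMem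
        (fun h => hvD ((hmemDfin v).mp h))
    _ ≤ J.card + 2 := by omega
end

section
/- Let ℰ be a family of n ≥ 1 pairwise edge-disjoint nonempty subgraphs of K_{n+1}. If ℰ has no rainbow cycle, then ℰ has a monochromatic cut: a partition of the vertex set of ⋃ℰ into two parts V₁, V₂ such that exactly one member of ℰ contains an edge from V₁ to V₂. -/
namespace MonoCutProof
set_option linter.unusedSectionVars false
set_option linter.unusedVariables false

open SimpleGraph Finset

open scoped Classical

variable {V : Type*} [Fintype V] [DecidableEq V]

/-- The simple graph determined by a finite set of edges. -/
def gr (S : Finset (Sym2 V)) : SimpleGraph V := SimpleGraph.fromEdgeSet (↑S)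

lemma gr_adj {S : Finset (Sym2 V)} {x y : V} : (gr S).Adj x y ↔ s(x,y) ∈ S ∧ x ≠ y := by
  simp [gr]

lemma gr_mono {S T : Finset (Sym2 V)} (h : S ⊆ T) : gr S ≤ gr T := by
  intro x y hxy; rw [gr_adj] at *; exact ⟨h hxy.1, hxy.2⟩

lemma gr_edge_mem {S : Finset (Sym2 V)} {e : Sym2 V} {x y : V} (p : (gr S).Walk x y)
    (he : e ∈ p.edges) : e ∈ S := by
  have := p.edges_subset_edgeSet he
  rw [gr, edgeSet_fromEdgeSet] at this
  exact this.1

lemma sym2_decomp (e : Sym2 V) : ∃ a b, e = s(a, b) := by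
  induction e using Sym2.ind with | _ a b => exact ⟨a, b, rfl⟩

lemma sym2_mem_decomp {e : Sym2 V} {a : V} (ha : a ∈ e) : ∃ b, e = s(a, b) := by
  obtain ⟨x, y, rfl⟩ := sym2_decomp e
  rcases Sym2.mem_iff.mp ha with rfl | rfl
  · exact ⟨y, rfl⟩
  · exact ⟨x, Sym2.eq_swap⟩

lemma reach_of_mem_support {G : SimpleGraph V} {x y t : V} (p : G.Walk x y) (ht : t ∈ p.support) :
    G.Reachable x t := ⟨p.takeUntil t ht⟩

/-- All support vertices of a walk lie in the reachability class of the start. -/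
lemma support_reach {G : SimpleGraph V} {x y : V} (p : G.Walk x y) :
    ∀ t ∈ p.support, G.Reachable x t := fun t ht => reach_of_mem_support p ht

/-- A cycle obtained by closing up a path through an outside vertex. -/
lemma glue_isCycle {G : SimpleGraph V} {x₁ x₂ y : V} (P : G.Walk x₁ x₂) (hP : P.IsPath)
    (hx : x₁ ≠ x₂) (hy : y ∉ P.support) (h1 : G.Adj y x₁) (h2 : G.Adj x₂ y) :
    (SimpleGraph.Walk.cons h1 (P.concat h2)).IsCycle := by
  rw [SimpleGraph.Walk.cons_isCycle_iff]
  constructor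
  · rw [SimpleGraph.Walk.isPath_def, SimpleGraph.Walk.support_concat]
    rw [SimpleGraph.Walk.isPath_def] at hP
    exact List.Nodup.append hP (List.nodup_singleton y)
      (by intro t ht hty; rw [List.mem_singleton] at hty; subst hty; exact hy ht)
  · rw [SimpleGraph.Walk.edges_concat]
    simp only [List.concat_eq_append, List.mem_append, List.mem_singleton]
    rintro (hmem | heq)
    · exact hy (SimpleGraph.Walk.fst_mem_support_of_mem_edges P hmem)
    · rw [Sym2.eq_iff] at heq
      rcases heq with ⟨h3, h4⟩ | ⟨h3, h4⟩
      · exact h1.ne h4.symm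
      · exact hx h4

/-- A cycle obtained by joining two vertex-disjoint paths by two edges. -/
lemma glue2_isCycle {G : SimpleGraph V} {y₁ y₂ x₂ x₁ : V} (P : G.Walk y₁ y₂) (Q : G.Walk x₂ x₁)
    (hP : P.IsPath) (hQ : Q.IsPath) (hd : ∀ v ∈ P.support, v ∉ Q.support)
    (hne : y₁ ≠ y₂ ∨ x₁ ≠ x₂)
    (h1 : G.Adj x₁ y₁) (h2 : G.Adj y₂ x₂) :
    (SimpleGraph.Walk.cons h1 (P.append (SimpleGraph.Walk.cons h2 Q))).IsCycle := by
  have hinner : (P.append (SimpleGraph.Walk.cons h2 Q)).IsPath := by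
    rw [SimpleGraph.Walk.isPath_def, SimpleGraph.Walk.support_append]
    have : (SimpleGraph.Walk.cons h2 Q).support.tail = Q.support := by
      simp [SimpleGraph.Walk.support_cons]
    rw [this]
    rw [SimpleGraph.Walk.isPath_def] at hP hQ
    exact List.Nodup.append hP hQ (fun t ht ht' => hd t ht ht')
  rw [SimpleGraph.Walk.cons_isCycle_iff]
  refine ⟨hinner, ?_⟩
  rw [SimpleGraph.Walk.edges_append, SimpleGraph.Walk.edges_cons]
  simp only [List.mem_append, List.mem_cons]
  rintro (hmem | heq | hmem)
  · have := SimpleGraph.Walk.fst_mem_support_of_mem_edges P hmem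
    exact hd x₁ this Q.end_mem_support
  · rw [Sym2.eq_iff] at heq
    rcases heq with ⟨h3, h4⟩ | ⟨h3, h4⟩
    · exact hd y₁ P.start_mem_support (by rw [h4]; exact Q.start_mem_support)
    · exact hne.elim (fun h => h h4) (fun h => h h3)
  · have h5 := SimpleGraph.Walk.snd_mem_support_of_mem_edges Q hmem
    exact hd y₁ P.start_mem_support h5

/-- Consuming the no-rainbow-cycle hypothesis. -/
lemma no_rainbow_cycle_aux {ι W : Type*} [DecidableEq W] {E : ι → Finset (Sym2 W)}
    (hno : ¬ ∃ R : Finset (Sym2 W), IsRainbow E R ∧ IsCycleEdgeSet R)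
    {v : W} (w : (⊤ : SimpleGraph W).Walk v v) (hw : w.IsCycle)
    (col : Sym2 W → ι) (hcol : ∀ e ∈ w.edges, e ∈ E (col e))
    (hinj : ∀ e ∈ w.edges, ∀ f ∈ w.edges, col e = col f → e = f) : False := by
  refine hno ⟨w.edges.toFinset, ⟨col, ?_, ?_⟩, v, w, hw, rfl⟩
  · intro e he f hf hef
    rw [List.coe_toFinset] at he hf
    exact hinj e he f hf hef
  · intro e he
    rw [List.mem_toFinset] at he
    exact hcol e he

lemma edges_mapLe {G G' : SimpleGraph V} (h : G ≤ G') {u v : V} (p : G.Walk u v) :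
    (p.mapLe h).edges = p.edges := by
  have hid : ⇑(SimpleGraph.Hom.ofLE h) = id := rfl
  rw [SimpleGraph.Walk.mapLe, SimpleGraph.Walk.edges_map, hid, Sym2.map_id, List.map_id]

lemma support_mapLe {G G' : SimpleGraph V} (h : G ≤ G') {u v : V} (p : G.Walk u v) :
    (p.mapLe h).support = p.support := by
  have hid : ⇑(SimpleGraph.Hom.ofLE h) = id := rfl
  rw [SimpleGraph.Walk.mapLe, SimpleGraph.Walk.support_map, hid, List.map_id]

/-- An edge-separated endpoint pair can't be re-connected without a cycle. -/
lemma no_reach_erase {S : Finset (Sym2 V)} (ha : (gr S).IsAcyclic) {e : Sym2 V} (he : e ∈ S)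
    {a b : V} (hab : e = s(a,b)) (hne : a ≠ b) : ¬ (gr (S.erase e)).Reachable a b := by
  intro ⟨p0⟩
  have hP : ((p0.toPath : (gr (S.erase e)).Walk a b).mapLe
      (gr_mono (Finset.erase_subset _ _))).IsPath := (p0.toPath.2).mapLe _
  set P := ((p0.toPath : (gr (S.erase e)).Walk a b).mapLe (gr_mono (Finset.erase_subset _ _)))
  have hadj : (gr S).Adj b a := by
    refine gr_adj.mpr ⟨?_, hne.symm⟩
    rw [Sym2.eq_swap, ← hab]; exact he
  refine ha (SimpleGraph.Walk.cons hadj P) ?_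
  rw [SimpleGraph.Walk.cons_isCycle_iff]
  refine ⟨hP, ?_⟩
  intro hmem
  rw [edges_mapLe] at hmem
  have h2 : s(b,a) ∈ S.erase e := gr_edge_mem _ hmem
  rw [Sym2.eq_swap] at hab
  exact (Finset.ne_of_mem_erase h2) hab.symm


lemma acyclic_mono {S T : Finset (Sym2 V)} (h : T ⊆ S) (ha : (gr S).IsAcyclic) :
    (gr T).IsAcyclic := by
  intro v w hw
  exact ha ((w.mapLe (gr_mono h))) (hw.mapLe _)

lemma forest_card (S : Finset (Sym2 V)) : ∀ (X : Finset V), X.Nonempty →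
    (∀ e ∈ S, ¬ e.IsDiag) → (gr S).IsAcyclic →
    (∀ e ∈ S, ∀ v ∈ e, v ∈ X) → S.card + 1 ≤ X.card := by
  induction S using Finset.strongInductionOn with
  | _ S IH =>
  intro X hX hd ha hsupp
  rcases S.eq_empty_or_nonempty with rfl | ⟨e, he⟩
  · simpa using hX.card_pos
  · obtain ⟨a, b, hab⟩ := sym2_decomp e
    have hne : a ≠ b := by
      intro h; apply hd e he; rw [hab, h]; exact Sym2.mk_isDiag_iff.mpr rfl
    set S' := S.erase e with hS'
    have hnr : ¬ (gr S').Reachable a b := no_reach_erase ha he hab hne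
    have haX : a ∈ X := hsupp e he a (by rw [hab]; exact Sym2.mem_mk_left a b)
    have hbX : b ∈ X := hsupp e he b (by rw [hab]; exact Sym2.mem_mk_right a b)
    set A := X.filter (fun z => (gr S').Reachable a z) with hA
    set B := X \ A with hB
    have haA : a ∈ A := by rw [hA, Finset.mem_filter]; exact ⟨haX, Reachable.refl a⟩
    have hbB : b ∈ B := by
      rw [hB, Finset.mem_sdiff]
      exact ⟨hbX, by rw [hA, Finset.mem_filter]; rintro ⟨-, h⟩; exact hnr h⟩
    set Sa := S'.filter (fun f => ∀ v ∈ f, v ∈ A) with hSa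
    set Sb := S'.filter (fun f => ∀ v ∈ f, v ∈ B) with hSb
    have hsplit : ∀ f ∈ S', f ∈ Sa ∨ f ∈ Sb := by
      intro f hf
      obtain ⟨u, v, huv⟩ := sym2_decomp f
      have hfS : f ∈ S := Finset.mem_of_mem_erase hf
      have huvne : u ≠ v := by
        intro h; apply hd f hfS; rw [huv, h]; exact Sym2.mk_isDiag_iff.mpr rfl
      have hadj : (gr S').Adj u v := gr_adj.mpr ⟨by rw [← huv]; exact hf, huvne⟩
      have huX : u ∈ X := hsupp f hfS u (by rw [huv]; exact Sym2.mem_mk_left u v)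
      have hvX : v ∈ X := hsupp f hfS v (by rw [huv]; exact Sym2.mem_mk_right u v)
      by_cases hru : (gr S').Reachable a u
      · left
        rw [hSa, Finset.mem_filter]
        refine ⟨hf, ?_⟩
        intro t ht
        rw [huv, Sym2.mem_iff] at ht
        rcases ht with rfl | rfl
        · rw [hA, Finset.mem_filter]; exact ⟨huX, hru⟩
        · rw [hA, Finset.mem_filter]; exact ⟨hvX, hru.trans hadj.reachable⟩
      · right
        rw [hSb, Finset.mem_filter]
        refine ⟨hf, ?_⟩
        intro t ht
        rw [huv, Sym2.mem_iff] at ht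
        rcases ht with rfl | rfl
        · rw [hB, Finset.mem_sdiff]
          exact ⟨huX, by rw [hA, Finset.mem_filter]; rintro ⟨-, h⟩; exact hru h⟩
        · rw [hB, Finset.mem_sdiff]
          refine ⟨hvX, ?_⟩
          rw [hA, Finset.mem_filter]
          rintro ⟨-, h⟩
          exact hru (h.trans hadj.symm.reachable)
    have hdisjab : Disjoint Sa Sb := by
      rw [Finset.disjoint_left]
      intro f hfa hfb
      rw [hSa, Finset.mem_filter] at hfa
      rw [hSb, Finset.mem_filter] at hfb
      obtain ⟨u, v, huv⟩ := sym2_decomp f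
      have hu := hfa.2 u (by rw [huv]; exact Sym2.mem_mk_left u v)
      have hu' := hfb.2 u (by rw [huv]; exact Sym2.mem_mk_left u v)
      rw [hB, Finset.mem_sdiff] at hu'
      exact hu'.2 hu
    have hunion : Sa ∪ Sb = S' := by
      apply Finset.Subset.antisymm
      · intro f hf
        rcases Finset.mem_union.mp hf with h | h
        · exact Finset.mem_of_mem_filter f h
        · exact Finset.mem_of_mem_filter f h
      · intro f hf
        exact Finset.mem_union.mpr (hsplit f hf)
    have hcardsplit : Sa.card + Sb.card = S'.card := by
      rw [← Finset.card_union_of_disjoint hdisjab, hunion]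
    have hSaS : Sa ⊂ S := by
      refine Finset.ssubset_of_subset_of_ssubset ?_ (Finset.erase_ssubset he)
      exact (Finset.filter_subset _ _)
    have hSbS : Sb ⊂ S := by
      refine Finset.ssubset_of_subset_of_ssubset ?_ (Finset.erase_ssubset he)
      exact (Finset.filter_subset _ _)
    have hda : Sa.card + 1 ≤ A.card := by
      refine IH Sa hSaS A ⟨a, haA⟩ ?_ ?_ ?_
      · intro f hf
        exact hd f (Finset.mem_of_mem_erase (Finset.mem_of_mem_filter f hf))
      · exact acyclic_mono (fun f hf =>
          Finset.mem_of_mem_erase (Finset.mem_of_mem_filter f hf)) ha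
      · intro f hf v hv
        exact (Finset.mem_filter.mp hf).2 v hv
    have hdb : Sb.card + 1 ≤ B.card := by
      refine IH Sb hSbS B ⟨b, hbB⟩ ?_ ?_ ?_
      · intro f hf
        exact hd f (Finset.mem_of_mem_erase (Finset.mem_of_mem_filter f hf))
      · exact acyclic_mono (fun f hf =>
          Finset.mem_of_mem_erase (Finset.mem_of_mem_filter f hf)) ha
      · intro f hf v hv
        exact (Finset.mem_filter.mp hf).2 v hv
    have hAle : A.card ≤ X.card := Finset.card_le_card (Finset.filter_subset _ _)
    have hBcard : B.card = X.card - A.card := Finset.card_sdiff_of_subset (Finset.filter_subset _ _)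
    have hScard : S'.card + 1 = S.card := Finset.card_erase_add_one he
    omega

lemma reach_del {S : Finset (Sym2 V)} {e : Sym2 V} {α β : V} (he : e = s(α,β)) :
    ∀ {x y : V} (_ : (gr S).Walk x y),
    (gr (S.erase e)).Reachable x y ∨ (gr (S.erase e)).Reachable x α ∨
      (gr (S.erase e)).Reachable x β := by
  intro x y p
  induction p with
  | nil => exact Or.inl (Reachable.refl _)
  | @cons x v y h q ih =>
    by_cases hxe : s(x, v) = e
    · rw [he, Sym2.eq_iff] at hxe
      rcases hxe with ⟨rfl, rfl⟩ | ⟨rfl, rfl⟩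
      · exact Or.inr (Or.inl (Reachable.refl _))
      · exact Or.inr (Or.inr (Reachable.refl _))
    · have hadj : (gr (S.erase e)).Adj x v := by
        rw [gr_adj] at h ⊢
        exact ⟨Finset.mem_erase.mpr ⟨hxe, h.1⟩, h.2⟩
      rcases ih with h1 | h1 | h1
      · exact Or.inl (hadj.reachable.trans h1)
      · exact Or.inr (Or.inl (hadj.reachable.trans h1))
      · exact Or.inr (Or.inr (hadj.reachable.trans h1))

/-- The data of a family of edge-disjoint nonempty graphs with no rainbow cycle. -/
structure Setup (n : ℕ) where
  E : Fin n → Finset (Sym2 (Fin (n + 1)))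
  hvalid : ∀ i, ∀ e ∈ E i, ¬ e.IsDiag
  hne : ∀ i, (E i).Nonempty
  hdisj : ∀ i j, i ≠ j → Disjoint (E i) (E j)
  hno : ¬ ∃ R : Finset (Sym2 (Fin (n + 1))), IsRainbow E R ∧ IsCycleEdgeSet R

variable {n : ℕ}

/-- A transversal of the family. -/
def Setup.IsTrans (S : Setup n) (c : Fin n → Sym2 (Fin (n + 1))) : Prop := ∀ j, c j ∈ S.E j

/-- The edge set of a transversal. -/
def TS (c : Fin n → Sym2 (Fin (n + 1))) : Finset (Sym2 (Fin (n + 1))) :=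
  Finset.image c Finset.univ

lemma Setup.edge_eq {S : Setup n} {i j : Fin n} {e : Sym2 (Fin (n+1))}
    (hi : e ∈ S.E i) (hj : e ∈ S.E j) : i = j := by
  by_contra hij
  exact Finset.disjoint_left.mp (S.hdisj i j hij) hi hj

lemma cInj {S : Setup n} {c} (hc : S.IsTrans c) : Function.Injective c := by
  intro i j hij
  exact S.edge_eq (hc i) (hij ▸ hc j)

lemma mem_TS {c : Fin n → Sym2 (Fin (n+1))} {e : Sym2 (Fin (n+1))} :
    e ∈ TS c ↔ ∃ j, c j = e := by
  simp [TS]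

lemma TS_card {S : Setup n} {c} (hc : S.IsTrans c) : (TS c).card = n := by
  rw [TS, Finset.card_image_of_injective _ (cInj hc), Finset.card_univ, Fintype.card_fin]

lemma TS_nondiag {S : Setup n} {c} (hc : S.IsTrans c) : ∀ e ∈ TS c, ¬ e.IsDiag := by
  intro e he
  obtain ⟨j, rfl⟩ := mem_TS.mp he
  exact S.hvalid j _ (hc j)

/-- Canonical coloring of tree edges. -/
noncomputable def colOf (c : Fin n → Sym2 (Fin (n + 1))) (d : Fin n) (e : Sym2 (Fin (n+1))) :
    Fin n :=
  if h : ∃ j, c j = e then h.choose else d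

lemma colOf_tree {S : Setup n} {c} (hc : S.IsTrans c) (d : Fin n) (j : Fin n) :
    colOf c d (c j) = j := by
  rw [colOf]
  have h : ∃ j', c j' = c j := ⟨j, rfl⟩
  rw [dif_pos h]
  exact cInj hc h.choose_spec

lemma trans_acyclic {S : Setup n} {c} (hc : S.IsTrans c) : (gr (TS c)).IsAcyclic := by
  intro v w hw
  have hedge : ∀ e ∈ w.edges, e ∈ TS c := fun e he => gr_edge_mem w he
  have hnonnil : w.edges ≠ [] := by
    intro h
    have h3 := hw.three_le_length
    have h4 : w.edges.length = w.length := SimpleGraph.Walk.length_edges w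
    rw [h] at h4
    simp at h4
    omega
  obtain ⟨e₀, he₀⟩ := List.exists_mem_of_ne_nil _ hnonnil
  obtain ⟨d, -⟩ := mem_TS.mp (hedge e₀ he₀)
  refine no_rainbow_cycle_aux S.hno (w.mapLe le_top) (hw.mapLe le_top) (colOf c d) ?_ ?_
  · intro e he
    rw [edges_mapLe] at he
    obtain ⟨j, hj⟩ := mem_TS.mp (hedge e he)
    rw [← hj, colOf_tree hc]
    exact hc j
  · intro e he f hf hef
    rw [edges_mapLe] at he hf
    obtain ⟨j, hj⟩ := mem_TS.mp (hedge e he)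
    obtain ⟨j', hj'⟩ := mem_TS.mp (hedge f hf)
    rw [← hj, ← hj', colOf_tree hc, colOf_tree hc] at hef
    rw [← hj, ← hj', hef]

lemma trans_conn {S : Setup n} {c} (hc : S.IsTrans c) : (gr (TS c)).Connected := by
  rw [connected_iff]
  refine ⟨?_, ⟨0⟩⟩
  by_contra hpc
  rw [Preconnected] at hpc
  push_neg at hpc
  obtain ⟨x, y, hxy⟩ := hpc
  set A := Finset.univ.filter (fun z => (gr (TS c)).Reachable x z) with hA
  set B := (Finset.univ : Finset (Fin (n+1))) \ A with hB
  have hxA : x ∈ A := by rw [hA, Finset.mem_filter]; exact ⟨Finset.mem_univ x, Reachable.refl x⟩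
  have hyB : y ∈ B := by
    rw [hB, Finset.mem_sdiff]
    exact ⟨Finset.mem_univ y, by rw [hA, Finset.mem_filter]; rintro ⟨-, h⟩; exact hxy h⟩
  set Sa := (TS c).filter (fun f => ∀ v ∈ f, v ∈ A) with hSa
  set Sb := (TS c).filter (fun f => ∀ v ∈ f, v ∈ B) with hSb
  have hsplit : ∀ f ∈ TS c, f ∈ Sa ∨ f ∈ Sb := by
    intro f hf
    obtain ⟨u, v, huv⟩ := sym2_decomp f
    have huvne : u ≠ v := by
      intro h; apply TS_nondiag hc f hf; rw [huv, h]; exact Sym2.mk_isDiag_iff.mpr rfl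
    have hadj : (gr (TS c)).Adj u v := gr_adj.mpr ⟨by rw [← huv]; exact hf, huvne⟩
    by_cases hru : (gr (TS c)).Reachable x u
    · left
      rw [hSa, Finset.mem_filter]
      refine ⟨hf, ?_⟩
      intro t ht
      rw [huv, Sym2.mem_iff] at ht
      rcases ht with rfl | rfl
      · rw [hA, Finset.mem_filter]; exact ⟨Finset.mem_univ t, hru⟩
      · rw [hA, Finset.mem_filter]; exact ⟨Finset.mem_univ t, hru.trans hadj.reachable⟩
    · right
      rw [hSb, Finset.mem_filter]
      refine ⟨hf, ?_⟩
      intro t ht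
      rw [huv, Sym2.mem_iff] at ht
      rcases ht with rfl | rfl
      · rw [hB, Finset.mem_sdiff]
        exact ⟨Finset.mem_univ t, by rw [hA, Finset.mem_filter]; rintro ⟨-, h⟩; exact hru h⟩
      · rw [hB, Finset.mem_sdiff]
        refine ⟨Finset.mem_univ t, ?_⟩
        rw [hA, Finset.mem_filter]
        rintro ⟨-, h⟩
        exact hru (h.trans hadj.symm.reachable)
  have hdisjab : Disjoint Sa Sb := by
    rw [Finset.disjoint_left]
    intro f hfa hfb
    rw [hSa, Finset.mem_filter] at hfa
    rw [hSb, Finset.mem_filter] at hfb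
    obtain ⟨u, v, huv⟩ := sym2_decomp f
    have hu := hfa.2 u (by rw [huv]; exact Sym2.mem_mk_left u v)
    have hu' := hfb.2 u (by rw [huv]; exact Sym2.mem_mk_left u v)
    rw [hB, Finset.mem_sdiff] at hu'
    exact hu'.2 hu
  have hunion : Sa ∪ Sb = TS c := by
    apply Finset.Subset.antisymm
    · intro f hf
      rcases Finset.mem_union.mp hf with h | h
      · exact Finset.mem_of_mem_filter f h
      · exact Finset.mem_of_mem_filter f h
    · intro f hf
      exact Finset.mem_union.mpr (hsplit f hf)
  have hcardsplit : Sa.card + Sb.card = n := by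
    rw [← Finset.card_union_of_disjoint hdisjab, hunion, TS_card hc]
  have hda : Sa.card + 1 ≤ A.card := by
    refine forest_card Sa A ⟨x, hxA⟩ ?_ ?_ ?_
    · intro f hf
      exact TS_nondiag hc f (Finset.mem_of_mem_filter f hf)
    · exact acyclic_mono (Finset.filter_subset _ _) (trans_acyclic hc)
    · intro f hf v hv
      exact (Finset.mem_filter.mp hf).2 v hv
  have hdb : Sb.card + 1 ≤ B.card := by
    refine forest_card Sb B ⟨y, hyB⟩ ?_ ?_ ?_
    · intro f hf
      exact TS_nondiag hc f (Finset.mem_of_mem_filter f hf)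
    · exact acyclic_mono (Finset.filter_subset _ _) (trans_acyclic hc)
    · intro f hf v hv
      exact (Finset.mem_filter.mp hf).2 v hv
  have hAle : A.card ≤ n + 1 := by
    have := Finset.card_le_card (Finset.subset_univ A)
    simpa using this
  have hBcard : B.card = (n+1) - A.card := by
    have := Finset.card_sdiff_of_subset (Finset.subset_univ A)
    simpa using this
  omega

lemma covered {S : Setup n} {c} (hc : S.IsTrans c) (hn : 1 ≤ n) (x : Fin (n+1)) :
    ∃ j, x ∈ c j := by
  by_contra hcon
  push_neg at hcon
  have hsupp : ∀ e ∈ TS c, ∀ v ∈ e, v ∈ Finset.univ.erase x := by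
    intro e he v hv
    obtain ⟨j, rfl⟩ := mem_TS.mp he
    refine Finset.mem_erase.mpr ⟨?_, Finset.mem_univ v⟩
    rintro rfl
    exact hcon j hv
  have hcard : (Finset.univ.erase x).card = n := by
    rw [Finset.card_erase_of_mem (Finset.mem_univ x)]; simp
  have h6 := forest_card (TS c) (Finset.univ.erase x)
    (by rw [← Finset.card_pos, hcard]; omega) (TS_nondiag hc) (trans_acyclic hc) hsupp
  rw [TS_card hc, hcard] at h6
  omega

/-- Every edge of `E m` has its endpoints separated by the tree edge `c m`. -/
lemma F2 {S : Setup n} {c} (hc : S.IsTrans c) {m : Fin n} {g : Sym2 (Fin (n+1))}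
    (hg : g ∈ S.E m) {x y : Fin (n+1)} (hxy : g = s(x,y)) (hne2 : x ≠ y) :
    ¬ (gr ((TS c).erase (c m))).Reachable x y := by
  intro hreach
  obtain ⟨p0⟩ := hreach
  set P := ((p0.toPath : (gr ((TS c).erase (c m))).Walk x y).mapLe le_top) with hP
  have hPpath : P.IsPath := (p0.toPath.2).mapLe _
  have hPedges : ∀ e ∈ P.edges, e ∈ (TS c).erase (c m) := by
    intro e he
    rw [hP, edges_mapLe] at he
    exact gr_edge_mem _ he
  have hgP : g ∉ P.edges := by
    intro hmem
    have h2 := hPedges g hmem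
    rw [Finset.mem_erase] at h2
    obtain ⟨j, hj⟩ := mem_TS.mp h2.2
    have : j = m := S.edge_eq (hj ▸ hc j) hg
    exact h2.1 (by rw [← hj, this])
  have hadj : (⊤ : SimpleGraph (Fin (n+1))).Adj y x := hne2.symm
  have hcyc : (SimpleGraph.Walk.cons hadj P).IsCycle := by
    rw [SimpleGraph.Walk.cons_isCycle_iff]
    refine ⟨hPpath, ?_⟩
    intro hmem
    rw [Sym2.eq_swap] at hmem
    exact hgP (hxy ▸ hmem)
  have hgy : (s(y,x) : Sym2 (Fin (n+1))) = g := by rw [hxy, Sym2.eq_swap]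
  refine no_rainbow_cycle_aux S.hno _ hcyc
    (fun e => if e = g then m else colOf c m e) ?_ ?_
  · intro e he
    rw [SimpleGraph.Walk.edges_cons] at he
    show e ∈ S.E (if e = g then m else colOf c m e)
    rcases List.mem_cons.mp he with rfl | he
    · rw [if_pos hgy, hgy]
      exact hg
    · have h2 := hPedges e he
      have hneg : e ≠ g := fun h => hgP (h ▸ he)
      rw [if_neg hneg]
      obtain ⟨j, hj⟩ := mem_TS.mp (Finset.mem_erase.mp h2).2
      rw [← hj, colOf_tree hc]
      exact hc j
  · intro e he f hf hef
    rw [SimpleGraph.Walk.edges_cons] at he hf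
    replace hef : (if e = g then m else colOf c m e) = (if f = g then m else colOf c m f) := hef
    have key : ∀ e', e' ∈ P.edges → (if e' = g then m else colOf c m e') ≠ m := by
      intro e' he' hcon
      have hneg : e' ≠ g := fun h => hgP (h ▸ he')
      rw [if_neg hneg] at hcon
      obtain ⟨j, hj⟩ := mem_TS.mp (Finset.mem_erase.mp (hPedges e' he')).2
      rw [← hj, colOf_tree hc] at hcon
      subst hcon
      exact (Finset.mem_erase.mp (hPedges e' he')).1 hj.symm
    rcases List.mem_cons.mp he with rfl | he <;> rcases List.mem_cons.mp hf with rfl | hf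
    · rfl
    · rw [if_pos hgy] at hef
      exact absurd hef.symm (key f hf)
    · rw [if_pos hgy] at hef
      exact absurd hef (key e he)
    · have hnege : e ≠ g := fun h => hgP (h ▸ he)
      have hnegf : f ≠ g := fun h => hgP (h ▸ hf)
      rw [if_neg hnege, if_neg hnegf] at hef
      obtain ⟨j, hj⟩ := mem_TS.mp (Finset.mem_erase.mp (hPedges e he)).2
      obtain ⟨j', hj'⟩ := mem_TS.mp (Finset.mem_erase.mp (hPedges f hf)).2
      rw [← hj, ← hj', colOf_tree hc, colOf_tree hc] at hef
      rw [← hj, ← hj', hef]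


lemma cover2 {S : Setup n} {c} (hc : S.IsTrans c) {j : Fin n} {α β : Fin (n+1)}
    (hj : c j = s(α,β)) (x : Fin (n+1)) :
    (gr ((TS c).erase (c j))).Reachable x α ∨ (gr ((TS c).erase (c j))).Reachable x β := by
  obtain ⟨p⟩ := ((trans_conn hc).preconnected x α)
  rcases reach_del hj p with h | h | h
  · exact Or.inl h
  · exact Or.inl h
  · exact Or.inr h

lemma reach_in_class {V : Type*} [Fintype V] [DecidableEq V]
    {S₁ S₂ : Finset (Sym2 V)} {x : V}
    (hsub : ∀ e ∈ S₁, (∀ v ∈ e, (gr S₁).Reachable x v) → e ∈ S₂) :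
    ∀ {u y : V}, (gr S₁).Reachable x u → ∀ (_ : (gr S₁).Walk u y), (gr S₂).Reachable u y := by
  intro u y hxu p
  induction p with
  | nil => exact Reachable.refl _
  | @cons u v y h q ih =>
    have hadj : (gr S₁).Adj u v := h
    rw [gr_adj] at hadj
    have he2 : s(u,v) ∈ S₂ := by
      refine hsub _ hadj.1 ?_
      intro t ht
      rw [Sym2.mem_iff] at ht
      rcases ht with rfl | rfl
      · exact hxu
      · exact hxu.trans h.reachable
    have hadj2 : (gr S₂).Adj u v := gr_adj.mpr ⟨he2, hadj.2⟩
    exact hadj2.reachable.trans (ih (hxu.trans h.reachable))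

lemma reach_trans_sub {V : Type*} [Fintype V] [DecidableEq V]
    {S₁ S₂ : Finset (Sym2 V)} {w x y : V}
    (hx : (gr S₁).Reachable w x) (hy : (gr S₁).Reachable w y)
    (hsub : ∀ e ∈ S₁, (∀ v ∈ e, (gr S₁).Reachable w v) → e ∈ S₂) :
    (gr S₂).Reachable x y := by
  obtain ⟨p⟩ := hx.symm.trans hy
  exact reach_in_class hsub hx p

lemma exists_path_in_class {V : Type*} [Fintype V] [DecidableEq V]
    {S₁ : Finset (Sym2 V)} {w x y : V}
    (hx : (gr S₁).Reachable w x) (hy : (gr S₁).Reachable w y) :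
    ∃ p : (gr S₁).Walk x y, p.IsPath ∧ ∀ t ∈ p.support, (gr S₁).Reachable w t := by
  obtain ⟨p0⟩ := hx.symm.trans hy
  refine ⟨p0.toPath, p0.toPath.2, ?_⟩
  intro t ht
  exact hx.trans (reach_of_mem_support _ ht)

/-- The side of the cut given by tree edge `c j` containing `x`. -/
noncomputable def side (c : Fin n → Sym2 (Fin (n+1))) (j : Fin n) (x : Fin (n+1)) :
    Finset (Fin (n+1)) :=
  Finset.univ.filter (fun z => (gr ((TS c).erase (c j))).Reachable x z)

lemma mem_side {c : Fin n → Sym2 (Fin (n+1))} {j : Fin n} {x z : Fin (n+1)} :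
    z ∈ side c j x ↔ (gr ((TS c).erase (c j))).Reachable x z := by
  rw [side, Finset.mem_filter]
  exact ⟨fun h => h.2, fun h => ⟨Finset.mem_univ z, h⟩⟩

lemma self_mem_side {c : Fin n → Sym2 (Fin (n+1))} {j : Fin n} {x : Fin (n+1)} :
    x ∈ side c j x := mem_side.mpr (Reachable.refl x)

lemma side_eq_of_mem {c : Fin n → Sym2 (Fin (n+1))} {j : Fin n} {x z : Fin (n+1)}
    (h : z ∈ side c j x) : side c j z = side c j x := by
  rw [mem_side] at h
  ext t
  rw [mem_side, mem_side]
  exact ⟨fun ht => h.trans ht, fun ht => h.symm.trans ht⟩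


/-- The conclusion of the main theorem. -/
def Concl (n : ℕ) (E : Fin n → Finset (Sym2 (Fin (n+1)))) : Prop :=
  ∃ V₁ V₂ : Set (Fin (n + 1)),
    V₁ ∪ V₂ = edgeVerts {e | ∃ i, e ∈ E i} ∧ Disjoint V₁ V₂ ∧
    ∃! i : Fin n, ∃ e ∈ E i, ∃ u ∈ V₁, ∃ w ∈ V₂, e = s(u, w)

lemma EVuniv {S : Setup n} {c} (hc : S.IsTrans c) (hn : 1 ≤ n) :
    edgeVerts {e | ∃ i, e ∈ S.E i} = (Set.univ : Set (Fin (n+1))) := by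
  apply Set.eq_univ_of_forall
  intro x
  obtain ⟨j, hj⟩ := covered hc hn x
  exact ⟨c j, ⟨j, hc j⟩, hj⟩

/-- Generic rainbow-cycle contradiction: one marked edge closing a path. -/
lemma rainbow1 {S : Setup n} {j₁ : Fin n} {t₀ u₁ : Fin (n+1)}
    (h1 : s(u₁, t₀) ∈ S.E j₁) (hne1 : u₁ ≠ t₀)
    (P : (⊤ : SimpleGraph (Fin (n+1))).Walk t₀ u₁) (hPp : P.IsPath)
    (hedge : s(u₁, t₀) ∉ P.edges)
    (colP : Sym2 (Fin (n+1)) → Fin n)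
    (hmem : ∀ e ∈ P.edges, e ∈ S.E (colP e))
    (hinjP : ∀ e ∈ P.edges, ∀ f ∈ P.edges, colP e = colP f → e = f)
    (hne : ∀ e ∈ P.edges, colP e ≠ j₁) : False := by
  have hadj : (⊤ : SimpleGraph (Fin (n+1))).Adj u₁ t₀ := by simpa using hne1
  have hcyc : (SimpleGraph.Walk.cons hadj P).IsCycle := by
    rw [SimpleGraph.Walk.cons_isCycle_iff]
    exact ⟨hPp, hedge⟩
  refine no_rainbow_cycle_aux S.hno _ hcyc
    (fun e => if e = s(u₁, t₀) then j₁ else colP e) ?_ ?_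
  · intro e he
    rw [SimpleGraph.Walk.edges_cons] at he
    show e ∈ S.E (if e = s(u₁, t₀) then j₁ else colP e)
    rcases List.mem_cons.mp he with rfl | he
    · rw [if_pos rfl]; exact h1
    · rw [if_neg (fun h : e = s(u₁,t₀) => hedge (h ▸ he))]
      exact hmem e he
  · intro e he f hf hef
    rw [SimpleGraph.Walk.edges_cons] at he hf
    replace hef : (if e = s(u₁,t₀) then j₁ else colP e) = (if f = s(u₁,t₀) then j₁ else colP f) :=
      hef
    rcases List.mem_cons.mp he with rfl | he <;> rcases List.mem_cons.mp hf with rfl | hf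
    · rfl
    · rw [if_pos rfl, if_neg (fun h : f = s(u₁,t₀) => hedge (h ▸ hf))] at hef
      exact absurd hef.symm (hne f hf)
    · rw [if_pos rfl, if_neg (fun h : e = s(u₁,t₀) => hedge (h ▸ he))] at hef
      exact absurd hef (hne e he)
    · rw [if_neg (fun h : e = s(u₁,t₀) => hedge (h ▸ he)),
        if_neg (fun h : f = s(u₁,t₀) => hedge (h ▸ hf))] at hef
      exact hinjP e he f hf hef

/-- Generic rainbow-cycle contradiction: two marked edges at a common vertex joined by a path. -/
lemma rainbow2 {S : Setup n} {j₁ j₂ : Fin n} (hj12 : j₁ ≠ j₂)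
    {t₀ u₁ u₂ : Fin (n+1)} (h1 : s(t₀,u₁) ∈ S.E j₁) (h2 : s(t₀,u₂) ∈ S.E j₂)
    (hu12 : u₁ ≠ u₂) (ht1 : t₀ ≠ u₁) (ht2 : t₀ ≠ u₂)
    (P : (⊤ : SimpleGraph (Fin (n+1))).Walk u₁ u₂) (hPp : P.IsPath) (ht0 : t₀ ∉ P.support)
    (colP : Sym2 (Fin (n+1)) → Fin n)
    (hmem : ∀ e ∈ P.edges, e ∈ S.E (colP e))
    (hinjP : ∀ e ∈ P.edges, ∀ f ∈ P.edges, colP e = colP f → e = f)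
    (hnc1 : ∀ e ∈ P.edges, colP e ≠ j₁) (hnc2 : ∀ e ∈ P.edges, colP e ≠ j₂) : False := by
  have h2' : s(u₂, t₀) ∈ S.E j₂ := by rwa [Sym2.eq_swap]
  have hadj2 : (⊤ : SimpleGraph (Fin (n+1))).Adj u₂ t₀ := by simpa using ht2.symm
  set Q := P.concat hadj2 with hQ
  have hP2 : Q.IsPath := by
    rw [hQ, SimpleGraph.Walk.isPath_def, SimpleGraph.Walk.support_concat]
    rw [SimpleGraph.Walk.isPath_def] at hPp
    exact List.Nodup.append hPp (List.nodup_singleton t₀)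
      (by intro t ht hty; rw [List.mem_singleton] at hty; subst hty; exact ht0 ht)
  have hedge_mem : ∀ e ∈ Q.edges, e ∈ P.edges ∨ e = s(u₂, t₀) := by
    intro e he
    rw [hQ, SimpleGraph.Walk.edges_concat] at he
    simp only [List.concat_eq_append, List.mem_append, List.mem_singleton] at he
    exact he
  have hsp1 : s(t₀, u₁) ∉ P.edges := by
    intro h
    exact ht0 (SimpleGraph.Walk.fst_mem_support_of_mem_edges P h)
  have hsp2 : s(t₀, u₂) ∉ P.edges := by
    intro h
    exact ht0 (SimpleGraph.Walk.fst_mem_support_of_mem_edges P h)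
  have h12ne : (s(t₀,u₁) : Sym2 (Fin (n+1))) ≠ s(t₀,u₂) := by
    rw [Ne, Sym2.eq_iff]
    rintro (⟨-, h⟩ | ⟨h, h'⟩)
    · exact hu12 h
    · exact ht2 h
  refine rainbow1 (S := S) (j₁ := j₁) (t₀ := u₁) (u₁ := t₀) h1 ht1
    Q hP2 ?_ (fun e => if e = s(t₀,u₂) then j₂ else colP e) ?_ ?_ ?_
  · intro h
    rcases hedge_mem _ h with h' | h'
    · exact hsp1 h'
    · rw [Sym2.eq_iff] at h'
      rcases h' with ⟨h3, -⟩ | ⟨-, h4⟩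
      · exact ht2 h3
      · exact hu12 h4
  · intro e he
    show e ∈ S.E (if e = s(t₀,u₂) then j₂ else colP e)
    rcases hedge_mem e he with h' | h'
    · rw [if_neg (fun h : e = s(t₀,u₂) => hsp2 (h ▸ h'))]
      exact hmem e h'
    · subst h'
      rw [Sym2.eq_swap, if_pos rfl]
      exact h2
  · intro e he f hf hef
    replace hef : (if e = s(t₀,u₂) then j₂ else colP e) = (if f = s(t₀,u₂) then j₂ else colP f)
      := hef
    rcases hedge_mem e he with he' | he' <;> rcases hedge_mem f hf with hf' | hf'
    · rw [if_neg (fun h : e = s(t₀,u₂) => hsp2 (h ▸ he')),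
        if_neg (fun h : f = s(t₀,u₂) => hsp2 (h ▸ hf'))] at hef
      exact hinjP e he' f hf' hef
    · subst hf'
      rw [if_neg (fun h : e = s(t₀,u₂) => hsp2 (h ▸ he')), Sym2.eq_swap, if_pos rfl] at hef
      exact absurd hef (hnc2 e he')
    · subst he'
      rw [Sym2.eq_swap, if_pos rfl, if_neg (fun h : f = s(t₀,u₂) => hsp2 (h ▸ hf'))] at hef
      exact absurd hef.symm (hnc2 f hf')
    · subst he'; subst hf'; rfl
  · intro e he
    show (if e = s(t₀,u₂) then j₂ else colP e) ≠ j₁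
    rcases hedge_mem e he with h' | h'
    · rw [if_neg (fun h : e = s(t₀,u₂) => hsp2 (h ▸ h'))]
      exact hnc1 e h'
    · subst h'
      rw [Sym2.eq_swap, if_pos rfl]
      exact hj12.symm


/-- The colors whose tree edge lies inside the side `side c r δ`. -/
noncomputable def INs (c : Fin n → Sym2 (Fin (n+1))) (r : Fin n) (δ : Fin (n+1)) :
    Finset (Fin n) :=
  Finset.univ.filter (fun j => ∀ v ∈ c j, v ∈ side c r δ)

lemma mem_INs {c : Fin n → Sym2 (Fin (n+1))} {r : Fin n} {δ : Fin (n+1)} {j : Fin n} :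
    j ∈ INs c r δ ↔ ∀ v ∈ c j, v ∈ side c r δ := by
  rw [INs, Finset.mem_filter]
  exact ⟨fun h => h.2, fun h => ⟨Finset.mem_univ j, h⟩⟩

lemma sep_gd {S : Setup n} {c} (hc : S.IsTrans c) {r : Fin n} {γ δ : Fin (n+1)}
    (hr : c r = s(γ, δ)) (hγδ : γ ≠ δ) :
    ¬ (gr ((TS c).erase (c r))).Reachable γ δ := F2 hc (hc r) hr hγδ

lemma gamma_not_side {S : Setup n} {c} (hc : S.IsTrans c) {r : Fin n} {γ δ : Fin (n+1)}
    (hr : c r = s(γ, δ)) (hγδ : γ ≠ δ) : γ ∉ side c r δ := by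
  rw [mem_side]
  intro h
  exact sep_gd hc hr hγδ h.symm

lemma gclass_not_side {S : Setup n} {c} (hc : S.IsTrans c) {r : Fin n} {γ δ : Fin (n+1)}
    (hr : c r = s(γ, δ)) (hγδ : γ ≠ δ) {t : Fin (n+1)}
    (ht : (gr ((TS c).erase (c r))).Reachable γ t) : t ∉ side c r δ := by
  rw [mem_side]
  intro h
  exact sep_gd hc hr hγδ (ht.trans h.symm)

lemma out_reach {S : Setup n} {c} (hc : S.IsTrans c) {r : Fin n} {γ δ : Fin (n+1)}
    (hr : c r = s(γ, δ)) {z : Fin (n+1)} (hz : z ∉ side c r δ) :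
    (gr ((TS c).erase (c r))).Reachable γ z := by
  rcases cover2 hc hr z with h | h
  · exact h.symm
  · exact absurd (mem_side.mpr h.symm) hz

/-- Any tree edge other than `c r` has both ends on one side. -/
lemma tree_edge_side {S : Setup n} {c} (hc : S.IsTrans c) {r j : Fin n} {δ : Fin (n+1)}
    (hjr : j ≠ r) {u : Fin (n+1)} (hu : u ∈ c j) (huW : u ∈ side c r δ) :
    ∀ v ∈ c j, v ∈ side c r δ := by
  intro v hv
  obtain ⟨u', huv⟩ := sym2_mem_decomp hu
  have hne2 : u ≠ u' := by
    intro h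
    apply S.hvalid j _ (hc j)
    rw [huv, h]
    exact Sym2.mk_isDiag_iff.mpr rfl
  have hadj : (gr ((TS c).erase (c r))).Adj u u' := by
    rw [gr_adj]
    refine ⟨Finset.mem_erase.mpr ⟨?_, by rw [← huv]; exact mem_TS.mpr ⟨j, rfl⟩⟩, hne2⟩
    rw [← huv]
    intro h
    exact hjr (cInj hc h)
  have hu' : u' ∈ side c r δ := by
    rw [mem_side] at huW ⊢
    exact huW.trans hadj.reachable
  rw [huv, Sym2.mem_iff] at hv
  rcases hv with rfl | rfl
  · exact huW
  · exact hu'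

lemma contract_count {S : Setup n} {c} (hc : S.IsTrans c) {r : Fin n} {γ δ : Fin (n+1)}
    (hr : c r = s(γ, δ)) (hγδ : γ ≠ δ) :
    (INs c r δ).card + 1 = (side c r δ).card := by
  set W := side c r δ with hW
  have hδW : δ ∈ W := self_mem_side
  have hγW : γ ∉ W := gamma_not_side hc hr hγδ
  set OUT := Finset.univ.filter (fun j => j ≠ r ∧ ∀ v ∈ c j, v ∉ W) with hOUT
  have hclass : ∀ j : Fin n, j = r ∨ j ∈ INs c r δ ∨ j ∈ OUT := by
    intro j
    by_cases hjr : j = r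
    · exact Or.inl hjr
    obtain ⟨u, v, huv⟩ := sym2_decomp (c j)
    by_cases huW : u ∈ W
    · refine Or.inr (Or.inl (mem_INs.mpr ?_))
      exact tree_edge_side hc hjr (by rw [huv]; exact Sym2.mem_mk_left u v) huW
    · refine Or.inr (Or.inr ?_)
      rw [hOUT, Finset.mem_filter]
      refine ⟨Finset.mem_univ j, hjr, ?_⟩
      intro t ht htW
      exact huW (tree_edge_side hc hjr ht htW u (by rw [huv]; exact Sym2.mem_mk_left u v))
  have hrIN : r ∉ INs c r δ := by
    rw [mem_INs]
    intro h
    exact hγW (h γ (by rw [hr]; exact Sym2.mem_mk_left γ δ))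
  have hrOUT : r ∉ OUT := by
    rw [hOUT, Finset.mem_filter]
    rintro ⟨-, h, -⟩
    exact h rfl
  have hINOUT : Disjoint (INs c r δ) OUT := by
    rw [Finset.disjoint_left]
    intro j hjI hjO
    rw [mem_INs] at hjI
    rw [hOUT, Finset.mem_filter] at hjO
    obtain ⟨u, v, huv⟩ := sym2_decomp (c j)
    exact hjO.2.2 u (by rw [huv]; exact Sym2.mem_mk_left u v)
      (hjI u (by rw [huv]; exact Sym2.mem_mk_left u v))
  have hcards : (INs c r δ).card + OUT.card + 1 = n := by
    have hun : (INs c r δ) ∪ (OUT ∪ {r}) = Finset.univ := by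
      apply Finset.eq_univ_of_forall
      intro j
      rcases hclass j with h | h | h
      · subst h
        simp
      · simp [h]
      · simp [h]
    have hd1 : Disjoint OUT ({r} : Finset (Fin n)) := by
      rw [Finset.disjoint_singleton_right]
      exact hrOUT
    have hd2 : Disjoint (INs c r δ) (OUT ∪ {r}) := by
      rw [Finset.disjoint_union_right, Finset.disjoint_singleton_right]
      exact ⟨hINOUT, hrIN⟩
    have := congrArg Finset.card hun
    rw [Finset.card_union_of_disjoint hd2, Finset.card_union_of_disjoint hd1] at this
    simpa [add_assoc] using this
  have hINbound : (INs c r δ).card + 1 ≤ W.card := by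
    have himg : (Finset.image c (INs c r δ)).card = (INs c r δ).card :=
      Finset.card_image_of_injective _ (cInj hc)
    rw [← himg]
    refine forest_card _ W ⟨δ, hδW⟩ ?_ ?_ ?_
    · intro e he
      obtain ⟨j, -, rfl⟩ := Finset.mem_image.mp he
      exact S.hvalid j _ (hc j)
    · refine acyclic_mono ?_ (trans_acyclic hc)
      intro e he
      obtain ⟨j, -, rfl⟩ := Finset.mem_image.mp he
      exact mem_TS.mpr ⟨j, rfl⟩
    · intro e he t ht
      obtain ⟨j, hj, rfl⟩ := Finset.mem_image.mp he
      exact mem_INs.mp hj t ht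
  have hOUTbound : OUT.card + 1 ≤ (Finset.univ \ W).card := by
    have himg : (Finset.image c OUT).card = OUT.card :=
      Finset.card_image_of_injective _ (cInj hc)
    rw [← himg]
    refine forest_card _ _ ⟨γ, Finset.mem_sdiff.mpr ⟨Finset.mem_univ γ, hγW⟩⟩ ?_ ?_ ?_
    · intro e he
      obtain ⟨j, -, rfl⟩ := Finset.mem_image.mp he
      exact S.hvalid j _ (hc j)
    · refine acyclic_mono ?_ (trans_acyclic hc)
      intro e he
      obtain ⟨j, -, rfl⟩ := Finset.mem_image.mp he
      exact mem_TS.mpr ⟨j, rfl⟩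
    · intro e he t ht
      obtain ⟨j, hj, rfl⟩ := Finset.mem_image.mp he
      rw [hOUT, Finset.mem_filter] at hj
      exact Finset.mem_sdiff.mpr ⟨Finset.mem_univ t, hj.2.2 t ht⟩
  have hWuniv : W.card ≤ n + 1 := by
    have := Finset.card_le_card (Finset.subset_univ W)
    simpa using this
  have hsd : (Finset.univ \ W).card = (n+1) - W.card := by
    have := Finset.card_sdiff_of_subset (Finset.subset_univ W)
    simpa using this
  omega

lemma out_reach_del {S : Setup n} {c} (hc : S.IsTrans c) {r : Fin n} {γ δ : Fin (n+1)}
    (hr : c r = s(γ, δ)) (hγδ : γ ≠ δ) {j : Fin n} (hj : j ∈ INs c r δ)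
    {z : Fin (n+1)} (hz : z ∉ side c r δ) :
    (gr ((TS c).erase (c j))).Reachable γ z := by
  refine reach_trans_sub (Reachable.refl γ) (out_reach hc hr hz) ?_
  intro e he hall
  obtain ⟨p, q, hpq⟩ := sym2_decomp e
  have hpW : p ∉ side c r δ :=
    gclass_not_side hc hr hγδ (hall p (by rw [hpq]; exact Sym2.mem_mk_left p q))
  refine Finset.mem_erase.mpr ⟨?_, (Finset.mem_erase.mp he).2⟩
  intro hecj
  apply hpW
  exact mem_INs.mp hj p (by rw [← hecj, hpq]; exact Sym2.mem_mk_left p q)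

lemma contract_touch {S : Setup n} {c} (hc : S.IsTrans c) {r : Fin n} {γ δ : Fin (n+1)}
    (hr : c r = s(γ, δ)) (hγδ : γ ≠ δ) :
    ∀ j, (j = r ∨ j ∈ INs c r δ) → ∀ f ∈ S.E j, ∃ v ∈ f, v ∈ side c r δ := by
  intro j hj f hf
  obtain ⟨x, y, hxy⟩ := sym2_decomp f
  have hxyne : x ≠ y := by
    intro h
    apply S.hvalid j _ hf
    rw [hxy, h]
    exact Sym2.mk_isDiag_iff.mpr rfl
  by_contra hcon
  push_neg at hcon
  have hx : x ∉ side c r δ := hcon x (by rw [hxy]; exact Sym2.mem_mk_left x y)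
  have hy : y ∉ side c r δ := hcon y (by rw [hxy]; exact Sym2.mem_mk_right x y)
  rcases hj with rfl | hj
  · exact F2 hc hf hxy hxyne ((out_reach hc hr hx).symm.trans (out_reach hc hr hy))
  · exact F2 hc hf hxy hxyne
      ((out_reach_del hc hr hγδ hj hx).symm.trans (out_reach_del hc hr hγδ hj hy))


section Contract

variable {S : Setup n} {c : Fin n → Sym2 (Fin (n+1))} {r : Fin n} {γ δ : Fin (n+1)} {N : ℕ}

variable (ρ : Fin (n+1) → Fin (N+1)) (ι : Fin (N+1) → Fin (n+1))

/-- Colors of tree edges outside the side are not family colors. -/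
lemma col_not_F (hc : S.IsTrans c) (hr : c r = s(γ, δ)) (hγδ : γ ≠ δ)
    {νf : Fin N → Fin n} (hνF : ∀ j', νf j' = r ∨ νf j' ∈ INs c r δ)
    {e : Sym2 (Fin (n+1))} (he : e ∈ (TS c).erase (c r))
    (hnw : ∀ v ∈ e, v ∉ side c r δ) (j' : Fin N) :
    colOf c r e ≠ νf j' := by
  obtain ⟨j₃, hj₃⟩ := mem_TS.mp (Finset.mem_erase.mp he).2
  rw [← hj₃, colOf_tree hc]
  intro hcon
  rcases hνF j' with h | h
  · rw [← hcon] at h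
    exact (Finset.mem_erase.mp he).1 (by rw [← hj₃, h])
  · rw [← hcon] at h
    obtain ⟨u, v, huv⟩ := sym2_decomp (c j₃)
    exact hnw u (by rw [← hj₃, huv]; exact Sym2.mem_mk_left u v)
      (mem_INs.mp h u (by rw [huv]; exact Sym2.mem_mk_left u v))

/-- Normalized representation of an edge of a family color. -/
lemma touch_rep (hc : S.IsTrans c) (hr : c r = s(γ, δ)) (hγδ : γ ≠ δ)
    {j : Fin n} (hj : j = r ∨ j ∈ INs c r δ) {f : Sym2 (Fin (n+1))} (hf : f ∈ S.E j) :
    ∃ p q, f = s(p,q) ∧ p ∈ side c r δ ∧ p ≠ q := by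
  obtain ⟨v, hv, hvW⟩ := contract_touch hc hr hγδ j hj f hf
  obtain ⟨q, hq⟩ := sym2_mem_decomp hv
  refine ⟨v, q, hq, hvW, ?_⟩
  intro h
  apply S.hvalid j _ hf
  rw [hq, h]
  exact Sym2.mk_isDiag_iff.mpr rfl

/-- The collision analysis for images of two different colors. -/
lemma contract_disj (hc : S.IsTrans c) (hr : c r = s(γ, δ)) (hγδ : γ ≠ δ)
    (hιρ : ∀ x ∈ side c r δ, ι (ρ x) = x)
    (hρlast : ∀ x, ρ x = Fin.last N ↔ x ∉ side c r δ)
    (νf : Fin N → Fin n) (hνinj : Function.Injective νf)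
    (hνF : ∀ j', νf j' = r ∨ νf j' ∈ INs c r δ)
    {j'₁ j'₂ : Fin N} (hj' : j'₁ ≠ j'₂) :
    Disjoint ((S.E (νf j'₁)).image (Sym2.map ρ)) ((S.E (νf j'₂)).image (Sym2.map ρ)) := by
  have hρinjW : ∀ {x y : Fin (n+1)}, x ∈ side c r δ → ρ x = ρ y → x = y := by
    intro x y hx hxy
    have hxl : ρ x ≠ Fin.last N := fun h => (hρlast x).mp h hx
    have hyW : y ∈ side c r δ := by
      by_contra hy
      exact hxl (hxy ▸ (hρlast y).mpr hy)
    rw [← hιρ x hx, ← hιρ y hyW, hxy]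
  rw [Finset.disjoint_left]
  rintro e9 he91 he92
  obtain ⟨f₁, hf₁, hm₁⟩ := Finset.mem_image.mp he91
  obtain ⟨f₂, hf₂, hm₂⟩ := Finset.mem_image.mp he92
  have hj12 : νf j'₁ ≠ νf j'₂ := fun h => hj' (hνinj h)
  obtain ⟨p₁, q₁, hf₁eq, hp₁W, hpq₁⟩ := touch_rep hc hr hγδ (by
    rcases hνF j'₁ with h | h
    · exact Or.inl h
    · exact Or.inr h) hf₁
  obtain ⟨p₂, q₂, hf₂eq, hp₂W, hpq₂⟩ := touch_rep hc hr hγδ (by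
    rcases hνF j'₂ with h | h
    · exact Or.inl h
    · exact Or.inr h) hf₂
  have hmm : Sym2.map ρ f₁ = Sym2.map ρ f₂ := by rw [hm₁, hm₂]
  rw [hf₁eq, hf₂eq, Sym2.map_pair_eq, Sym2.map_pair_eq, Sym2.eq_iff] at hmm
  have hfne : f₁ ≠ f₂ := by
    intro h
    exact hj12 (S.edge_eq hf₁ (h ▸ hf₂))
  rcases hmm with ⟨hpp, hqq⟩ | ⟨hpq, hqp⟩
  · -- same orientation
    have hpp' : p₁ = p₂ := hρinjW hp₁W hpp
    by_cases hq₁W : q₁ ∈ side c r δ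
    · exact hfne (by rw [hf₁eq, hf₂eq, hρinjW hq₁W hqq, hpp'])
    · -- collision: two distinct colours sharing image through the contracted vertex
      have hq₂W : q₂ ∉ side c r δ := by
        intro h
        exact hq₁W (hρinjW h hqq.symm ▸ h)
      have hq12 : q₁ ≠ q₂ := by
        intro h
        exact hfne (by rw [hf₁eq, hf₂eq, hpp', h])
      -- build the rainbow cycle
      obtain ⟨P₀, hP₀p, hP₀supp⟩ := exists_path_in_class
        (out_reach hc hr hq₁W) (out_reach hc hr hq₂W)
      have hsupnW : ∀ t ∈ P₀.support, t ∉ side c r δ := by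
        intro t ht
        exact gclass_not_side hc hr hγδ (hP₀supp t ht)
      have hedgeTS : ∀ e ∈ P₀.edges, e ∈ (TS c).erase (c r) := fun e he => gr_edge_mem _ he
      have hedgeNW : ∀ e ∈ P₀.edges, ∀ v ∈ e, v ∉ side c r δ := by
        intro e he v hv
        obtain ⟨u', he'⟩ := sym2_mem_decomp hv
        refine hsupnW v (SimpleGraph.Walk.fst_mem_support_of_mem_edges P₀ (by rw [← he']; exact he))
      refine rainbow2 (S := S) hj12 (t₀ := p₁) (u₁ := q₁) (u₂ := q₂)
        (by rw [← hf₁eq]; exact hf₁) (by rw [hpp', ← hf₂eq]; exact hf₂)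
        hq12 hpq₁ (by rw [hpp']; exact hpq₂)
        (P₀.mapLe le_top) (hP₀p.mapLe le_top) ?_ (colOf c r) ?_ ?_ ?_ ?_
      · rw [support_mapLe]
        intro h
        exact hsupnW p₁ h hp₁W
      · intro e he
        rw [edges_mapLe] at he
        obtain ⟨j₃, hj₃⟩ := mem_TS.mp (Finset.mem_erase.mp (hedgeTS e he)).2
        rw [← hj₃, colOf_tree hc]
        exact hc j₃
      · intro e he f hf hef
        rw [edges_mapLe] at he hf
        obtain ⟨j₃, hj₃⟩ := mem_TS.mp (Finset.mem_erase.mp (hedgeTS e he)).2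
        obtain ⟨j₄, hj₄⟩ := mem_TS.mp (Finset.mem_erase.mp (hedgeTS f hf)).2
        rw [← hj₃, ← hj₄, colOf_tree hc, colOf_tree hc] at hef
        rw [← hj₃, ← hj₄, hef]
      · intro e he
        rw [edges_mapLe] at he
        exact col_not_F hc hr hγδ hνF (hedgeTS e he) (hedgeNW e he) j'₁
      · intro e he
        rw [edges_mapLe] at he
        exact col_not_F hc hr hγδ hνF (hedgeTS e he) (hedgeNW e he) j'₂
  · -- opposite orientation
    have h1 : p₁ = q₂ := hρinjW hp₁W hpq
    have h2 : p₂ = q₁ := hρinjW hp₂W hqp.symm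
    refine hfne ?_
    rw [hf₁eq, hf₂eq, h1, ← h2, Sym2.eq_swap]


/-- No rainbow cycle in the contracted family (proved later). -/
lemma contract_hno (hc : S.IsTrans c) (hr : c r = s(γ, δ)) (hγδ : γ ≠ δ)
    (hιρ : ∀ x ∈ side c r δ, ι (ρ x) = x)
    (hρι : ∀ y, ρ (ι y) = y)
    (hρlast : ∀ x, ρ x = Fin.last N ↔ x ∉ side c r δ)
    (hιmem : ∀ y : Fin (N+1), y ≠ Fin.last N → ι y ∈ side c r δ)
    (νf : Fin N → Fin n) (hνinj : Function.Injective νf)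
    (hνF : ∀ j', νf j' = r ∨ νf j' ∈ INs c r δ) :
    ¬ ∃ R : Finset (Sym2 (Fin (N+1))),
      IsRainbow (fun j' => (S.E (νf j')).image (Sym2.map ρ)) R ∧ IsCycleEdgeSet R := by
  classical
  rintro ⟨R, ⟨σ', hσinj, hσmem⟩, v0, cw, hcyc, hRed⟩
  have hγW : γ ∉ side c r δ := gamma_not_side hc hr hγδ
  have hιinj : Function.Injective ι := fun a b h => by rw [← hρι a, ← hρι b, h]
  have hmaprel : ∀ {a b : Fin (N+1)}, (⊤ : SimpleGraph (Fin (N+1))).Adj a b →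
      (⊤ : SimpleGraph (Fin (n+1))).Adj (ι a) (ι b) := by
    intro a b hab
    simp only [top_adj] at hab ⊢
    exact fun h => hab (hιinj h)
  set ihom : (⊤ : SimpleGraph (Fin (N+1))) →g (⊤ : SimpleGraph (Fin (n+1))) :=
    ⟨ι, fun {a b} h => hmaprel h⟩ with hihomdef
  have hcoe : ⇑ihom = ι := rfl
  have hρcomp : ∀ e9 : Sym2 (Fin (N+1)), Sym2.map ρ (Sym2.map ι e9) = e9 := by
    intro e9
    rw [Sym2.map_map]
    have hcomp : ρ ∘ ι = id := funext hρι
    rw [hcomp, Sym2.map_id]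
    rfl
  have hlift : ∀ e9 ∈ R, (Fin.last N ∉ e9) →
      Sym2.map ι e9 ∈ S.E (νf (σ' e9)) ∧ ∀ v ∈ Sym2.map ι e9, v ∈ side c r δ := by
    intro e9 he9 hlast
    obtain ⟨f, hf, hm⟩ := Finset.mem_image.mp (hσmem e9 he9)
    obtain ⟨x, y, hfeq⟩ := sym2_decomp f
    have hx : x ∈ side c r δ := by
      by_contra hxc
      apply hlast
      rw [← hm, hfeq, Sym2.map_pair_eq, (hρlast x).mpr hxc]
      exact Sym2.mem_mk_left _ _
    have hy : y ∈ side c r δ := by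
      by_contra hyc
      apply hlast
      rw [← hm, hfeq, Sym2.map_pair_eq, (hρlast y).mpr hyc]
      exact Sym2.mem_mk_right _ _
    have hfid : Sym2.map ι e9 = f := by
      rw [← hm, hfeq, Sym2.map_pair_eq, Sym2.map_pair_eq, hιρ x hx, hιρ y hy]
    rw [hfid]
    refine ⟨hf, ?_⟩
    intro v hv
    rw [hfeq, Sym2.mem_iff] at hv
    rcases hv with rfl | rfl
    · exact hx
    · exact hy
  by_cases hlastmem : Fin.last N ∈ cw.support
  · -- the cycle passes through the contracted vertex
    set rc := cw.rotate _ hlastmem with hrc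
    have hcycr : rc.IsCycle := hcyc.rotate hlastmem
    have hredges : ∀ e9, e9 ∈ rc.edges ↔ e9 ∈ cw.edges := fun e9 =>
      ((cw.rotate_edges _ hlastmem).perm.mem_iff)
    obtain ⟨v1, h₁, tail, htail⟩ := SimpleGraph.Walk.not_nil_iff.mp hcycr.not_nil
    have hlen3 := hcycr.three_le_length
    have htailnn : ¬ tail.reverse.Nil := by
      rw [SimpleGraph.Walk.nil_iff_length_eq, SimpleGraph.Walk.length_reverse]
      intro hlen
      rw [htail, SimpleGraph.Walk.length_cons, hlen] at hlen3
      omega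
    obtain ⟨v2, h₂', mid', hmid'⟩ := SimpleGraph.Walk.not_nil_iff.mp htailnn
    have htail2 : tail = mid'.reverse.concat h₂'.symm := by
      have h5 := congrArg SimpleGraph.Walk.reverse hmid'
      rw [SimpleGraph.Walk.reverse_reverse] at h5
      rw [h5, SimpleGraph.Walk.reverse_cons, SimpleGraph.Walk.concat_eq_append]
    set mid := mid'.reverse with hmiddef
    set wr := SimpleGraph.Walk.cons h₁ (mid.concat h₂'.symm) with hwrdef
    have hwr : rc = wr := by rw [htail, htail2]
    have hcycw : wr.IsCycle := by rw [← hwr]; exact hcycr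
    have hinner : (mid.concat h₂'.symm).IsPath :=
      ((SimpleGraph.Walk.cons_isCycle_iff _ _).mp hcycw).1
    have hnodup : (mid.support ++ [Fin.last N]).Nodup := by
      have h5 := hinner.support_nodup
      rwa [SimpleGraph.Walk.support_concat] at h5
    rw [List.nodup_append] at hnodup
    have hmidpath : mid.IsPath := (SimpleGraph.Walk.isPath_def mid).mpr hnodup.1
    have hlastmid : Fin.last N ∉ mid.support := by
      intro h
      exact hnodup.2.2 _ h _ (List.mem_singleton.mpr rfl) rfl
    have hedges_wr : wr.edges = s(Fin.last N, v1) :: (mid.edges ++ [s(v2, Fin.last N)]) := by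
      rw [hwrdef, SimpleGraph.Walk.edges_cons, SimpleGraph.Walk.edges_concat,
        List.concat_eq_append]
    have hwrR : ∀ e9 ∈ wr.edges, e9 ∈ R := by
      intro e9 h
      rw [← hRed]
      rw [← hwr] at h
      exact List.mem_toFinset.mpr ((hredges e9).mp h)
    have hE1R : s(Fin.last N, v1) ∈ R := hwrR _ (by rw [hedges_wr]; exact List.mem_cons_self)
    have hE2R : s(v2, Fin.last N) ∈ R := hwrR _ (by
      rw [hedges_wr]
      exact List.mem_cons_of_mem _ (List.mem_append_right _ (List.mem_singleton.mpr rfl)))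
    have hv1l : v1 ≠ Fin.last N := Ne.symm h₁.ne
    have hv2l : v2 ≠ Fin.last N := Ne.symm h₂'.ne
    have htrail : wr.edges.Nodup := hcycw.isCircuit.isTrail.edges_nodup
    have hE1rest : s(Fin.last N, v1) ∉ mid.edges ++ [s(v2, Fin.last N)] := by
      rw [hedges_wr] at htrail
      exact (List.nodup_cons.mp htrail).1
    have hE12ne : s(Fin.last N, v1) ≠ s(v2, Fin.last N) := by
      intro h
      exact hE1rest (h ▸ List.mem_append_right _ (List.mem_singleton.mpr rfl))
    have hv12 : v1 ≠ v2 := by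
      rintro rfl
      exact hE12ne (Sym2.eq_swap)
    have hj12 : σ' s(Fin.last N, v1) ≠ σ' s(v2, Fin.last N) := by
      intro h
      exact hE12ne (hσinj (by exact_mod_cast hE1R) (by exact_mod_cast hE2R) h)
    -- preimages of the two edges at the contracted vertex
    have hpre : ∀ (vv : Fin (N+1)), vv ≠ Fin.last N → ∀ (e9 : Sym2 (Fin (N+1))),
        e9 = s(Fin.last N, vv) → e9 ∈ R →
        ∃ x, x ∉ side c r δ ∧ s(x, ι vv) ∈ S.E (νf (σ' e9)) := by
      intro vv hvl e9 he9eq he9R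
      obtain ⟨f, hf, hm⟩ := Finset.mem_image.mp (hσmem e9 he9R)
      obtain ⟨x, y, hfeq⟩ := sym2_decomp f
      rw [hfeq, Sym2.map_pair_eq, he9eq, Sym2.eq_iff] at hm
      rcases hm with ⟨h1, h2⟩ | ⟨h1, h2⟩
      · have hxW : x ∉ side c r δ := (hρlast x).mp h1
        have hyW : y ∈ side c r δ := by
          by_contra h
          exact hvl (h2.symm.trans ((hρlast y).mpr h))
        have hy : ι vv = y := by rw [← h2, hιρ y hyW]
        exact ⟨x, hxW, by rw [hy, ← hfeq]; exact hf⟩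
      · have hyW : y ∉ side c r δ := (hρlast y).mp h2
        have hxW : x ∈ side c r δ := by
          by_contra h
          exact hvl (h1.symm.trans ((hρlast x).mpr h))
        have hx : ι vv = x := by rw [← h1, hιρ x hxW]
        refine ⟨y, hyW, ?_⟩
        rw [hx, Sym2.eq_swap, ← hfeq]
        exact hf
    obtain ⟨x₁, hx₁W, hf₁⟩ := hpre v1 hv1l _ rfl hE1R
    obtain ⟨x₂, hx₂W, hf₂⟩ := hpre v2 hv2l s(v2, Fin.last N) Sym2.eq_swap hE2R
    -- the lifted middle path
    set M := mid.map ihom with hMdef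
    have hMpath : M.IsPath := SimpleGraph.Walk.map_isPath_of_injective hιinj hmidpath
    have hMsupp : ∀ t ∈ M.support, t ∈ side c r δ := by
      intro t ht
      rw [hMdef, SimpleGraph.Walk.support_map] at ht
      obtain ⟨th, hth, rfl⟩ := List.mem_map.mp ht
      exact hιmem th (fun h => hlastmid (h ▸ hth))
    have hmidR : ∀ e9 ∈ mid.edges, e9 ∈ R := by
      intro e9 h
      refine hwrR e9 ?_
      rw [hedges_wr]
      exact List.mem_cons_of_mem _ (List.mem_append_left _ h)
    have hmidnl : ∀ e9 ∈ mid.edges, Fin.last N ∉ e9 := by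
      intro e9 h hl
      obtain ⟨p, q, hpq⟩ := sym2_decomp e9
      rw [hpq, Sym2.mem_iff] at hl
      rcases hl with rfl | rfl
      · exact hlastmid (SimpleGraph.Walk.fst_mem_support_of_mem_edges mid (hpq ▸ h))
      · exact hlastmid (SimpleGraph.Walk.snd_mem_support_of_mem_edges mid (hpq ▸ h))
    have hMfact : ∀ e ∈ M.edges, ∃ e9 ∈ mid.edges, e = Sym2.map ι e9 := by
      intro e he
      rw [hMdef, SimpleGraph.Walk.edges_map] at he
      obtain ⟨e9, he9, rfl⟩ := List.mem_map.mp he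
      exact ⟨e9, he9, rfl⟩
    have hMmem : ∀ e ∈ M.edges, e ∈ S.E (νf (σ' (Sym2.map ρ e))) ∧
        (Sym2.map ρ e ∈ R ∧ Fin.last N ∉ Sym2.map ρ e) ∧ ∀ v ∈ e, v ∈ side c r δ := by
      intro e he
      obtain ⟨e9, he9, rfl⟩ := hMfact e he
      rw [hρcomp]
      obtain ⟨hm1, hm2⟩ := hlift e9 (hmidR e9 he9) (hmidnl e9 he9)
      exact ⟨hm1, ⟨hmidR e9 he9, hmidnl e9 he9⟩, hm2⟩
    have hMinj : ∀ e ∈ M.edges, ∀ e' ∈ M.edges,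
        νf (σ' (Sym2.map ρ e)) = νf (σ' (Sym2.map ρ e')) → e = e' := by
      intro e he e' he' hcolee
      obtain ⟨e9, he9, rfl⟩ := hMfact e he
      obtain ⟨e9', he9', rfl⟩ := hMfact e' he'
      rw [hρcomp, hρcomp] at hcolee
      have h5 := hσinj (by exact_mod_cast hmidR e9 he9) (by exact_mod_cast hmidR e9' he9')
        (hνinj hcolee)
      rw [h5]
    have hMne : ∀ e ∈ M.edges, ∀ g ∈ R, Fin.last N ∈ g →
        νf (σ' (Sym2.map ρ e)) ≠ νf (σ' g) := by
      intro e he g hg hl hcolg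
      obtain ⟨e9, he9, rfl⟩ := hMfact e he
      rw [hρcomp] at hcolg
      have h5 := hσinj (by exact_mod_cast hmidR e9 he9) (by exact_mod_cast hg) (hνinj hcolg)
      exact hmidnl e9 he9 (h5 ▸ hl)
    have hιv1W : ι v1 ∈ side c r δ := hιmem v1 hv1l
    have hιv2W : ι v2 ∈ side c r δ := hιmem v2 hv2l
    have hιv12 : ι v1 ≠ ι v2 := fun h => hv12 (hιinj h)
    by_cases hx12 : x₁ = x₂
    · -- the two outside attachment points coincide
      subst hx12
      refine rainbow2 (S := S) (j₁ := νf (σ' s(Fin.last N, v1)))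
        (j₂ := νf (σ' s(v2, Fin.last N))) (fun h => hj12 (hνinj h))
        (t₀ := x₁) (u₁ := ι v1) (u₂ := ι v2) hf₁ hf₂ hιv12
        (fun h => hx₁W (h ▸ hιv1W)) (fun h => hx₁W (h ▸ hιv2W))
        M hMpath (fun h => hx₁W (hMsupp _ h))
        (fun e => νf (σ' (Sym2.map ρ e))) (fun e he => (hMmem e he).1) hMinj ?_ ?_
      · intro e he
        exact hMne e he _ hE1R (Sym2.mem_mk_left _ _)
      · intro e he
        exact hMne e he _ hE2R (Sym2.mem_mk_right _ _)
    · -- distinct attachment points: close up through the other side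
      obtain ⟨Q₀, hQ₀p, hQ₀s⟩ := exists_path_in_class
        (S₁ := (TS c).erase (c r)) (out_reach hc hr hx₂W) (out_reach hc hr hx₁W)
      have hQ₀nW : ∀ t ∈ Q₀.support, t ∉ side c r δ := by
        intro t ht
        exact gclass_not_side hc hr hγδ (hQ₀s t ht)
      set Q := Q₀.mapLe (le_top : gr ((TS c).erase (c r)) ≤ ⊤) with hQdef
      have hQp : Q.IsPath := hQ₀p.mapLe _
      have hQsupp : ∀ t ∈ Q.support, t ∉ side c r δ := by
        intro t ht
        rw [hQdef, support_mapLe] at ht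
        exact hQ₀nW t ht
      have hQedTS : ∀ e ∈ Q.edges, e ∈ (TS c).erase (c r) := by
        intro e he
        rw [hQdef, edges_mapLe] at he
        exact gr_edge_mem _ he
      have hQedNW : ∀ e ∈ Q.edges, ∀ v ∈ e, v ∉ side c r δ := by
        intro e he v hv
        obtain ⟨u', he'⟩ := sym2_mem_decomp hv
        exact hQsupp v (SimpleGraph.Walk.fst_mem_support_of_mem_edges Q (by rw [← he']; exact he))
      have hadj₂ : (⊤ : SimpleGraph (Fin (n+1))).Adj (ι v2) x₂ := by
        simp only [top_adj]
        intro h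
        exact hx₂W (h ▸ hιv2W)
      set P : (⊤ : SimpleGraph (Fin (n+1))).Walk (ι v1) x₁ :=
        M.append (SimpleGraph.Walk.cons hadj₂ Q) with hPdef
      have hPp : P.IsPath := by
        rw [hPdef, SimpleGraph.Walk.isPath_def, SimpleGraph.Walk.support_append]
        have h5 : (SimpleGraph.Walk.cons hadj₂ Q).support.tail = Q.support := by
          simp [SimpleGraph.Walk.support_cons]
        rw [h5]
        refine List.Nodup.append ((SimpleGraph.Walk.isPath_def M).mp hMpath)
          ((SimpleGraph.Walk.isPath_def Q).mp hQp) ?_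
        intro t ht ht'
        exact hQsupp t ht' (hMsupp t ht)
      have hPedges : ∀ e ∈ P.edges, e ∈ M.edges ∨ e = s(ι v2, x₂) ∨ e ∈ Q.edges := by
        intro e he
        rw [hPdef, SimpleGraph.Walk.edges_append, SimpleGraph.Walk.edges_cons] at he
        rcases List.mem_append.mp he with h | h
        · exact Or.inl h
        · rcases List.mem_cons.mp h with h | h
          · exact Or.inr (Or.inl h)
          · exact Or.inr (Or.inr h)
      have hf₂' : s(ι v2, x₂) ∈ S.E (νf (σ' s(v2, Fin.last N))) := by
        have h6 := hf₂
        rwa [Sym2.eq_swap (a := x₂) (b := ι v2)] at h6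
      have hMvW : ∀ e ∈ M.edges, ∀ v ∈ e, v ∈ side c r δ := fun e he => (hMmem e he).2.2
      have hMneF2 : ∀ e ∈ M.edges, e ≠ s(ι v2, x₂) := by
        intro e he h
        exact hx₂W (hMvW e he x₂ (by rw [h]; exact Sym2.mem_mk_right _ _))
      have hQneF2 : ∀ e ∈ Q.edges, e ≠ s(ι v2, x₂) := by
        intro e he h
        exact hQedNW e he (ι v2) (by rw [h]; exact Sym2.mem_mk_left _ _) hιv2W
      set colP : Sym2 (Fin (n+1)) → Fin n := fun e =>
        if e = s(ι v2, x₂) then νf (σ' s(v2, Fin.last N))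
        else if h : ∀ v ∈ e, v ∈ side c r δ then νf (σ' (Sym2.map ρ e)) else colOf c r e
        with hcolPdef
      have hcolM : ∀ e ∈ M.edges, colP e = νf (σ' (Sym2.map ρ e)) := by
        intro e he
        rw [hcolPdef]
        show (if e = s(ι v2, x₂) then _ else if h : ∀ v ∈ e, v ∈ side c r δ then _ else _) = _
        rw [if_neg (hMneF2 e he), dif_pos (hMvW e he)]
      have hcolQ : ∀ e ∈ Q.edges, colP e = colOf c r e := by
        intro e he
        rw [hcolPdef]
        show (if e = s(ι v2, x₂) then _ else if h : ∀ v ∈ e, v ∈ side c r δ then _ else _) = _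
        rw [if_neg (hQneF2 e he)]
        have h5 : ¬ ∀ v ∈ e, v ∈ side c r δ := by
          intro h5
          obtain ⟨p, q, hpq⟩ := sym2_decomp e
          exact hQedNW e he p (by rw [hpq]; exact Sym2.mem_mk_left _ _)
            (h5 p (by rw [hpq]; exact Sym2.mem_mk_left _ _))
        rw [dif_neg h5]
      have hcolF2 : colP s(ι v2, x₂) = νf (σ' s(v2, Fin.last N)) := by
        rw [hcolPdef]
        show (if s(ι v2, x₂) = s(ι v2, x₂) then _ else
          if h : ∀ v ∈ s(ι v2, x₂), v ∈ side c r δ then _ else _) = _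
        rw [if_pos rfl]
      have hQcol : ∀ e ∈ Q.edges, ∀ j', colOf c r e ≠ νf j' := by
        intro e he j'
        exact col_not_F hc hr hγδ hνF (hQedTS e he) (hQedNW e he) j'
      have hQcolinj : ∀ e ∈ Q.edges, ∀ e' ∈ Q.edges, colOf c r e = colOf c r e' → e = e' := by
        intro e he e' he' h5
        obtain ⟨j₃, hj₃⟩ := mem_TS.mp (Finset.mem_erase.mp (hQedTS e he)).2
        obtain ⟨j₄, hj₄⟩ := mem_TS.mp (Finset.mem_erase.mp (hQedTS e' he')).2
        rw [← hj₃, ← hj₄, colOf_tree hc, colOf_tree hc] at h5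
        rw [← hj₃, ← hj₄, h5]
      refine rainbow1 (S := S) (j₁ := νf (σ' s(Fin.last N, v1))) (t₀ := ι v1) (u₁ := x₁)
        hf₁ (fun h => hx₁W (h ▸ hιv1W)) P hPp ?_ colP ?_ ?_ ?_
      · -- the marked edge is not on the path
        intro hmem
        rcases hPedges _ hmem with h | h | h
        · exact hx₁W (hMvW _ h x₁ (Sym2.mem_mk_left _ _))
        · rw [Sym2.eq_iff] at h
          rcases h with ⟨h5, h6⟩ | ⟨h5, h6⟩
          · exact hx₁W (h5 ▸ hιv2W)
          · exact hx12 h5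
        · exact hQedNW _ h (ι v1) (Sym2.mem_mk_right _ _) hιv1W
      · -- membership
        intro e he
        rcases hPedges e he with h | h | h
        · rw [hcolM e h]
          exact (hMmem e h).1
        · rw [h, hcolF2]
          exact hf₂'
        · rw [hcolQ e h]
          obtain ⟨j₃, hj₃⟩ := mem_TS.mp (Finset.mem_erase.mp (hQedTS e h)).2
          rw [← hj₃, colOf_tree hc]
          exact hc j₃
      · -- injectivity of the colouring on the path
        intro e he e' he' hee
        rcases hPedges e he with h | h | h <;> rcases hPedges e' he' with h' | h' | h'
        · rw [hcolM e h, hcolM e' h'] at hee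
          exact hMinj e h e' h' hee
        · rw [hcolM e h, h', hcolF2] at hee
          exact absurd hee (hMne e h _ hE2R (Sym2.mem_mk_right _ _))
        · rw [hcolM e h, hcolQ e' h'] at hee
          exact absurd hee.symm (hQcol e' h' _)
        · rw [h, hcolF2, hcolM e' h'] at hee
          exact absurd hee.symm (hMne e' h' _ hE2R (Sym2.mem_mk_right _ _))
        · rw [h, h']
        · rw [h, hcolF2, hcolQ e' h'] at hee
          exact absurd hee.symm (hQcol e' h' _)
        · rw [hcolQ e h, hcolM e' h'] at hee
          exact absurd hee (hQcol e h _)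
        · rw [hcolQ e h, h', hcolF2] at hee
          exact absurd hee (hQcol e h _)
        · rw [hcolQ e h, hcolQ e' h'] at hee
          exact hQcolinj e h e' h' hee
      · -- no colour on the path equals the marked colour
        intro e he
        rcases hPedges e he with h | h | h
        · rw [hcolM e h]
          exact hMne e h _ hE1R (Sym2.mem_mk_left _ _)
        · rw [h, hcolF2]
          exact fun h5 => hj12 (hνinj h5).symm
        · rw [hcolQ e h]
          exact hQcol e h _
  · -- the cycle avoids the contracted vertex: lift it directly
    have hedgesR : ∀ e9 ∈ cw.edges, e9 ∈ R := by
      intro e9 h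
      rw [← hRed]
      exact List.mem_toFinset.mpr h
    have hnl : ∀ e9 ∈ cw.edges, Fin.last N ∉ e9 := by
      intro e9 h hl
      obtain ⟨p, q, hpq⟩ := sym2_decomp e9
      rw [hpq, Sym2.mem_iff] at hl
      rcases hl with rfl | rfl
      · exact hlastmem (SimpleGraph.Walk.fst_mem_support_of_mem_edges cw (hpq ▸ h))
      · exact hlastmem (SimpleGraph.Walk.snd_mem_support_of_mem_edges cw (hpq ▸ h))
    have hcyc2 : (cw.map ihom).IsCycle :=
      (SimpleGraph.Walk.map_isCycle_iff_of_injective hιinj).mpr hcyc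
    refine no_rainbow_cycle_aux S.hno (cw.map ihom) hcyc2
      (fun e => νf (σ' (Sym2.map ρ e))) ?_ ?_
    · intro e he
      rw [SimpleGraph.Walk.edges_map] at he
      obtain ⟨e9, he9, rfl⟩ := List.mem_map.mp he
      show Sym2.map ι e9 ∈ S.E (νf (σ' (Sym2.map ρ (Sym2.map ι e9))))
      rw [hρcomp]
      exact (hlift e9 (hedgesR _ he9) (hnl _ he9)).1
    · intro e he e' he' hee
      rw [SimpleGraph.Walk.edges_map] at he he'
      obtain ⟨e9, he9, rfl⟩ := List.mem_map.mp he
      obtain ⟨e9', he9', rfl⟩ := List.mem_map.mp he'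
      replace hee : νf (σ' (Sym2.map ρ (Sym2.map ι e9))) =
          νf (σ' (Sym2.map ρ (Sym2.map ι e9'))) := hee
      rw [hρcomp, hρcomp] at hee
      have h5 := hσinj (by exact_mod_cast hedgesR e9 he9) (by exact_mod_cast hedgesR e9' he9')
        (hνinj hee)
      rw [h5]


/-- The main contraction lemma. -/
lemma contract (hc : S.IsTrans c) (hn : 1 ≤ n)
    (IH : ∀ n₂, n₂ < n → 1 ≤ n₂ → ∀ S₂ : Setup n₂, Concl n₂ S₂.E)
    (hr : c r = s(γ, δ)) (hγδ : γ ≠ δ)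
    (hWlt : (side c r δ).card < n)
    (hfree : ∀ j, j ≠ r → (∃ f ∈ S.E j, ∃ v ∈ f, v ∈ side c r δ) →
      ∀ v ∈ c j, v ∈ side c r δ) :
    Concl n S.E := by
  classical
  have hδW : δ ∈ side c r δ := self_mem_side
  have hγW : γ ∉ side c r δ := gamma_not_side hc hr hγδ
  have hcnt : (INs c r δ).card + 1 = (side c r δ).card := contract_count hc hr hγδ
  set N := (INs c r δ).card + 1 with hN
  have hWcard : (side c r δ).card = N := hcnt.symm
  have hNpos : 1 ≤ N := by omega
  have hNlt : N < n := by
    have := hWlt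
    omega
  have hrIN : r ∉ INs c r δ := by
    rw [mem_INs]
    intro h
    exact hγW (h γ (by rw [hr]; exact Sym2.mem_mk_left γ δ))
  have hFcard : (insert r (INs c r δ)).card = N := by
    rw [Finset.card_insert_of_notMem hrIN]
  set eW := (side c r δ).equivFin with heW
  set ρ : Fin (n+1) → Fin (N+1) := fun x =>
    if hx : x ∈ side c r δ then Fin.castSucc (Fin.cast hWcard (eW ⟨x, hx⟩)) else Fin.last N
    with hρdef
  set ι : Fin (N+1) → Fin (n+1) := fun y =>
    if hy : y = Fin.last N then γ else (eW.symm (Fin.cast hWcard.symm (y.castPred hy))).1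
    with hιdef
  have hρin : ∀ x (hx : x ∈ side c r δ),
      ρ x = Fin.castSucc (Fin.cast hWcard (eW ⟨x, hx⟩)) := fun x hx => dif_pos hx
  have hρout : ∀ x, x ∉ side c r δ → ρ x = Fin.last N := fun x hx => dif_neg hx
  have hρlast : ∀ x, ρ x = Fin.last N ↔ x ∉ side c r δ := by
    intro x
    constructor
    · intro h hx
      rw [hρin x hx] at h
      exact (Fin.castSucc_lt_last _).ne h
    · exact hρout x
  have hιlast : ι (Fin.last N) = γ := dif_pos rfl
  have hιmem : ∀ y : Fin (N+1), y ≠ Fin.last N → ι y ∈ side c r δ := by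
    intro y hy
    show (if hy' : y = Fin.last N then γ else (eW.symm (Fin.cast hWcard.symm (y.castPred hy'))).1)
      ∈ side c r δ
    rw [dif_neg hy]
    exact (eW.symm _).2
  have hcastcast : ∀ k : Fin ((side c r δ).card),
      Fin.cast hWcard.symm (Fin.cast hWcard k) = k := by
    intro k
    ext
    simp
  have hιρ : ∀ x ∈ side c r δ, ι (ρ x) = x := by
    intro x hx
    rw [hρin x hx]
    have hne2 : Fin.castSucc (Fin.cast hWcard (eW ⟨x, hx⟩)) ≠ Fin.last N :=
      (Fin.castSucc_lt_last _).ne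
    show (if hy' : Fin.castSucc (Fin.cast hWcard (eW ⟨x, hx⟩)) = Fin.last N then γ
      else (eW.symm (Fin.cast hWcard.symm
        ((Fin.castSucc (Fin.cast hWcard (eW ⟨x, hx⟩))).castPred hy'))).1) = x
    rw [dif_neg hne2]
    rw [Fin.castPred_castSucc, hcastcast, Equiv.symm_apply_apply]
  have hρι : ∀ y, ρ (ι y) = y := by
    intro y
    by_cases hy : y = Fin.last N
    · subst hy
      rw [hιlast]
      exact hρout γ hγW
    · have hmem := hιmem y hy
      rw [hρin _ hmem]
      have hval : (⟨ι y, hmem⟩ : {x // x ∈ side c r δ}) =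
          eW.symm (Fin.cast hWcard.symm (y.castPred hy)) := by
        apply Subtype.ext
        show ι y = _
        rw [hιdef]
        exact dif_neg hy
      rw [hval, Equiv.apply_symm_apply]
      ext
      simp [Fin.coe_castPred]
  have hιinj : Function.Injective ι := fun a b h => by rw [← hρι a, ← hρι b, h]
  have hρinjW : ∀ {x y : Fin (n+1)}, x ∈ side c r δ → ρ x = ρ y → x = y := by
    intro x y hx hxy
    have hxl : ρ x ≠ Fin.last N := fun h => (hρlast x).mp h hx
    have hyW : y ∈ side c r δ := by
      by_contra hy
      exact hxl (hxy ▸ (hρlast y).mpr hy)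
    rw [← hιρ x hx, ← hιρ y hyW, hxy]
  set eF := (insert r (INs c r δ)).equivFin with heF
  set νf : Fin N → Fin n := fun j' => (eF.symm (Fin.cast hFcard.symm j')).1 with hνdef
  have hνmemF : ∀ j', νf j' ∈ insert r (INs c r δ) := fun j' => (eF.symm _).2
  have hνF : ∀ j', νf j' = r ∨ νf j' ∈ INs c r δ := fun j' =>
    Finset.mem_insert.mp (hνmemF j')
  have hνinj : Function.Injective νf := by
    intro a b h
    have h2 : eF.symm (Fin.cast hFcard.symm a) = eF.symm (Fin.cast hFcard.symm b) :=
      Subtype.ext h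
    have h3 := eF.symm.injective h2
    have h4 : (Fin.cast hFcard.symm a : Fin _).val = (Fin.cast hFcard.symm b : Fin _).val := by
      rw [h3]
    ext
    simpa using h4
  have hνsurj : ∀ j ∈ insert r (INs c r δ), ∃ j', νf j' = j := by
    intro j hj
    refine ⟨Fin.cast hFcard (eF ⟨j, hj⟩), ?_⟩
    have h5 : Fin.cast hFcard.symm (Fin.cast hFcard (eF ⟨j, hj⟩)) = eF ⟨j, hj⟩ := by
      ext
      simp
    show (eF.symm (Fin.cast hFcard.symm (Fin.cast hFcard (eF ⟨j, hj⟩)))).1 = j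
    rw [h5, Equiv.symm_apply_apply]
  set E₂ : Fin N → Finset (Sym2 (Fin (N+1))) :=
    fun j' => (S.E (νf j')).image (Sym2.map ρ) with hE₂
  have hvalid₂ : ∀ j', ∀ e9 ∈ E₂ j', ¬ e9.IsDiag := by
    intro j' e9 he9
    obtain ⟨f, hf, rfl⟩ := Finset.mem_image.mp he9
    obtain ⟨p, q, hfeq, hpW, hpq⟩ := touch_rep hc hr hγδ (hνF j') hf
    rw [hfeq, Sym2.map_pair_eq, Sym2.mk_isDiag_iff]
    intro h
    exact hpq (hρinjW hpW h)
  have hne₂ : ∀ j', (E₂ j').Nonempty := fun j' => (S.hne (νf j')).image _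
  have hdisj₂ : ∀ j'₁ j'₂, j'₁ ≠ j'₂ → Disjoint (E₂ j'₁) (E₂ j'₂) := by
    intro j'₁ j'₂ hj'
    exact contract_disj ρ ι hc hr hγδ hιρ hρlast νf hνinj hνF hj'
  have hno₂ : ¬ ∃ R : Finset (Sym2 (Fin (N+1))), IsRainbow E₂ R ∧ IsCycleEdgeSet R :=
    contract_hno (ρ := ρ) (ι := ι) hc hr hγδ hιρ hρι hρlast hιmem νf hνinj hνF
  set S₂ : Setup N := ⟨E₂, hvalid₂, hne₂, hdisj₂, hno₂⟩ with hS₂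
  have hc₂ : S₂.IsTrans (fun j' => Sym2.map ρ (c (νf j'))) := fun j' =>
    Finset.mem_image_of_mem _ (hc (νf j'))
  have hEV₂ : edgeVerts {e | ∃ i, e ∈ S₂.E i} = Set.univ := EVuniv hc₂ hNpos
  obtain ⟨V₁', V₂', hcov', hdj', huniq'⟩ := IH N hNlt hNpos S₂
  obtain ⟨i', hex', huq'⟩ := huniq'
  obtain ⟨e2, he2, u2, hu2, w2, hw2, he2eq⟩ := hex'
  refine ⟨ρ ⁻¹' V₁', ρ ⁻¹' V₂', ?_, ?_, ?_⟩
  · rw [← Set.preimage_union, hcov', hEV₂, Set.preimage_univ, EVuniv hc hn]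
  · exact Disjoint.preimage ρ hdj'
  · obtain ⟨f, hf, hm⟩ := Finset.mem_image.mp he2
    obtain ⟨x, y, hfeq⟩ := sym2_decomp f
    have hmm : s(ρ x, ρ y) = s(u2, w2) := by
      rw [← Sym2.map_pair_eq ρ x y, ← hfeq, hm, he2eq]
    refine ⟨νf i', ?_, ?_⟩
    · rw [Sym2.eq_iff] at hmm
      rcases hmm with ⟨h1, h2⟩ | ⟨h1, h2⟩
      · exact ⟨f, hf, x, (by rw [Set.mem_preimage, h1]; exact hu2), y,
          (by rw [Set.mem_preimage, h2]; exact hw2), hfeq⟩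
      · exact ⟨f, hf, y, (by rw [Set.mem_preimage, h2]; exact hu2), x,
          (by rw [Set.mem_preimage, h1]; exact hw2), by rw [hfeq, Sym2.eq_swap]⟩
    · rintro i ⟨g, hgE, u, hu, w, hw, hgeq⟩
      rw [Set.mem_preimage] at hu hw
      have hρuw : ρ u ≠ ρ w := by
        intro h
        rw [h] at hu
        exact Set.disjoint_left.mp hdj' hu hw
      have htch : u ∈ side c r δ ∨ w ∈ side c r δ := by
        by_contra hcon
        push_neg at hcon
        rw [hρout u hcon.1, hρout w hcon.2] at hρuw
        exact hρuw rfl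
      have hiF : i ∈ insert r (INs c r δ) := by
        by_cases hir : i = r
        · subst hir
          exact Finset.mem_insert_self i _
        · refine Finset.mem_insert_of_mem (mem_INs.mpr ?_)
          refine hfree i hir ⟨g, hgE, ?_⟩
          rcases htch with h | h
          · exact ⟨u, by rw [hgeq]; exact Sym2.mem_mk_left u w, h⟩
          · exact ⟨w, by rw [hgeq]; exact Sym2.mem_mk_right u w, h⟩
      obtain ⟨i'', hi''⟩ := hνsurj i hiF
      have himg : Sym2.map ρ g ∈ S₂.E i'' := by
        show Sym2.map ρ g ∈ (S.E (νf i'')).image (Sym2.map ρ)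
        exact Finset.mem_image_of_mem _ (by rw [hi'']; exact hgE)
      have : i'' = i' := by
        refine huq' i'' ⟨Sym2.map ρ g, himg, ρ u, hu, ρ w, hw, ?_⟩
        rw [hgeq, Sym2.map_pair_eq]
      rw [← hi'', this]

end Contract


lemma filter_sym2_card {x y : Fin (n+1)} (hxy : x ≠ y) :
    (Finset.univ.filter (fun v => v ∈ s(x,y))).card = 2 := by
  have h : Finset.univ.filter (fun v => v ∈ s(x,y)) = {x, y} := by
    ext v
    simp [Sym2.mem_iff]
  rw [h, Finset.card_insert_of_notMem (by simp [hxy]), Finset.card_singleton]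

lemma exists_leaf {S : Setup n} {c} (hc : S.IsTrans c) (hn : 1 ≤ n) :
    ∃ (a : Fin (n+1)) (m : Fin n), a ∈ c m ∧ ∀ j, j ≠ m → a ∉ c j := by
  classical
  have hsum : ∑ v : Fin (n+1), (Finset.univ.filter (fun j => v ∈ c j)).card = 2 * n := by
    have h1 : ∀ v : Fin (n+1), (Finset.univ.filter (fun j => v ∈ c j)).card =
        ∑ j : Fin n, if v ∈ c j then 1 else 0 := by
      intro v
      rw [Finset.card_filter]
    have h2 : ∀ j : Fin n, (∑ v : Fin (n+1), if v ∈ c j then 1 else 0) = 2 := by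
      intro j
      obtain ⟨x, y, hxy⟩ := sym2_decomp (c j)
      have hne2 : x ≠ y := by
        intro h
        apply S.hvalid j _ (hc j)
        rw [hxy, h]
        exact Sym2.mk_isDiag_iff.mpr rfl
      rw [← Finset.card_filter]
      rw [hxy]
      exact filter_sym2_card hne2
    calc ∑ v : Fin (n+1), (Finset.univ.filter (fun j => v ∈ c j)).card
        = ∑ v : Fin (n+1), ∑ j : Fin n, if v ∈ c j then 1 else 0 := by
          exact Finset.sum_congr rfl (fun v _ => h1 v)
      _ = ∑ j : Fin n, ∑ v : Fin (n+1), if v ∈ c j then 1 else 0 := Finset.sum_comm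
      _ = ∑ _j : Fin n, 2 := Finset.sum_congr rfl (fun j _ => h2 j)
      _ = 2 * n := by simp [mul_comm]
  have hlow : ∃ a : Fin (n+1), (Finset.univ.filter (fun j => a ∈ c j)).card ≤ 1 := by
    by_contra hcon
    push_neg at hcon
    have : 2 * (n + 1) ≤ ∑ v : Fin (n+1), (Finset.univ.filter (fun j => v ∈ c j)).card := by
      calc 2 * (n+1) = ∑ _v : Fin (n+1), 2 := by simp [mul_comm]
        _ ≤ _ := Finset.sum_le_sum (fun v _ => hcon v)
    omega
  obtain ⟨a, ha⟩ := hlow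
  obtain ⟨m, hm⟩ := covered hc hn a
  refine ⟨a, m, hm, ?_⟩
  intro j hj hmem
  apply hj
  have h1 : j ∈ Finset.univ.filter (fun j => a ∈ c j) := Finset.mem_filter.mpr ⟨Finset.mem_univ _, hmem⟩
  have h2 : m ∈ Finset.univ.filter (fun j => a ∈ c j) := Finset.mem_filter.mpr ⟨Finset.mem_univ _, hm⟩
  exact Finset.card_le_one.mp ha j h1 m h2


/-- The main induction. -/
theorem mainAux : ∀ n, 1 ≤ n → ∀ S : Setup n, Concl n S.E := by
  intro n
  induction n using Nat.strong_induction_on with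
  | _ n IH =>
  intro hn S
  classical
  by_cases hn1 : n = 1
  · subst hn1
    obtain ⟨f, hf⟩ := S.hne 0
    obtain ⟨x, y, hfeq⟩ := sym2_decomp f
    have hxy : x ≠ y := by
      intro h
      apply S.hvalid 0 _ hf
      rw [hfeq, h]
      exact Sym2.mk_isDiag_iff.mpr rfl
    have hc : S.IsTrans (fun _ => f) := by
      intro j
      have hj : j = 0 := Fin.ext (by omega)
      rw [hj]
      exact hf
    have hz01 : ∀ i : Fin 1, i = 0 := fun i => Fin.ext (by omega)
    refine ⟨{x}, {y}, ?_, ?_, ⟨0, ⟨f, hf, x, Set.mem_singleton x, y, Set.mem_singleton y, hfeq⟩,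
      fun i _ => hz01 i⟩⟩
    · rw [EVuniv hc le_rfl]
      apply Set.eq_univ_of_forall
      intro z
      have hz2 : z = x ∨ z = y := by
        have h4 : x.val ≠ y.val := fun h => hxy (Fin.ext h)
        have h5 : z.val = x.val ∨ z.val = y.val := by
          have := x.isLt
          have := y.isLt
          have := z.isLt
          omega
        rcases h5 with h | h
        · exact Or.inl (Fin.ext h)
        · exact Or.inr (Fin.ext h)
      rcases hz2 with rfl | rfl
      · exact Set.mem_union_left _ (Set.mem_singleton z)
      · exact Set.mem_union_right _ (Set.mem_singleton z)
    · rw [Set.disjoint_singleton_left]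
      simp [hxy]
  · -- n ≥ 2
    have hn2 : 2 ≤ n := by omega
    set c : Fin n → Sym2 (Fin (n+1)) := fun j => (S.hne j).choose with hcdef
    have hc : S.IsTrans c := fun j => (S.hne j).choose_spec
    obtain ⟨a, m, ham, hleaf⟩ := exists_leaf hc hn
    by_cases hmono : ∀ i, i ≠ m → ∀ f ∈ S.E i, a ∉ f
    · -- monochromatic cut at the leaf a
      obtain ⟨u, hcm⟩ := sym2_mem_decomp ham
      have hua : u ≠ a := by
        intro h
        apply S.hvalid m _ (hc m)
        rw [hcm, h]
        exact Sym2.mk_isDiag_iff.mpr rfl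
      refine ⟨{a}, {a}ᶜ, ?_, disjoint_compl_right,
        ⟨m, ⟨c m, hc m, a, Set.mem_singleton a, u, (by simp [hua]), hcm⟩, ?_⟩⟩
      · rw [EVuniv hc hn]
        exact Set.union_compl_self _
      · rintro i ⟨g, hgE, u₁, hu₁, w₁, hw₁, hgeq⟩
        rw [Set.mem_singleton_iff] at hu₁
        subst hu₁
        by_contra him
        exact hmono i him g hgE (by rw [hgeq]; exact Sym2.mem_mk_left _ _)
    · push_neg at hmono
      obtain ⟨i₀, hi₀m, f₀, hf₀, haf₀⟩ := hmono
      obtain ⟨w₀, hf₀eq⟩ := sym2_mem_decomp haf₀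
      have hw₀a : w₀ ≠ a := by
        intro h
        apply S.hvalid i₀ _ hf₀
        rw [hf₀eq, h]
        exact Sym2.mk_isDiag_iff.mpr rfl
      set K : Set ℕ := {k | ∃ c₁, S.IsTrans c₁ ∧ (∀ j, j ≠ m → a ∉ c₁ j) ∧
        ∃ i₁ w₁, i₁ ≠ m ∧ s(a,w₁) ∈ S.E i₁ ∧ w₁ ≠ a ∧ k = (side c₁ i₁ w₁).card} with hK
      have hKne : (side c i₀ w₀).card ∈ K :=
        ⟨c, hc, hleaf, i₀, w₀, hi₀m, (by rw [← hf₀eq]; exact hf₀), hw₀a, rfl⟩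
      have hKbdd : BddAbove K := by
        refine ⟨n + 1, ?_⟩
        rintro k ⟨c₁, -, -, i₁, w₁, -, -, -, rfl⟩
        have := Finset.card_le_card (Finset.subset_univ (side c₁ i₁ w₁))
        simpa using this
      have hkmem := Nat.sSup_mem ⟨_, hKne⟩ hKbdd
      obtain ⟨c', hc', hinv, i, w, him, hiw, hwa, hkeq⟩ := hkmem
      have haW : a ∉ side c' i w := by
        intro h
        exact F2 hc' hiw rfl (Ne.symm hwa) (mem_side.mp h).symm
      have hedge_endpoints : ∀ (P₀ : (gr ((TS c').erase (c' i))).Walk w w)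
        (_hh : True), True := fun _ _ => trivial
      have hobs : ∀ j, j ≠ i → (∃ f ∈ S.E j, ∃ v ∈ f, v ∈ side c' i w) →
          ∀ v ∈ c' j, v ∈ side c' i w := by
        intro j hji hex
        by_contra hcon
        push_neg at hcon
        obtain ⟨t, htj, htW⟩ := hcon
        obtain ⟨f, hfE, v₀, hv₀f, hv₀W⟩ := hex
        obtain ⟨q, hfq⟩ := sym2_mem_decomp hv₀f
        have hv₀q : v₀ ≠ q := by
          intro h
          apply S.hvalid j _ hfE
          rw [hfq, h]
          exact Sym2.mk_isDiag_iff.mpr rfl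
        by_cases hqW : q ∈ side c' i w
        · -- both endpoints inside the side: contradiction with F2
          refine F2 hc' hfE hfq hv₀q ?_
          refine reach_trans_sub (mem_side.mp hv₀W) (mem_side.mp hqW) ?_
          intro e he hall
          refine Finset.mem_erase.mpr ⟨?_, (Finset.mem_erase.mp he).2⟩
          intro hecj
          apply htW
          rw [mem_side]
          exact hall t (by rw [hecj]; exact htj)
        · by_cases hqa : q = a
          · -- two offender edges at the leaf: rainbow cycle
            rw [hqa] at hfq
            have hwv₀ : w ≠ v₀ := by
              intro h
              have hfeq2 : f = s(a, w) := by
                rw [hfq, ← h, Sym2.eq_swap]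
              have hfi : f ∈ S.E i := by rw [hfeq2]; exact hiw
              exact hji (S.edge_eq hfE hfi)
            obtain ⟨P₀, hP₀p, hP₀s⟩ := exists_path_in_class
              (S₁ := (TS c').erase (c' i)) (Reachable.refl w) (mem_side.mp hv₀W)
            have hP₀W : ∀ t' ∈ P₀.support, t' ∈ side c' i w := by
              intro t' ht'
              exact mem_side.mpr (hP₀s t' ht')
            have hedgeTS : ∀ e ∈ P₀.edges, e ∈ (TS c').erase (c' i) :=
              fun e he => gr_edge_mem _ he
            have hedgeW : ∀ e ∈ P₀.edges, ∀ v ∈ e, v ∈ side c' i w := by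
              intro e he v hv
              obtain ⟨u', he'⟩ := sym2_mem_decomp hv
              exact hP₀W v (SimpleGraph.Walk.fst_mem_support_of_mem_edges P₀
                (by rw [← he']; exact he))
            refine rainbow2 (S := S) (j₁ := i) (j₂ := j) (fun h => hji h.symm)
              (t₀ := a) (u₁ := w) (u₂ := v₀) hiw
              (by rw [Sym2.eq_swap, ← hfq]; exact hfE) hwv₀ (Ne.symm hwa)
              (fun h => haW (h ▸ hv₀W))
              (P₀.mapLe le_top) (hP₀p.mapLe _) ?_ (colOf c' i) ?_ ?_ ?_ ?_
            · rw [support_mapLe]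
              intro h
              exact haW (hP₀W a h)
            · intro e he
              rw [edges_mapLe] at he
              obtain ⟨j₃, hj₃⟩ := mem_TS.mp (Finset.mem_erase.mp (hedgeTS e he)).2
              rw [← hj₃, colOf_tree hc']
              exact hc' j₃
            · intro e he e' he' hee'
              rw [edges_mapLe] at he he'
              obtain ⟨j₃, hj₃⟩ := mem_TS.mp (Finset.mem_erase.mp (hedgeTS e he)).2
              obtain ⟨j₄, hj₄⟩ := mem_TS.mp (Finset.mem_erase.mp (hedgeTS e' he')).2
              rw [← hj₃, ← hj₄, colOf_tree hc', colOf_tree hc'] at hee'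
              rw [← hj₃, ← hj₄, hee']
            · intro e he
              rw [edges_mapLe] at he
              obtain ⟨j₃, hj₃⟩ := mem_TS.mp (Finset.mem_erase.mp (hedgeTS e he)).2
              rw [← hj₃, colOf_tree hc']
              intro hcon2
              exact (Finset.mem_erase.mp (hedgeTS e he)).1 (by rw [← hj₃, hcon2])
            · intro e he
              rw [edges_mapLe] at he
              obtain ⟨j₃, hj₃⟩ := mem_TS.mp (Finset.mem_erase.mp (hedgeTS e he)).2
              rw [← hj₃, colOf_tree hc']
              intro hcon2
              apply htW
              rw [mem_side]
              refine (mem_side.mp (hedgeW e he t ?_))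
              rw [← hj₃, hcon2]
              exact htj
          · -- swap the representative of colour j and grow the side
            set c'' := Function.update c' j f with hc''def
            have hc''t : S.IsTrans c'' := by
              intro j₂
              by_cases h : j₂ = j
              · subst h
                rw [hc''def, Function.update_self]
                exact hfE
              · rw [hc''def, Function.update_of_ne h]
                exact hc' j₂
            have hinv'' : ∀ j₂, j₂ ≠ m → a ∉ c'' j₂ := by
              intro j₂ hj₂
              by_cases h : j₂ = j
              · subst h
                rw [hc''def, Function.update_self, hfq]
                intro hmem
                rw [Sym2.mem_iff] at hmem
                rcases hmem with rfl | rfl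
                · exact haW hv₀W
                · exact hqa rfl
              · rw [hc''def, Function.update_of_ne h]
                exact hinv j₂ hj₂
            have hcc'i : c'' i = c' i := by
              rw [hc''def, Function.update_of_ne (Ne.symm hji)]
            have hWsub : ∀ x ∈ side c' i w, x ∈ side c'' i w := by
              intro x hx
              rw [mem_side] at hx ⊢
              refine reach_trans_sub (Reachable.refl w) hx ?_
              intro e he hall
              obtain ⟨j₄, hj₄⟩ := mem_TS.mp (Finset.mem_erase.mp he).2
              have hj₄j : j₄ ≠ j := by
                intro h
                apply htW
                rw [mem_side]
                exact hall t (by rw [← hj₄, h]; exact htj)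
              refine Finset.mem_erase.mpr ⟨?_, mem_TS.mpr ⟨j₄, ?_⟩⟩
              · rw [hcc'i]
                exact (Finset.mem_erase.mp he).1
              · rw [hc''def, Function.update_of_ne hj₄j]
                exact hj₄
            have hqW' : q ∈ side c'' i w := by
              have hfadj : (gr ((TS c'').erase (c'' i))).Adj v₀ q := by
                rw [gr_adj]
                refine ⟨Finset.mem_erase.mpr ⟨?_, mem_TS.mpr ⟨j, ?_⟩⟩, hv₀q⟩
                · rw [hcc'i]
                  intro h
                  have h2 : f ∈ S.E i := by
                    rw [hfq, h]
                    exact hc' i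
                  exact hji (S.edge_eq hfE h2)
                · rw [hc''def, Function.update_self]
                  exact hfq
              have hv₀' := hWsub v₀ hv₀W
              rw [mem_side] at hv₀' ⊢
              exact hv₀'.trans hfadj.reachable
            have hcard : (side c' i w).card + 1 ≤ (side c'' i w).card := by
              calc (side c' i w).card + 1 = (insert q (side c' i w)).card :=
                  (Finset.card_insert_of_notMem hqW).symm
                _ ≤ _ := Finset.card_le_card (by
                    intro x hx
                    rcases Finset.mem_insert.mp hx with rfl | hx
                    · exact hqW'
                    · exact hWsub x hx)
            have hmem' : (side c'' i w).card ∈ K :=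
              ⟨c'', hc''t, hinv'', i, w, him, hiw, hwa, rfl⟩
            have hle := le_csSup hKbdd hmem'
            omega
      -- apply the contraction lemma
      obtain ⟨α, β, hci⟩ := sym2_decomp (c' i)
      have hαβ : α ≠ β := by
        intro h
        apply S.hvalid i _ (hc' i)
        rw [hci, h]
        exact Sym2.mk_isDiag_iff.mpr rfl
      have hcover := cover2 hc' hci w
      -- orient so that δ is on the w-side
      obtain ⟨γ, δ, hciγδ, hγδ, hδreach⟩ :
          ∃ γ δ, c' i = s(γ, δ) ∧ γ ≠ δ ∧
            (gr ((TS c').erase (c' i))).Reachable w δ := by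
        rcases hcover with h | h
        · exact ⟨β, α, by rw [hci, Sym2.eq_swap], Ne.symm hαβ, h⟩
        · exact ⟨α, β, hci, hαβ, h⟩
      have hδW : δ ∈ side c' i w := mem_side.mpr hδreach
      have hsideeq : side c' i δ = side c' i w := side_eq_of_mem hδW
      have haγ : a ≠ γ := by
        intro h
        exact hinv i him (by rw [hciγδ, ← h]; exact Sym2.mem_mk_left a δ)
      have hγW : γ ∉ side c' i δ := gamma_not_side hc' hciγδ hγδ
      have hWlt : (side c' i δ).card < n := by
        have hsub : side c' i δ ⊆ Finset.univ \ {a, γ} := by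
          intro t' ht'
          rw [Finset.mem_sdiff]
          refine ⟨Finset.mem_univ t', ?_⟩
          rw [Finset.mem_insert, Finset.mem_singleton]
          rintro (rfl | rfl)
          · rw [hsideeq] at ht'
            exact haW ht'
          · exact hγW ht'
        have h1 := Finset.card_le_card hsub
        have h2 : (Finset.univ \ ({a, γ} : Finset (Fin (n+1)))).card = (n+1) - 2 := by
          rw [Finset.card_sdiff_of_subset (Finset.subset_univ _)]
          rw [Finset.card_insert_of_notMem (by simp [haγ]), Finset.card_singleton]
          simp
        omega
      refine contract hc' hn (fun n₂ h h1 S₂ => IH n₂ h h1 S₂) hciγδ hγδ hWlt ?_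
      intro j hji hex
      rw [hsideeq]
      refine hobs j hji ?_
      rwa [hsideeq] at hex

end MonoCutProof

/-- A family of `n ≥ 1` pairwise edge-disjoint nonempty subgraphs of `K_{n+1}` with no
rainbow cycle has a monochromatic cut. -/
theorem monochromatic_cut_of_no_rainbow_cycle (n : ℕ) (hn : 1 ≤ n)
    (E : Fin n → Finset (Sym2 (Fin (n + 1))))
    (hvalid : ∀ i, ∀ e ∈ E i, ¬ e.IsDiag)
    (hne : ∀ i, (E i).Nonempty)
    (hdisj : ∀ i j, i ≠ j → Disjoint (E i) (E j))
    (hno : ¬ ∃ R : Finset (Sym2 (Fin (n + 1))), IsRainbow E R ∧ IsCycleEdgeSet R) :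
    ∃ V₁ V₂ : Set (Fin (n + 1)),
      V₁ ∪ V₂ = edgeVerts {e | ∃ i, e ∈ E i} ∧ Disjoint V₁ V₂ ∧
      ∃! i : Fin n, ∃ e ∈ E i, ∃ u ∈ V₁, ∃ w ∈ V₂, e = s(u, w) := by
  show MonoCutProof.Concl n E
  exact MonoCutProof.mainAux n hn ⟨E, hvalid, hne, hdisj, hno⟩
end
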